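/- arXiv:1610.09967 — 12 statements merged into one kernel-verified Lean document; each statement's English description precedes it below -/
import Mathlib

section
/- Let 0 < λ < 1 and p > 1. Then for every sequence x : ℕ → ℂ with ‖x‖_p < ∞ one has ‖T_λ(x)‖_p ≤ λ^{(1−p)/p} ‖x‖_p, and the constant is sharp: ‖T_λ(ω(z))‖_p / ‖ω(z)‖_p → λ^{(1−p)/p} as z → 1⁻. In particular the ℓ^p → ℓ^p norm of T_λ equals λ^{(1−p)/p}. -/
/-- The ℓ^p norm of a sequence of complex numbers. -/
noncomputable def lpNorm (p : ℝ) (x : ℕ → ℂ) : ℝ :=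
  (∑' n : ℕ, ‖x n‖ ^ p) ^ (1 / p)

/-- The thinning with parameter `l` acting on sequences of complex numbers:
`[T_l(x)]_n = ∑_{k} C(k,n) l^n (1-l)^{k-n} x_k`. -/
noncomputable def thin (l : ℝ) (x : ℕ → ℂ) : ℕ → ℂ :=
  fun n => ∑' k : ℕ, (Nat.choose k n : ℂ) * (l : ℂ) ^ n * ((1 - l : ℝ) : ℂ) ^ (k - n) * x k

/-- The geometric probability distribution on ℕ with ratio `z`, as a complex sequence. -/
noncomputable def geom (z : ℝ) : ℕ → ℂ := fun n => (((1 - z) * z ^ n : ℝ) : ℂ)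

open Filter Real Set Topology

namespace ThinningAux


noncomputable def K (l : ℝ) (n k : ℕ) : ℝ := (k.choose n : ℝ) * l ^ n * (1 - l) ^ (k - n)

variable {l : ℝ}

lemma K_nonneg (hl : 0 < l) (hl1 : l < 1) (n k : ℕ) : 0 ≤ K l n k := by
  have h1 : (0:ℝ) ≤ 1 - l := by linarith
  exact mul_nonneg (mul_nonneg (by positivity) (by positivity)) (by positivity)

lemma hasSum_col (hl : 0 < l) (hl1 : l < 1) (k : ℕ) : HasSum (fun n => K l n k) 1 := by
  have h0 : ∀ n ∉ Finset.range (k + 1), K l n k = 0 := by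
    intro n hn
    simp only [Finset.mem_range, not_lt] at hn
    have : k < n := by omega
    simp [K, Nat.choose_eq_zero_of_lt this]
  have h : HasSum (fun n => K l n k) (∑ n ∈ Finset.range (k + 1), K l n k) :=
    hasSum_sum_of_ne_finset_zero h0
  have hsum : ∑ n ∈ Finset.range (k + 1), K l n k = 1 := by
    calc ∑ n ∈ Finset.range (k + 1), K l n k
        = ∑ n ∈ Finset.range (k + 1), l ^ n * (1 - l) ^ (k - n) * (k.choose n : ℝ) := by
          refine Finset.sum_congr rfl fun n _ => ?_; unfold K; ring
      _ = (l + (1 - l)) ^ k := (add_pow l (1 - l) k).symm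
      _ = 1 := by norm_num
  rwa [hsum] at h

lemma hasSum_row (hl : 0 < l) (hl1 : l < 1) (n : ℕ) : HasSum (fun k => K l n k) (1 / l) := by
  have hr : ‖(1 - l : ℝ)‖ < 1 := by rw [Real.norm_eq_abs, abs_lt]; constructor <;> linarith
  have h1 := (hasSum_choose_mul_geometric_of_norm_lt_one (𝕜 := ℝ) n hr).mul_left (l ^ n)
  have hinj : Function.Injective (fun j : ℕ => j + n) := fun a b h => by
    simpa using h
  have h0 : ∀ k ∉ Set.range (fun j : ℕ => j + n), K l n k = 0 := by
    intro k hk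
    have : k < n := by
      by_contra h
      exact hk ⟨k - n, by simp; omega⟩
    simp [K, Nat.choose_eq_zero_of_lt this]
  rw [← Function.Injective.hasSum_iff hinj h0]
  have heq : (fun k => K l n k) ∘ (fun j : ℕ => j + n)
      = fun j => l ^ n * (((j + n).choose n : ℝ) * (1 - l) ^ j) := by
    funext j
    simp only [Function.comp_apply, K, Nat.add_sub_cancel]
    ring
  rw [heq]
  have hl' : (1:ℝ) - (1 - l) = l := by ring
  have e : l ^ n * (1 / (1 - (1 - l)) ^ (n + 1)) = 1 / l := by
    rw [hl', pow_succ]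
    field_simp
  rw [e] at h1
  exact h1

lemma K_le_one (hl : 0 < l) (hl1 : l < 1) (n k : ℕ) : K l n k ≤ 1 :=
  le_hasSum (hasSum_col hl hl1 k) n (fun j _ => K_nonneg hl hl1 j k)

set_option maxHeartbeats 1000000 in
lemma norm_bound {p : ℝ} (hl : 0 < l) (hl1 : l < 1) (hp : 1 < p) (x : ℕ → ℂ)
    (hx : Summable fun n => ‖x n‖ ^ p) :
    lpNorm p (thin l x) ≤ l ^ ((1 - p) / p) * lpNorm p x := by
  set q := p.conjExponent with hq
  have hpq : p.HolderConjugate q := Real.HolderConjugate.conjExponent hp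
  have hp0 : (0:ℝ) < p := by linarith
  have hq0 : (0:ℝ) < q := hpq.symm.pos
  set C := l ^ ((1 - p) / p) with hCdef
  have hC0 : 0 < C := Real.rpow_pos_of_pos hl _
  have hC : (1 / l) ^ (1 / q) = C := by
    have h1q : 1 / q = (p - 1) / p := by
      rw [hq]; unfold Real.conjExponent; field_simp
    rw [h1q, one_div l, Real.inv_rpow hl.le, ← Real.rpow_neg hl.le, hCdef]
    congr 1; ring
  have hxnn : ∀ k, (0:ℝ) ≤ ‖x k‖ ^ p := fun k => Real.rpow_nonneg (norm_nonneg _) p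
  have hKx_sum : ∀ n, Summable fun k => K l n k * ‖x k‖ ^ p := fun n =>
    Summable.of_nonneg_of_le (fun k => mul_nonneg (K_nonneg hl hl1 n k) (hxnn k))
      (fun k => mul_le_of_le_one_left (hxnn k) (K_le_one hl hl1 n k)) hx
  have hinv : 1 / p + 1 / q = 1 := by simpa [one_div] using hpq.inv_add_inv_eq_one
  -- Hölder per row
  have holder : ∀ n, (Summable fun k => K l n k * ‖x k‖) ∧
      ∑' k, K l n k * ‖x k‖ ≤ (∑' k, K l n k * ‖x k‖ ^ p) ^ (1 / p) * C := by
    intro n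
    have hK0 : ∀ k, 0 ≤ K l n k := K_nonneg hl hl1 n
    have hf0 : ∀ k, 0 ≤ (K l n k) ^ (1 / p) * ‖x k‖ := fun k =>
      mul_nonneg (Real.rpow_nonneg (hK0 k) _) (norm_nonneg _)
    have hg0 : ∀ k, 0 ≤ (K l n k) ^ (1 / q) := fun k => Real.rpow_nonneg (hK0 k) _
    have hfp : ∀ k, ((K l n k) ^ (1 / p) * ‖x k‖) ^ p = K l n k * ‖x k‖ ^ p := by
      intro k
      rw [Real.mul_rpow (Real.rpow_nonneg (hK0 k) _) (norm_nonneg _),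
        ← Real.rpow_mul (hK0 k), one_div_mul_cancel (ne_of_gt hp0), Real.rpow_one]
    have hgq : ∀ k, ((K l n k) ^ (1 / q)) ^ q = K l n k := by
      intro k
      rw [← Real.rpow_mul (hK0 k), one_div_mul_cancel (ne_of_gt hq0), Real.rpow_one]
    have hfs : Summable fun k => ((K l n k) ^ (1 / p) * ‖x k‖) ^ p :=
      (hKx_sum n).congr fun k => (hfp k).symm
    have hgs : Summable fun k => ((K l n k) ^ (1 / q)) ^ q :=
      ((hasSum_row hl hl1 n).summable).congr fun k => (hgq k).symm
    obtain ⟨hs, hle⟩ := summable_and_inner_le_Lp_mul_Lq_tsum_of_nonneg hpq hf0 hg0 hfs hgs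
    have hmul : ∀ k, (K l n k) ^ (1 / p) * ‖x k‖ * (K l n k) ^ (1 / q) = K l n k * ‖x k‖ := by
      intro k
      have h2 : (K l n k) ^ (1 / p) * (K l n k) ^ (1 / q) = K l n k := by
        rw [← Real.rpow_add' (hK0 k) (by rw [hinv]; norm_num), hinv, Real.rpow_one]
      calc (K l n k) ^ (1 / p) * ‖x k‖ * (K l n k) ^ (1 / q)
          = (K l n k) ^ (1 / p) * (K l n k) ^ (1 / q) * ‖x k‖ := by ring
        _ = K l n k * ‖x k‖ := by rw [h2]
    constructor
    · exact hs.congr hmul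
    · have e1 : ∑' k, K l n k * ‖x k‖ = ∑' k, (K l n k) ^ (1 / p) * ‖x k‖ * (K l n k) ^ (1 / q) :=
        (tsum_congr hmul).symm
      have e2 : ∑' k, ((K l n k) ^ (1 / p) * ‖x k‖) ^ p = ∑' k, K l n k * ‖x k‖ ^ p :=
        tsum_congr hfp
      have e3 : (∑' k, ((K l n k) ^ (1 / q)) ^ q) ^ (1 / q) = C := by
        rw [tsum_congr hgq, (hasSum_row hl hl1 n).tsum_eq, hC]
      rw [e1]
      calc ∑' k, (K l n k) ^ (1 / p) * ‖x k‖ * (K l n k) ^ (1 / q)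
          ≤ (∑' k, ((K l n k) ^ (1 / p) * ‖x k‖) ^ p) ^ (1 / p)
            * (∑' k, ((K l n k) ^ (1 / q)) ^ q) ^ (1 / q) := hle
        _ = (∑' k, K l n k * ‖x k‖ ^ p) ^ (1 / p) * C := by rw [e2, e3]
  -- pointwise bound on the thinned sequence
  have hterm : ∀ n k, ‖(k.choose n : ℂ) * (l : ℂ) ^ n * ((1 - l : ℝ) : ℂ) ^ (k - n) * x k‖
      = K l n k * ‖x k‖ := by
    intro n k
    have h1 : (0:ℝ) ≤ 1 - l := by linarith
    rw [norm_mul, norm_mul, norm_mul, norm_pow, norm_pow, Complex.norm_real, Complex.norm_real]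
    simp [K, abs_of_nonneg h1, abs_of_pos hl]
  have hthin_le : ∀ n, ‖thin l x n‖ ≤ ∑' k, K l n k * ‖x k‖ := by
    intro n
    have hsn : Summable fun k =>
        ‖(k.choose n : ℂ) * (l : ℂ) ^ n * ((1 - l : ℝ) : ℂ) ^ (k - n) * x k‖ :=
      (holder n).1.congr fun k => (hterm n k).symm
    calc ‖thin l x n‖ ≤ ∑' k, ‖(k.choose n : ℂ) * (l : ℂ) ^ n * ((1 - l : ℝ) : ℂ) ^ (k - n) * x k‖ :=
          norm_tsum_le_tsum_norm hsn
      _ = ∑' k, K l n k * ‖x k‖ := tsum_congr (hterm n)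
  set S : ℕ → ℝ := fun n => ∑' k, K l n k * ‖x k‖ ^ p with hSdef
  have hS0 : ∀ n, 0 ≤ S n := fun n =>
    tsum_nonneg fun k => mul_nonneg (K_nonneg hl hl1 n k) (hxnn k)
  have hpow : ∀ n, ‖thin l x n‖ ^ p ≤ C ^ p * S n := by
    intro n
    have h1 : ‖thin l x n‖ ^ p ≤ (S n ^ (1 / p) * C) ^ p :=
      Real.rpow_le_rpow (norm_nonneg _) (le_trans (hthin_le n) (holder n).2) hp0.le
    calc ‖thin l x n‖ ^ p ≤ (S n ^ (1 / p) * C) ^ p := h1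
      _ = (S n ^ (1 / p)) ^ p * C ^ p :=
          Real.mul_rpow (Real.rpow_nonneg (hS0 n) _) hC0.le
      _ = S n * C ^ p := by
          rw [← Real.rpow_mul (hS0 n), one_div_mul_cancel (ne_of_gt hp0), Real.rpow_one]
      _ = C ^ p * S n := mul_comm _ _
  -- Fubini
  have hcol_tsum : ∀ k, ∑' n, K l n k * ‖x k‖ ^ p = ‖x k‖ ^ p := fun k => by
    rw [((hasSum_col hl hl1 k).mul_right (‖x k‖ ^ p)).tsum_eq, one_mul]
  have hnn1 : ∀ q : ℕ × ℕ, 0 ≤ K l q.2 q.1 * ‖x q.1‖ ^ p :=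
    fun q => mul_nonneg (K_nonneg hl hl1 _ _) (hxnn _)
  have hFk : Summable fun q : ℕ × ℕ => K l q.2 q.1 * ‖x q.1‖ ^ p := by
    rw [summable_prod_of_nonneg hnn1]
    exact ⟨fun k => ((hasSum_col hl hl1 k).mul_right (‖x k‖ ^ p)).summable,
      hx.congr fun k => (hcol_tsum k).symm⟩
  have hFn : Summable fun q : ℕ × ℕ => K l q.1 q.2 * ‖x q.2‖ ^ p := hFk.prod_symm
  have hnn2 : ∀ q : ℕ × ℕ, 0 ≤ K l q.1 q.2 * ‖x q.2‖ ^ p :=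
    fun q => mul_nonneg (K_nonneg hl hl1 _ _) (hxnn _)
  have hS_sum : Summable S :=
    ((summable_prod_of_nonneg hnn2).mp hFn).2
  have htsum_S : ∑' n, S n = ∑' k, ‖x k‖ ^ p := by
    have hcomm := Summable.tsum_comm' (f := fun k n => K l n k * ‖x k‖ ^ p) hFk
      (fun k => ((hasSum_col hl hl1 k).mul_right _).summable) (fun n => hKx_sum n)
    rw [hSdef]
    calc ∑' n, ∑' k, K l n k * ‖x k‖ ^ p = ∑' k, ∑' n, K l n k * ‖x k‖ ^ p := hcomm
      _ = ∑' k, ‖x k‖ ^ p := tsum_congr hcol_tsum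
  have hthin_sum : Summable fun n => ‖thin l x n‖ ^ p :=
    Summable.of_nonneg_of_le (fun n => Real.rpow_nonneg (norm_nonneg _) _) hpow
      (hS_sum.mul_left (C ^ p))
  have hfin : ∑' n, ‖thin l x n‖ ^ p ≤ C ^ p * ∑' k, ‖x k‖ ^ p := by
    calc ∑' n, ‖thin l x n‖ ^ p ≤ ∑' n, C ^ p * S n :=
          hthin_sum.tsum_le_tsum hpow (hS_sum.mul_left _)
      _ = C ^ p * ∑' n, S n := tsum_mul_left
      _ = C ^ p * ∑' k, ‖x k‖ ^ p := by rw [htsum_S]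
  unfold lpNorm
  have hmono := Real.rpow_le_rpow
    (tsum_nonneg fun n => Real.rpow_nonneg (norm_nonneg _) _) hfin (by positivity : (0:ℝ) ≤ 1 / p)
  refine le_trans hmono ?_
  rw [Real.mul_rpow (Real.rpow_nonneg hC0.le _) (tsum_nonneg fun k => hxnn k)]
  have hCp : (C ^ p) ^ (1 / p) = C := by
    rw [← Real.rpow_mul hC0.le, mul_one_div_cancel (ne_of_gt hp0), Real.rpow_one]
  rw [hCp]



lemma thin_geom {l z : ℝ} (hl : 0 < l) (hl1 : l < 1) (hz0 : 0 < z) (hz1 : z < 1) :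
    thin l (geom z) = geom (l * z / (1 - (1 - l) * z)) := by
  have hw0 : 0 < 1 - (1 - l) * z := by nlinarith
  set w := 1 - (1 - l) * z with hwdef
  funext n
  have hr : ‖(1 - l) * z‖ < 1 := by
    rw [Real.norm_eq_abs, abs_of_nonneg (by nlinarith)]; nlinarith
  -- the real sum
  have h1 := (hasSum_choose_mul_geometric_of_norm_lt_one (𝕜 := ℝ) n hr).mul_left
    ((1 - z) * l ^ n * z ^ n)
  have hinj : Function.Injective (fun j : ℕ => j + n) := fun a b h => by simpa using h
  have key : HasSum (fun k : ℕ => (k.choose n : ℝ) * l ^ n * (1 - l) ^ (k - n) * ((1 - z) * z ^ k))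
      ((1 - z) * l ^ n * z ^ n * (1 / w ^ (n + 1))) := by
    have h0 : ∀ k ∉ Set.range (fun j : ℕ => j + n),
        (k.choose n : ℝ) * l ^ n * (1 - l) ^ (k - n) * ((1 - z) * z ^ k) = 0 := by
      intro k hk
      have : k < n := by
        by_contra h
        exact hk ⟨k - n, by simp; omega⟩
      simp [Nat.choose_eq_zero_of_lt this]
    rw [← Function.Injective.hasSum_iff hinj h0]
    have heq : (fun k => (k.choose n : ℝ) * l ^ n * (1 - l) ^ (k - n) * ((1 - z) * z ^ k))
        ∘ (fun j : ℕ => j + n)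
        = fun j => (1 - z) * l ^ n * z ^ n * (((j + n).choose n : ℝ) * ((1 - l) * z) ^ j) := by
      funext j
      simp only [Function.comp_apply, Nat.add_sub_cancel, mul_pow, pow_add]
      ring
    rw [heq]
    exact h1
  -- convert the complex tsum
  have hterm : (fun k : ℕ => (k.choose n : ℂ) * (l : ℂ) ^ n * ((1 - l : ℝ) : ℂ) ^ (k - n) * geom z k)
      = fun k : ℕ => (((k.choose n : ℝ) * l ^ n * (1 - l) ^ (k - n) * ((1 - z) * z ^ k) : ℝ) : ℂ) := by
    funext k
    simp only [geom]
    push_cast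
    ring
  show (∑' k : ℕ, (k.choose n : ℂ) * (l : ℂ) ^ n * ((1 - l : ℝ) : ℂ) ^ (k - n) * geom z k) = _
  rw [hterm, ← Complex.ofReal_tsum, key.tsum_eq]
  show ((((1 - z) * l ^ n * z ^ n * (1 / w ^ (n + 1))) : ℝ) : ℂ)
      = (((1 - l * z / w) * (l * z / w) ^ n : ℝ) : ℂ)
  congr 1
  rw [div_pow]
  have hwne : w ≠ 0 := ne_of_gt hw0
  have h2 : 1 - l * z / w = (1 - z) / w := by
    field_simp
    rw [hwdef]; ring
  rw [h2, pow_succ]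
  field_simp
  ring



lemma lpNorm_geom {p z : ℝ} (hp : 1 < p) (hz0 : 0 ≤ z) (hz1 : z < 1) :
    lpNorm p (geom z) = ((1 - z) ^ p / (1 - z ^ p)) ^ (1 / p) := by
  have hp0 : (0:ℝ) < p := by linarith
  have ha : (0:ℝ) ≤ 1 - z := by linarith
  have hzp1 : z ^ p < 1 := Real.rpow_lt_one hz0 hz1 hp0
  have hzp0 : (0:ℝ) ≤ z ^ p := Real.rpow_nonneg hz0 p
  have hterm : ∀ n : ℕ, ‖geom z n‖ ^ p = (1 - z) ^ p * (z ^ p) ^ n := by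
    intro n
    have h1 : ‖geom z n‖ = (1 - z) * z ^ n := by
      simp only [geom, Complex.norm_real]
      rw [Real.norm_eq_abs, abs_of_nonneg (mul_nonneg ha (pow_nonneg hz0 n))]
    rw [h1, Real.mul_rpow ha (pow_nonneg hz0 n), ← Real.rpow_natCast z n,
      ← Real.rpow_mul hz0, mul_comm (n:ℝ) p, Real.rpow_mul hz0, Real.rpow_natCast]
  have hgeo : HasSum (fun n : ℕ => (1 - z) ^ p * (z ^ p) ^ n) ((1 - z) ^ p * (1 - z ^ p)⁻¹) :=
    (hasSum_geometric_of_lt_one hzp0 hzp1).mul_left _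
  unfold lpNorm
  rw [tsum_congr hterm, hgeo.tsum_eq, div_eq_mul_inv ((1 - z) ^ p) (1 - z ^ p)]

lemma tendsto_ratio {l p : ℝ} (hl : 0 < l) (hl1 : l < 1) (hp : 1 < p)
    (hthin : ∀ z : ℝ, 0 < z → z < 1 →
      lpNorm p (thin l (geom z)) = lpNorm p (geom (l * z / (1 - (1 - l) * z)))) :
    Tendsto (fun z => lpNorm p (thin l (geom z)) / lpNorm p (geom z))
      (nhdsWithin 1 (Set.Iio 1)) (nhds (l ^ ((1 - p) / p))) := by
  have hp0 : (0:ℝ) < p := by linarith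
  set zp : ℝ → ℝ := fun z => l * z / (1 - (1 - l) * z) with hzp
  set D : ℝ → ℝ := fun y => (1 - y ^ p) / (1 - y) with hD
  -- limit of the difference quotient
  have hDlim : Tendsto D (𝓝[<] (1:ℝ)) (𝓝 p) := by
    have hder : HasDerivAt (fun y : ℝ => y ^ p) (p * (1:ℝ) ^ (p - 1)) 1 :=
      Real.hasDerivAt_rpow_const (Or.inl one_ne_zero)
    rw [Real.one_rpow, mul_one] at hder
    have hslope := hasDerivAt_iff_tendsto_slope.mp hder
    have hmono : 𝓝[Iio (1:ℝ)] 1 ≤ 𝓝[{(1:ℝ)}ᶜ] 1 :=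
      nhdsWithin_mono 1 (fun y hy => ne_of_lt hy)
    refine (hslope.mono_left hmono).congr fun y => ?_
    rw [slope_def_field, Real.one_rpow, hD]
    show (y ^ p - 1) / (y - 1) = (1 - y ^ p) / (1 - y)
    rw [show (1:ℝ) - y ^ p = -(y ^ p - 1) from by ring,
      show (1:ℝ) - y = -(y - 1) from by ring, neg_div_neg_eq]
  -- zp tends to 1 within Iio 1
  have hIoo : Ioo (0:ℝ) 1 ∈ 𝓝[<] (1:ℝ) := by
    have h2 : Ioi (0:ℝ) ∈ 𝓝[<] (1:ℝ) :=
      nhdsWithin_le_nhds (isOpen_Ioi.mem_nhds (by norm_num))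
    have h1 : Iio (1:ℝ) ∈ 𝓝[<] (1:ℝ) := self_mem_nhdsWithin
    have : Ioi (0:ℝ) ∩ Iio 1 ∈ 𝓝[<] (1:ℝ) := Filter.inter_mem h2 h1
    rwa [Ioi_inter_Iio] at this
  have hzp_lt : ∀ z ∈ Ioo (0:ℝ) 1, zp z ∈ Ioo (0:ℝ) 1 := by
    intro z hz
    have hw0 : 0 < 1 - (1 - l) * z := by nlinarith [hz.1, hz.2]
    constructor
    · exact div_pos (mul_pos hl hz.1) hw0
    · rw [hzp]; simp only
      rw [div_lt_one hw0]; nlinarith [hz.1, hz.2]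
  have htz : Tendsto zp (𝓝[<] (1:ℝ)) (𝓝[<] (1:ℝ)) := by
    rw [tendsto_nhdsWithin_iff]
    constructor
    · have hcont : Tendsto zp (𝓝 1) (𝓝 (l * 1 / (1 - (1 - l) * 1))) := by
        apply Tendsto.div
        · exact (continuous_const.mul continuous_id).tendsto 1
        · exact (continuous_const.sub (continuous_const.mul continuous_id)).tendsto 1
        · have : 1 - (1 - l) * 1 = l := by ring
          rw [this]; exact ne_of_gt hl
      have h11 : l * 1 / (1 - (1 - l) * 1) = 1 := by
        rw [show 1 - (1 - l) * 1 = l from by ring]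
        field_simp
      rw [h11] at hcont
      exact hcont.mono_left nhdsWithin_le_nhds
    · filter_upwards [hIoo] with z hz
      exact (hzp_lt z hz).2
  have hDz' : Tendsto (fun z => D (zp z)) (𝓝[<] (1:ℝ)) (𝓝 p) := hDlim.comp htz
  -- the inverse-weight factor
  have hA : Tendsto (fun z : ℝ => (1 - (1 - l) * z)⁻¹) (𝓝[<] (1:ℝ)) (𝓝 l⁻¹) := by
    have hc : Tendsto (fun z : ℝ => 1 - (1 - l) * z) (𝓝 1) (𝓝 (1 - (1 - l) * 1)) :=
      (continuous_const.sub (continuous_const.mul continuous_id)).tendsto 1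
    have := hc.inv₀ (by rw [show 1 - (1 - l) * 1 = l from by ring]; exact ne_of_gt hl)
    rw [show 1 - (1 - l) * 1 = l from by ring] at this
    exact this.mono_left nhdsWithin_le_nhds
  -- the candidate limit function
  have hbase : Tendsto (fun z => (1 - (1 - l) * z)⁻¹ ^ (p - 1) * D z / D (zp z))
      (𝓝[<] (1:ℝ)) (𝓝 (l⁻¹ ^ (p - 1) * p / p)) :=
    ((hA.rpow_const (Or.inl (by positivity))).mul hDlim).div hDz' (ne_of_gt hp0)
  have hval : l⁻¹ ^ (p - 1) * p / p = l ^ (1 - p) := by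
    rw [mul_div_assoc, div_self (ne_of_gt hp0), mul_one,
      Real.inv_rpow hl.le, ← Real.rpow_neg hl.le]
    congr 1; ring
  rw [hval] at hbase
  have hfinal : Tendsto (fun z => ((1 - (1 - l) * z)⁻¹ ^ (p - 1) * D z / D (zp z)) ^ (1 / p))
      (𝓝[<] (1:ℝ)) (𝓝 (l ^ ((1 - p) / p))) := by
    have := hbase.rpow_const (p := 1 / p) (Or.inl (ne_of_gt (Real.rpow_pos_of_pos hl _)))
    rwa [← Real.rpow_mul hl.le, mul_one_div, ] at this
  -- eventual equality
  refine hfinal.congr' ?_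
  filter_upwards [hIoo] with z hz
  obtain ⟨hz0, hz1⟩ := hz
  have hw0 : 0 < 1 - (1 - l) * z := by nlinarith
  obtain ⟨hy0, hy1⟩ := hzp_lt z ⟨hz0, hz1⟩
  have ha : (0:ℝ) < 1 - z := by linarith
  have ha' : (0:ℝ) < 1 - zp z := by linarith
  have hu : (0:ℝ) < 1 - z ^ p := by
    have := Real.rpow_lt_one hz0.le hz1 hp0; linarith
  have hv : (0:ℝ) < 1 - zp z ^ p := by
    have := Real.rpow_lt_one hy0.le hy1 hp0; linarith
  rw [hthin z hz0 hz1, lpNorm_geom hp hy0.le hy1, lpNorm_geom hp hz0.le hz1]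
  rw [← Real.div_rpow (div_nonneg (Real.rpow_nonneg ha'.le _) hv.le)
    (div_nonneg (Real.rpow_nonneg ha.le _) hu.le)]
  congr 1
  have hwinv : (1 - (1 - l) * z)⁻¹ = (1 - zp z) / (1 - z) := by
    have h1 : 1 - zp z = (1 - z) / (1 - (1 - l) * z) := by
      rw [hzp]; simp only
      rw [eq_div_iff (ne_of_gt hw0), sub_mul, div_mul_cancel₀ _ (ne_of_gt hw0)]
      ring
    rw [h1, div_div]
    rw [inv_eq_one_div]
    rw [div_eq_div_iff (ne_of_gt hw0) (ne_of_gt (mul_pos hw0 ha))]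
    ring
  rw [hwinv, Real.div_rpow ha'.le ha.le, Real.rpow_sub ha', Real.rpow_sub ha, Real.rpow_one, Real.rpow_one, hD]
  simp only
  have hap : (0:ℝ) < (1 - z) ^ p := Real.rpow_pos_of_pos ha _
  have hap' : (0:ℝ) < (1 - zp z) ^ p := Real.rpow_pos_of_pos ha' _
  field_simp

end ThinningAux

theorem thinning_pp_norm (l p : ℝ) (hl : 0 < l) (hl1 : l < 1) (hp : 1 < p) :
    (∀ x : ℕ → ℂ, Summable (fun n => ‖x n‖ ^ p) →
        lpNorm p (thin l x) ≤ l ^ ((1 - p) / p) * lpNorm p x) ∧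
    Filter.Tendsto (fun z => lpNorm p (thin l (geom z)) / lpNorm p (geom z))
      (nhdsWithin 1 (Set.Iio 1)) (nhds (l ^ ((1 - p) / p))) := by
  constructor
  · exact fun x hx => ThinningAux.norm_bound hl hl1 hp x hx
  · exact ThinningAux.tendsto_ratio hl hl1 hp fun z hz0 hz1 => by
      rw [ThinningAux.thin_geom hl hl1 hz0 hz1]
end

section
/- Let 0 < λ < 1 and let 1 < q < p be real numbers. Then ‖T_λ(ω(z))‖_q / ‖ω(z)‖_p → +∞ as z → 1⁻. In particular the ℓ^p → ℓ^q norm of the thinning T_λ is infinite and is asymptotically achieved by geometric distributions with ratio tending to 1. -/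
open Filter Real Set

lemma tsum_geom_rpow {z r : ℝ} (h0 : 0 ≤ z) (h1 : z < 1) (hr : 0 < r) :
    ∑' n : ℕ, ‖geom z n‖ ^ r = (1 - z) ^ r / (1 - z ^ r) := by
  have hz1 : (0:ℝ) ≤ 1 - z := by linarith
  have key : ∀ n : ℕ, ‖geom z n‖ ^ r = (1 - z) ^ r * (z ^ r) ^ n := by
    intro n
    simp only [geom]
    rw [Complex.norm_real, Real.norm_eq_abs, abs_of_nonneg (by positivity),
      Real.mul_rpow hz1 (by positivity), ← Real.rpow_natCast z n, ← Real.rpow_mul h0,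
      mul_comm (n:ℝ) r, Real.rpow_mul h0, Real.rpow_natCast]
  simp only [key]
  rw [tsum_mul_left, tsum_geometric_of_lt_one (by positivity)
    (Real.rpow_lt_one h0 h1 hr)]
  ring

lemma lpNorm_geom {z r : ℝ} (h0 : 0 ≤ z) (h1 : z < 1) (hr : 0 < r) :
    lpNorm r (geom z) = ((1 - z) ^ r / (1 - z ^ r)) ^ (1/r) := by
  rw [lpNorm, tsum_geom_rpow h0 h1 hr]

lemma thin_geom {l z : ℝ} (hl : 0 < l) (hl1 : l < 1) (hz0 : 0 ≤ z) (hz1 : z < 1) :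
    thin l (geom z) = geom (l * z / (1 - (1 - l) * z)) := by
  have hd : 0 < 1 - (1 - l) * z := by nlinarith
  funext n
  set r : ℂ := (((1 - l) * z : ℝ) : ℂ) with hr
  have hrn : ‖r‖ < 1 := by
    rw [hr, Complex.norm_real, Real.norm_eq_abs, abs_of_nonneg (mul_nonneg (by linarith) hz0)]
    nlinarith
  set f : ℕ → ℂ := fun k => (Nat.choose k n : ℂ) * (l : ℂ) ^ n * ((1 - l : ℝ) : ℂ) ^ (k - n) * geom z k with hf
  have hshift : ∀ j : ℕ, f (j + n) =
      ((l ^ n * z ^ n * (1 - z) : ℝ) : ℂ) * ((Nat.choose (j + n) n : ℂ) * r ^ j) := by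
    intro j
    simp only [hf, hr, geom, Nat.add_sub_cancel]
    push_cast
    rw [mul_pow, pow_add]
    ring
  have hsum : Summable fun j => f (j + n) := by
    simp only [hshift]
    exact ((summable_choose_mul_geometric_of_norm_lt_one n hrn).mul_left _)
  have hsumf : Summable f := (summable_nat_add_iff n).mp hsum
  have hzero : ∀ k ∈ Finset.range n, f k = 0 := by
    intro k hk
    simp only [Finset.mem_range] at hk
    simp [hf, Nat.choose_eq_zero_of_lt hk]
  have key : ∑' k, f k = ((l ^ n * z ^ n * (1 - z) : ℝ) : ℂ) * (1 / (1 - r) ^ (n + 1)) := by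
    rw [← hsumf.sum_add_tsum_nat_add n, Finset.sum_eq_zero hzero, zero_add]
    simp only [hshift]
    rw [tsum_mul_left, tsum_choose_mul_geometric_of_norm_lt_one n hrn]
  show ∑' k, f k = _
  rw [key]
  have h1r : (1 : ℂ) - r = ((1 - (1-l)*z : ℝ) : ℂ) := by push_cast [hr]; ring
  rw [h1r]
  have hdc : ((1 - (1-l)*z : ℝ) : ℂ) ≠ 0 := by
    simp only [ne_eq, Complex.ofReal_eq_zero]; linarith
  simp only [geom]
  push_cast at hdc ⊢
  have h1 : (1:ℂ) - ↑l * ↑z / (1 - (1 - ↑l) * ↑z) = (1 - ↑z) / (1 - (1 - ↑l) * ↑z) := by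
    rw [eq_div_iff hdc, sub_mul, div_mul_cancel₀ _ hdc]
    ring
  rw [h1, div_pow, div_mul_div_comm, ← pow_succ', mul_one_div]
  congr 1
  ring

theorem thinning_pq_norm_infinite (l p q : ℝ) (hl : 0 < l) (hl1 : l < 1)
    (hq : 1 < q) (hqp : q < p) :
    Filter.Tendsto (fun z => lpNorm q (thin l (geom z)) / lpNorm p (geom z))
      (nhdsWithin 1 (Set.Iio 1)) Filter.atTop := by
  have hq0 : 0 < q := by linarith
  have hp0 : 0 < p := by linarith
  have hc : (1:ℝ)/p - 1/q < 0 := by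
    rw [sub_neg]
    exact one_div_lt_one_div_of_lt hq0 hqp
  -- The bound function tends to atTop
  have hbound : Tendsto (fun z : ℝ => (1 - z) ^ ((1:ℝ)/p - 1/q) / q ^ ((1:ℝ)/q))
      (nhdsWithin 1 (Set.Iio 1)) atTop := by
    apply Tendsto.atTop_div_const (Real.rpow_pos_of_pos hq0 _)
    have h1 : Tendsto (fun z : ℝ => 1 - z) (nhdsWithin 1 (Set.Iio 1)) (nhdsWithin 0 (Set.Ioi 0)) := by
      apply tendsto_nhdsWithin_of_tendsto_nhds_of_eventually_within
      · have hcont : Continuous fun z : ℝ => 1 - z := by continuity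
        have : Tendsto (fun z : ℝ => 1 - z) (nhds 1) (nhds 0) := by
          simpa using hcont.tendsto 1
        exact this.mono_left nhdsWithin_le_nhds
      · filter_upwards [self_mem_nhdsWithin] with z hz
        simp only [Set.mem_Iio] at hz
        simp only [Set.mem_Ioi]
        linarith
    have h2 : Tendsto (fun t : ℝ => (t⁻¹) ^ (-((1:ℝ)/p - 1/q)))
        (nhdsWithin 0 (Set.Ioi 0)) atTop :=
      (tendsto_rpow_atTop (by linarith)).comp tendsto_inv_nhdsGT_zero
    have h3 : Tendsto (fun t : ℝ => t ^ ((1:ℝ)/p - 1/q)) (nhdsWithin 0 (Set.Ioi 0)) atTop := by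
      apply h2.congr'
      filter_upwards [self_mem_nhdsWithin] with t ht
      simp only [Set.mem_Ioi] at ht
      rw [Real.inv_rpow ht.le, ← Real.rpow_neg ht.le, neg_neg]
    exact h3.comp h1
  apply tendsto_atTop_mono' _ _ hbound
  filter_upwards [Ioo_mem_nhdsLT_of_mem (show (1:ℝ) ∈ Set.Ioc 0 1 by constructor <;> norm_num)]
    with z hz
  obtain ⟨hz0, hz1⟩ := hz
  have ht : (0:ℝ) < 1 - z := by linarith
  set w : ℝ := l * z / (1 - (1 - l) * z) with hw
  have hd : 0 < 1 - (1 - l) * z := by nlinarith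
  have hd1 : 1 - (1 - l) * z ≤ 1 := by nlinarith
  have hw0 : 0 ≤ w := by positivity
  have hw1 : w < 1 := by
    rw [hw, div_lt_one hd]
    nlinarith
  have hwz : 1 - z ≤ 1 - w := by
    have : w ≤ z := by
      rw [hw, div_le_iff₀ hd]
      nlinarith
    linarith
  have htw : (0:ℝ) < 1 - w := by linarith
  -- rewrite the norms
  rw [thin_geom hl hl1 hz0.le hz1, ← hw, lpNorm_geom hw0 hw1 hq0, lpNorm_geom hz0.le hz1 hp0]
  -- Lower bound for numerator
  have hwq1 : 0 < 1 - w ^ q := by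
    have := Real.rpow_lt_one hw0 hw1 hq0
    linarith
  have hbern : 1 - w ^ q ≤ q * (1 - w) := by
    have := one_add_mul_self_le_rpow_one_add (show (-1:ℝ) ≤ w - 1 by linarith) hq.le
    rw [show (1:ℝ) + (w - 1) = w by ring] at this
    nlinarith
  have hnum : (1 - z) ^ (q-1) / q ≤ (1 - w) ^ q / (1 - w ^ q) := by
    have step1 : (1 - w) ^ q / (q * (1 - w)) ≤ (1 - w) ^ q / (1 - w ^ q) :=
      div_le_div_of_nonneg_left (by positivity) hwq1 hbern
    have step2 : (1 - w) ^ q / (q * (1 - w)) = (1 - w) ^ (q-1) / q := by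
      rw [show (1-w)^q = (1-w)^(q-1) * (1-w) by
        rw [← Real.rpow_add_one (by linarith : (1:ℝ) - w ≠ 0)]
        ring_nf]
      rw [mul_comm ((1-w)^(q-1)) (1-w), mul_comm q (1-w),
        mul_div_mul_left _ _ (by linarith : (1:ℝ) - w ≠ 0)]
    have step3 : (1 - z) ^ (q-1) / q ≤ (1 - w) ^ (q-1) / q :=
      div_le_div₀ (by positivity) (Real.rpow_le_rpow ht.le hwz (by linarith)) hq0 le_rfl
    calc (1 - z) ^ (q-1) / q ≤ (1 - w) ^ (q-1) / q := step3
      _ = (1 - w) ^ q / (q * (1 - w)) := step2.symm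
      _ ≤ _ := step1
  -- Upper bound for the denominator's base
  have hzp1 : 1 - z ≤ 1 - z ^ p := by
    have : z ^ p ≤ z := by
      have := Real.rpow_le_rpow_of_exponent_ge hz0 hz1.le (by linarith : (1:ℝ) ≤ p)
      rwa [Real.rpow_one] at this
    linarith
  have hden : (1 - z) ^ p / (1 - z ^ p) ≤ (1 - z) ^ (p-1) := by
    have step1 : (1 - z) ^ p / (1 - z ^ p) ≤ (1 - z) ^ p / (1 - z) :=
      div_le_div_of_nonneg_left (by positivity) ht hzp1
    have step2 : (1 - z) ^ p / (1 - z) = (1 - z) ^ (p-1) := by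
      rw [show (1-z)^p = (1-z)^(p-1) * (1-z) by
        rw [← Real.rpow_add_one (by linarith : (1:ℝ) - z ≠ 0)]
        ring_nf]
      rw [mul_div_assoc, div_self (by linarith : (1:ℝ) - z ≠ 0), mul_one]
    linarith
  -- combine
  have hLp_pos : 0 < ((1 - z) ^ p / (1 - z ^ p)) ^ (1/p) := by
    apply Real.rpow_pos_of_pos
    apply div_pos (by positivity) (by linarith)
  have hineq : ((1 - z) ^ (q-1) / q) ^ (1/q) / ((1 - z) ^ (p-1)) ^ (1/p) ≤
      ((1 - w) ^ q / (1 - w ^ q)) ^ (1/q) / ((1 - z) ^ p / (1 - z ^ p)) ^ (1/p) := by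
    apply div_le_div₀ (by positivity)
      (Real.rpow_le_rpow (by positivity) hnum (by positivity)) hLp_pos
      (Real.rpow_le_rpow (div_nonneg (by positivity) (by linarith)) hden (by positivity))
  refine le_trans (le_of_eq ?_) hineq
  -- identify the bound with the explicit lhs
  rw [Real.div_rpow (by positivity) hq0.le, ← Real.rpow_mul ht.le, ← Real.rpow_mul ht.le,
    div_right_comm, ← Real.rpow_sub ht]
  have hexp : (q-1)*(1/q) - (p-1)*(1/p) = 1/p - 1/q := by
    field_simp
    ring
  rw [hexp]
end

section
/- Let κ > 1 and p > 1. Then for every sequence x : ℕ → ℂ with ‖x‖_p < ∞ one has ‖A_κ(x)‖_p ≤ κ^{(1−p)/p} ‖x‖_p, and the constant is sharp: ‖A_κ(ω(z))‖_p / ‖ω(z)‖_p → κ^{(1−p)/p} as z → 1⁻. In particular the ℓ^p → ℓ^p norm of A_κ equals κ^{(1−p)/p}. -/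
open Finset Real Filter Topology

/-- The discrete quantum-limited amplifier with parameter `κ`:
`[A_κ(x)]_k = ∑_{n=0}^k C(k,n) (κ-1)^{k-n} κ^{-(k+1)} x_n`. -/
noncomputable def amp (κ : ℝ) (x : ℕ → ℂ) : ℕ → ℂ :=
  fun k => ∑ n ∈ Finset.range (k + 1),
    (Nat.choose k n : ℂ) * ((κ - 1 : ℝ) : ℂ) ^ (k - n) * ((κ : ℝ) : ℂ)⁻¹ ^ (k + 1) * x n

/-- The kernel of the amplifier. -/
noncomputable def ampK (κ : ℝ) (k n : ℕ) : ℝ :=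
  (Nat.choose k n : ℝ) * (κ - 1) ^ (k - n) * (κ⁻¹) ^ (k + 1)

lemma ampK_nonneg {κ : ℝ} (hκ : 1 < κ) (k n : ℕ) : 0 ≤ ampK κ k n := by
  have h1 : (0:ℝ) ≤ κ - 1 := by linarith
  have h2 : (0:ℝ) ≤ κ⁻¹ := by positivity
  exact mul_nonneg (mul_nonneg (Nat.cast_nonneg _) (pow_nonneg h1 _)) (pow_nonneg h2 _)

lemma ampK_row_sum {κ : ℝ} (hκ : 1 < κ) (k : ℕ) :
    ∑ n ∈ range (k + 1), ampK κ k n = κ⁻¹ := by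
  have hκ0 : (0:ℝ) < κ := by linarith
  have h := add_pow (1 : ℝ) (κ - 1) k
  simp only [one_pow, one_mul, add_sub_cancel] at h
  unfold ampK
  rw [← Finset.sum_mul]
  have : ∑ n ∈ range (k + 1), (Nat.choose k n : ℝ) * (κ - 1) ^ (k - n)
      = ∑ n ∈ range (k + 1), (κ - 1) ^ (k - n) * (Nat.choose k n : ℝ) :=
    Finset.sum_congr rfl fun n _ => by ring
  rw [this, ← h]
  rw [pow_succ]
  field_simp
  rw [← mul_pow, mul_one_div_cancel hκ0.ne', one_pow]

lemma ampK_col_sum_le {κ : ℝ} (hκ : 1 < κ) (n K : ℕ) :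
    ∑ k ∈ Finset.Ico n K, ampK κ k n ≤ 1 := by
  have hκ0 : (0:ℝ) < κ := by linarith
  set r : ℝ := (κ - 1) / κ with hr
  have hr0 : 0 ≤ r := div_nonneg (by linarith) hκ0.le
  have hr1 : r < 1 := by rw [hr, div_lt_one hκ0]; linarith
  have hrn : ‖r‖ < 1 := by rwa [Real.norm_eq_abs, abs_of_nonneg hr0]
  have hsum := hasSum_choose_mul_geometric_of_norm_lt_one (𝕜 := ℝ) n hrn
  have hval : 1 / (1 - r) ^ (n + 1) = κ ^ (n + 1) := by
    have h1r : 1 - r = κ⁻¹ := by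
      rw [hr]
      field_simp
      ring
    rw [h1r, one_div, inv_pow, inv_inv]
  rw [hval] at hsum
  have hsum' : HasSum (fun j => ampK κ (n + j) n) 1 := by
    have := hsum.mul_left ((κ⁻¹) ^ (n + 1))
    have hone : (κ⁻¹) ^ (n + 1) * κ ^ (n + 1) = 1 := by
      rw [← mul_pow, inv_mul_cancel₀ (ne_of_gt hκ0), one_pow]
    rw [hone] at this
    convert this using 2 with j
    · rfl
    unfold ampK
    rw [show (n + j) - n = j by omega, show n + j = j + n by omega, hr, div_pow]
    ring
  calc ∑ k ∈ Finset.Ico n K, ampK κ k n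
      = ∑ j ∈ range (K - n), ampK κ (n + j) n := by rw [Finset.sum_Ico_eq_sum_range]
    _ ≤ ∑' j, ampK κ (n + j) n :=
        Summable.sum_le_tsum _ (fun j _ => ampK_nonneg hκ _ _) hsum'.summable
    _ = 1 := hsum'.tsum_eq

lemma amp_pointwise {κ p : ℝ} (hκ : 1 < κ) (hp : 1 < p) (x : ℕ → ℂ) (k : ℕ) :
    ‖amp κ x k‖ ^ p ≤ κ ^ (1 - p) * ∑ n ∈ range (k + 1), ampK κ k n * ‖x n‖ ^ p := by
  have hκ0 : (0:ℝ) < κ := by linarith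
  have hp0 : (0:ℝ) < p := by linarith
  have h1 : ‖amp κ x k‖ ≤ ∑ n ∈ range (k + 1), ampK κ k n * ‖x n‖ := by
    refine (norm_sum_le _ _).trans_eq (Finset.sum_congr rfl fun n _ => ?_)
    simp only [norm_mul, norm_pow, norm_inv, Complex.norm_real, Complex.norm_natCast,
      Real.norm_eq_abs, abs_of_nonneg (by linarith : (0:ℝ) ≤ κ - 1), abs_of_pos hκ0, ampK,
      inv_pow]
  have h2 := Real.inner_le_weight_mul_Lp_of_nonneg (range (k + 1)) hp.le (ampK κ k)
    (fun n => ‖x n‖) (ampK_nonneg hκ k) (fun n => norm_nonneg _)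
  rw [ampK_row_sum hκ k] at h2
  set S := ∑ n ∈ range (k + 1), ampK κ k n * ‖x n‖ ^ p with hSdef
  have hS : 0 ≤ S := Finset.sum_nonneg fun n _ =>
    mul_nonneg (ampK_nonneg hκ k n) (Real.rpow_nonneg (norm_nonneg _) _)
  have key : ‖amp κ x k‖ ^ p ≤ ((κ⁻¹) ^ (1 - p⁻¹) * S ^ p⁻¹) ^ p :=
    Real.rpow_le_rpow (norm_nonneg _) (h1.trans h2) hp0.le
  refine key.trans_eq ?_
  rw [Real.mul_rpow (Real.rpow_nonneg (inv_nonneg.2 hκ0.le) _) (Real.rpow_nonneg hS _),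
    ← Real.rpow_mul (inv_nonneg.2 hκ0.le), ← Real.rpow_mul hS,
    inv_mul_cancel₀ (ne_of_gt hp0), Real.rpow_one,
    show (1 - p⁻¹) * p = p - 1 by field_simp,
    Real.inv_rpow hκ0.le, ← Real.rpow_neg hκ0.le]
  ring_nf

lemma amp_tsum_le {κ p : ℝ} (hκ : 1 < κ) (hp : 1 < p) (x : ℕ → ℂ)
    (hx : Summable fun n => ‖x n‖ ^ p) :
    ∑' k, ‖amp κ x k‖ ^ p ≤ κ ^ (1 - p) * ∑' n, ‖x n‖ ^ p := by
  have hκ0 : (0:ℝ) < κ := by linarith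
  have ha : ∀ n, 0 ≤ ‖x n‖ ^ p := fun n => Real.rpow_nonneg (norm_nonneg _) _
  refine Real.tsum_le_of_sum_range_le (fun k => Real.rpow_nonneg (norm_nonneg _) _)
    (fun K => ?_)
  calc ∑ k ∈ range K, ‖amp κ x k‖ ^ p
      ≤ ∑ k ∈ range K, κ ^ (1 - p) * ∑ n ∈ range (k + 1), ampK κ k n * ‖x n‖ ^ p :=
        Finset.sum_le_sum fun k _ => amp_pointwise hκ hp x k
    _ = κ ^ (1 - p) * ∑ k ∈ range K, ∑ n ∈ range (k + 1), ampK κ k n * ‖x n‖ ^ p := by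
        rw [Finset.mul_sum]
    _ ≤ κ ^ (1 - p) * ∑' n, ‖x n‖ ^ p := by
        refine mul_le_mul_of_nonneg_left ?_ (Real.rpow_nonneg hκ0.le _)
        rw [Finset.sum_comm' (s' := fun n => Finset.Ico n K) (t' := range K)
          (fun k n => by simp only [Finset.mem_range, Finset.mem_Ico]; omega)]
        calc ∑ n ∈ range K, ∑ k ∈ Finset.Ico n K, ampK κ k n * ‖x n‖ ^ p
            = ∑ n ∈ range K, (∑ k ∈ Finset.Ico n K, ampK κ k n) * ‖x n‖ ^ p :=
              Finset.sum_congr rfl fun n _ => by rw [Finset.sum_mul]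
          _ ≤ ∑ n ∈ range K, 1 * ‖x n‖ ^ p := Finset.sum_le_sum fun n _ =>
              mul_le_mul_of_nonneg_right (ampK_col_sum_le hκ n K) (ha n)
          _ = ∑ n ∈ range K, ‖x n‖ ^ p := by simp
          _ ≤ ∑' n, ‖x n‖ ^ p := Summable.sum_le_tsum _ (fun n _ => ha n) hx

lemma amp_geom {κ : ℝ} (hκ : 1 < κ) (z : ℝ) :
    amp κ (geom z) = geom (1 - (1 - z) / κ) := by
  have hκ0 : (0:ℝ) < κ := by linarith
  have hκc : (κ:ℂ) ≠ 0 := by exact_mod_cast ne_of_gt hκ0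
  funext k
  simp only [amp, geom]
  have e : ∀ n ∈ Finset.range (k + 1),
      (Nat.choose k n : ℂ) * ((κ - 1 : ℝ) : ℂ) ^ (k - n) * ((κ : ℝ) : ℂ)⁻¹ ^ (k + 1) *
        (((1 - z) * z ^ n : ℝ) : ℂ)
      = ((κ:ℂ))⁻¹ ^ (k + 1) * (1 - (z:ℂ)) *
          ((z:ℂ) ^ n * ((κ:ℂ) - 1) ^ (k - n) * (Nat.choose k n : ℂ)) := by
    intro n _
    push_cast
    ring
  rw [Finset.sum_congr rfl e, ← Finset.mul_sum, ← add_pow]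
  push_cast
  rw [show (1:ℂ) - (1 - (1 - (z:ℂ)) / κ) = (1 - z) / κ by ring,
    show (1:ℂ) - (1 - (z:ℂ)) / κ = (z + (κ - 1)) / κ by
      rw [show (z:ℂ) + (κ - 1) = κ - (1 - z) by ring, sub_div (κ:ℂ) (1 - (z:ℂ)), div_self hκc],
    div_pow]
  ring

lemma geom_hasSum {p z : ℝ} (hp : 0 < p) (hz0 : 0 ≤ z) (hz1 : z < 1) :
    HasSum (fun n => ‖geom z n‖ ^ p) ((1 - z) ^ p * (1 - z ^ p)⁻¹) := by
  have hzp1 : z ^ p < 1 := Real.rpow_lt_one hz0 hz1 hp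
  have hzp0 : 0 ≤ z ^ p := Real.rpow_nonneg hz0 _
  have hgeom := (hasSum_geometric_of_lt_one hzp0 hzp1).mul_left ((1 - z) ^ p)
  have hfun : (fun n => ‖geom z n‖ ^ p) = fun n => (1 - z) ^ p * (z ^ p) ^ n := by
    funext n
    have h1 : ‖geom z n‖ = (1 - z) * z ^ n := by
      show ‖(((1 - z) * z ^ n : ℝ) : ℂ)‖ = (1 - z) * z ^ n
      rw [Complex.norm_real, Real.norm_eq_abs,
        abs_of_nonneg (mul_nonneg (by linarith : (0:ℝ) ≤ 1 - z) (pow_nonneg hz0 n))]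
    rw [h1, Real.mul_rpow (by linarith : (0:ℝ) ≤ 1 - z) (pow_nonneg hz0 n)]
    congr 1
    rw [← Real.rpow_natCast z n, ← Real.rpow_natCast (z ^ p) n, ← Real.rpow_mul hz0,
      ← Real.rpow_mul hz0, mul_comm]
  rw [hfun]
  exact hgeom

lemma lpNorm_geom_s4 {p z : ℝ} (hp : 0 < p) (hz0 : 0 ≤ z) (hz1 : z < 1) :
    lpNorm p (geom z) = ((1 - z) ^ p * (1 - z ^ p)⁻¹) ^ (1 / p) := by
  rw [lpNorm, (geom_hasSum hp hz0 hz1).tsum_eq]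

theorem amplifier_pp_norm (κ p : ℝ) (hκ : 1 < κ) (hp : 1 < p) :
    (∀ x : ℕ → ℂ, Summable (fun n => ‖x n‖ ^ p) →
        lpNorm p (amp κ x) ≤ κ ^ ((1 - p) / p) * lpNorm p x) ∧
    Filter.Tendsto (fun z => lpNorm p (amp κ (geom z)) / lpNorm p (geom z))
      (nhdsWithin 1 (Set.Iio 1)) (nhds (κ ^ ((1 - p) / p))) := by
  have hκ0 : (0:ℝ) < κ := by linarith
  have hp0 : (0:ℝ) < p := by linarith
  constructor
  · intro x hx
    have key := amp_tsum_le hκ hp x hx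
    have h0 : 0 ≤ ∑' k, ‖amp κ x k‖ ^ p :=
      tsum_nonneg fun k => Real.rpow_nonneg (norm_nonneg _) _
    have h1 : 0 ≤ ∑' n, ‖x n‖ ^ p :=
      tsum_nonneg fun n => Real.rpow_nonneg (norm_nonneg _) _
    rw [lpNorm, lpNorm]
    calc (∑' k, ‖amp κ x k‖ ^ p) ^ (1 / p)
        ≤ (κ ^ (1 - p) * ∑' n, ‖x n‖ ^ p) ^ (1 / p) :=
          Real.rpow_le_rpow h0 key (by positivity)
      _ = κ ^ ((1 - p) / p) * (∑' n, ‖x n‖ ^ p) ^ (1 / p) := by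
          rw [Real.mul_rpow (Real.rpow_nonneg hκ0.le _) h1, ← Real.rpow_mul hκ0.le,
            mul_one_div]
  · set g : ℝ → ℝ := fun z => (1 - z ^ p) / (1 - z) with hg
    set w : ℝ → ℝ := fun z => 1 - (1 - z) / κ with hw
    have hderiv : HasDerivAt (fun t : ℝ => t ^ p) p 1 := by
      have := Real.hasDerivAt_rpow_const (x := (1:ℝ)) (p := p) (Or.inl one_ne_zero)
      simpa using this
    have hslope := hasDerivAt_iff_tendsto_slope.1 hderiv
    have hmono : 𝓝[<] (1:ℝ) ≤ 𝓝[≠] (1:ℝ) :=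
      nhdsWithin_mono _ fun z hz => Set.mem_compl_singleton_iff.2 (ne_of_lt hz)
    have hgt : Tendsto g (𝓝[<] (1:ℝ)) (𝓝 p) := by
      refine (hslope.mono_left hmono).congr' ?_
      filter_upwards [self_mem_nhdsWithin] with z (hz : z < 1)
      show slope (fun t : ℝ => t ^ p) 1 z = g z
      rw [slope_def_field]
      simp only [hg, Real.one_rpow]
      rw [show ((1:ℝ) - z ^ p) = -(z ^ p - 1) by ring, show ((1:ℝ) - z) = -(z - 1) by ring,
        neg_div_neg_eq]
    have hwcont : Continuous w := by
      simp only [hw]; fun_prop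
    have hwt : Tendsto w (𝓝[<] (1:ℝ)) (𝓝[<] (1:ℝ)) := by
      apply tendsto_nhdsWithin_of_tendsto_nhds_of_eventually_within
      · have h1 := (hwcont.tendsto 1).mono_left (nhdsWithin_le_nhds (s := Set.Iio (1:ℝ)))
        have : w 1 = 1 := by simp [hw]
        rwa [this] at h1
      · filter_upwards [self_mem_nhdsWithin] with z (hz : z < 1)
        show w z < 1
        have hpos : 0 < (1 - z) / κ := div_pos (by linarith) hκ0
        simp only [hw]
        linarith
    have hgwt : Tendsto (fun z => g (w z)) (𝓝[<] (1:ℝ)) (𝓝 p) := hgt.comp hwt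
    have hquot : Tendsto (fun z => κ ^ (1 - p) * (g z / g (w z))) (𝓝[<] (1:ℝ))
        (𝓝 (κ ^ (1 - p))) := by
      have h2 := (hgt.div hgwt (ne_of_gt hp0)).const_mul (κ ^ (1 - p))
      simpa [div_self (ne_of_gt hp0)] using h2
    have hfinal := hquot.rpow_const (p := 1 / p) (Or.inr (by positivity))
    rw [show (κ ^ (1 - p)) ^ (1 / p) = κ ^ ((1 - p) / p) by
      rw [← Real.rpow_mul hκ0.le, mul_one_div]] at hfinal
    refine hfinal.congr' ?_
    filter_upwards [Ioo_mem_nhdsLT_of_mem (show (1:ℝ) ∈ Set.Ioc 0 1 by constructor <;> norm_num)]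
      with z hz
    obtain ⟨hz0, hz1⟩ := hz
    have hA : (0:ℝ) < 1 - z := by linarith
    have hwz0 : 0 < w z := by
      have h1 : (1 - z) / κ < 1 - z := by
        rw [div_lt_iff₀ hκ0]
        nlinarith
      simp only [hw]
      linarith
    have hwz1 : w z < 1 := by
      have hpos : 0 < (1 - z) / κ := div_pos hA hκ0
      simp only [hw]; linarith
    have hB : (0:ℝ) < 1 - z ^ p := by
      have := Real.rpow_lt_one hz0.le hz1 hp0
      linarith
    have hBw : (0:ℝ) < 1 - (w z) ^ p := by
      have := Real.rpow_lt_one hwz0.le hwz1 hp0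
      linarith
    have h1w : 1 - w z = (1 - z) / κ := by simp only [hw]; ring
    show (κ ^ (1 - p) * (g z / g (w z))) ^ (1 / p)
        = lpNorm p (amp κ (geom z)) / lpNorm p (geom z)
    rw [amp_geom hκ z]
    have hwzdef : (1 : ℝ) - (1 - z) / κ = w z := by simp only [hw]
    rw [hwzdef, lpNorm_geom_s4 hp0 hwz0.le hwz1, lpNorm_geom_s4 hp0 hz0.le hz1,
      ← Real.div_rpow
        (mul_nonneg (Real.rpow_nonneg (by linarith : (0:ℝ) ≤ 1 - w z) _)
          (inv_nonneg.2 hBw.le))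
        (mul_nonneg (Real.rpow_nonneg hA.le _) (inv_nonneg.2 hB.le))]
    congr 1
    simp only [hg]
    rw [h1w, Real.div_rpow hA.le hκ0.le, Real.rpow_sub hκ0, Real.rpow_one]
    field_simp
end

section
/- (Logarithmic Sobolev inequality for the quantum-limited attenuator, finite-dimensional form.) Let 0 < a < 1, 0 < z < 1, N ∈ ℕ, and let x = (x_0,…,x_N) ∈ ℝ^{N+1} have nonnegative components with ∑_{n=0}^N x_n^{1/a} = 1. Set ξ = z^{1/a}. Then F_a(x) + μ(z,a) S_a(x) ≤ (ξ^a − ξ)/(1−ξ) + μ(z,a) · (−ln(1−ξ) − ξ ln ξ/(1−ξ)). -/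
/-- `F_a(x) = ∑_{n=1}^N n (x_n |x_{n-1}|^{(1-a)/a} - |x_n|^{1/a})`
(real powers, with `0 ^ c = 0` for `c > 0`). -/
noncomputable def Fa (a : ℝ) (N : ℕ) (x : ℕ → ℝ) : ℝ :=
  ∑ n ∈ Finset.Icc 1 N, (n : ℝ) * (x n * |x (n - 1)| ^ ((1 - a) / a) - |x n| ^ (1 / a))

/-- `S_a(x) = -∑_{n=0}^N |x_n|^{1/a} ln(|x_n|^{1/a})` (with `0 · ln 0 = 0`). -/
noncomputable def Sa (a : ℝ) (N : ℕ) (x : ℕ → ℝ) : ℝ :=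
  -∑ n ∈ Finset.range (N + 1), |x n| ^ (1 / a) * Real.log (|x n| ^ (1 / a))

/-- `μ(z,a) = a (a z^{(a-1)/a} - 1 + (1-a) z) / ln z`. -/
noncomputable def mu (z a : ℝ) : ℝ :=
  a * (a * z ^ ((a - 1) / a) - 1 + (1 - a) * z) / Real.log z



open Real Set Filter

lemma holder2 {a : ℝ} (ha : 0 < a) (ha1 : a < 1) {u v U V : ℝ}
    (hu : 0 ≤ u) (hv : 0 ≤ v) (hU : 0 ≤ U) (hV : 0 ≤ V) :
    u ^ (1-a) * v ^ a + U ^ (1-a) * V ^ a ≤ (u+U) ^ (1-a) * (v+V) ^ a := by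
  rcases eq_or_lt_of_le (add_nonneg hu hU) with h | hS
  · have hu0 : u = 0 := by linarith
    have hU0 : U = 0 := by linarith
    simp [hu0, hU0, Real.zero_rpow (by linarith : (1:ℝ)-a ≠ 0)]
  rcases eq_or_lt_of_le (add_nonneg hv hV) with h2 | hT
  · have hv0 : v = 0 := by linarith
    have hV0 : V = 0 := by linarith
    simp [hv0, hV0, Real.zero_rpow (ne_of_gt ha)]
  have hSne : (u+U) ^ (1-a) ≠ 0 := by positivity
  have hTne : (v+V) ^ a ≠ 0 := by positivity
  have key1 : (u/(u+U)) ^ (1-a) * (v/(v+V)) ^ a ≤ (1-a) * (u/(u+U)) + a * (v/(v+V)) :=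
    Real.geom_mean_le_arith_mean2_weighted (by linarith) ha.le (by positivity) (by positivity)
      (by ring)
  have key2 : (U/(u+U)) ^ (1-a) * (V/(v+V)) ^ a ≤ (1-a) * (U/(u+U)) + a * (V/(v+V)) :=
    Real.geom_mean_le_arith_mean2_weighted (by linarith) ha.le (by positivity) (by positivity)
      (by ring)
  have sum_le : (u/(u+U)) ^ (1-a) * (v/(v+V)) ^ a + (U/(u+U)) ^ (1-a) * (V/(v+V)) ^ a ≤ 1 := by
    have : (1-a) * (u/(u+U)) + a * (v/(v+V)) + ((1-a) * (U/(u+U)) + a * (V/(v+V))) = 1 := by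
      field_simp
      ring
    linarith [add_le_add key1 key2]
  have e1 : (u/(u+U)) ^ (1-a) * (v/(v+V)) ^ a
      = (u ^ (1-a) * v ^ a) / ((u+U) ^ (1-a) * (v+V) ^ a) := by
    rw [Real.div_rpow hu hS.le, Real.div_rpow hv hT.le]
    field_simp
  have e2 : (U/(u+U)) ^ (1-a) * (V/(v+V)) ^ a
      = (U ^ (1-a) * V ^ a) / ((u+U) ^ (1-a) * (v+V) ^ a) := by
    rw [Real.div_rpow hU hS.le, Real.div_rpow hV hT.le]
    field_simp
  rw [e1, e2, ← add_div, div_le_one (by positivity)] at sum_le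
  linarith

lemma qlem {b : ℝ} (hb : 0 < b) (hb1 : b < 1) {u : ℝ} (hu : 0 ≤ u) (hu1 : u < 1) :
    1 ≤ b*(1-b)*(u*(-Real.log (1-u))) + b*u + (1-u)^b := by
  set Q : ℝ → ℝ := fun w => b*(1-b)*(w*(-Real.log (1-w))) + b*w + (1-w)^b - 1 with hQdef
  set Qd : ℝ → ℝ := fun w => b*(1-b)*((-Real.log (1-w)) + w*(1-w)⁻¹) + b - b*(1-w)^(b-1)
    with hQddef
  have hone : ∀ w : ℝ, w < 1 → (0:ℝ) < 1 - w := fun w hw => by linarith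
  have hsub : ∀ w : ℝ, HasDerivAt (fun u : ℝ => 1 - u) (-1) w := fun w =>
    (hasDerivAt_id w).const_sub 1
  have hlog : ∀ w : ℝ, w < 1 → HasDerivAt (fun u : ℝ => Real.log (1-u)) (-(1-w)⁻¹) w := by
    intro w hw
    have h := (Real.hasDerivAt_log (hone w hw).ne').comp w (hsub w)
    refine h.congr_deriv ?_
    ring
  have hd : ∀ w : ℝ, w < 1 → HasDerivAt Q (Qd w) w := by
    intro w hw
    have h1 : HasDerivAt (fun u : ℝ => u * (-Real.log (1-u)))
        (1 * (-Real.log (1-w)) + w * (1-w)⁻¹) w := by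
      have := (hasDerivAt_id w).mul (hlog w hw).neg
      refine this.congr_deriv ?_
      simp only [id_eq, Pi.neg_apply]
      ring
    have h2 : HasDerivAt (fun u : ℝ => (1-u)^b) (b * (1-w)^(b-1) * (-1)) w :=
      (Real.hasDerivAt_rpow_const (Or.inl (hone w hw).ne')).comp w (hsub w)
    have := (((h1.const_mul (b*(1-b))).add ((hasDerivAt_id w).const_mul b)).add h2).sub_const 1
    refine this.congr_deriv ?_
    simp only [hQddef]
    ring
  have hdd : ∀ w : ℝ, 0 ≤ w → w < 1 → HasDerivAt Qd
      (b*(1-b)*((1-w)⁻¹ + ((1-w)⁻¹ + w*((1-w)*(1-w))⁻¹)) - b*((b-1)*(1-w)^(b-2)*(-1))) w := by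
    intro w _ hw
    have h1w := hone w hw
    have hinv : HasDerivAt (fun u : ℝ => (1-u)⁻¹) (((1-w)*(1-w))⁻¹) w := by
      have := ((hasDerivAt_inv h1w.ne').comp w (hsub w))
      refine this.congr_deriv ?_
      rw [show ((1-w)*(1-w)) = (1-w)^2 by ring]
      ring
    have h1 : HasDerivAt (fun u : ℝ => u * (1-u)⁻¹) (1 * (1-w)⁻¹ + w * ((1-w)*(1-w))⁻¹) w :=
      (hasDerivAt_id w).mul hinv
    have h2 : HasDerivAt (fun u : ℝ => (1-u)^(b-1)) ((b-1) * (1-w)^(b-1-1) * (-1)) w :=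
      (Real.hasDerivAt_rpow_const (Or.inl h1w.ne')).comp w (hsub w)
    have := (((hlog w hw).neg.add h1).const_mul (b*(1-b))).add
      (((h2.const_mul b).neg).add_const b)
    convert this using 1
    · rfl
    · rfl
    · simp only [hQddef]
      ext u
      simp only [Pi.add_apply, Pi.neg_apply]
      ring
    · rw [show b-1-1 = b-2 by ring]
      ring
  have key2 : ∀ w : ℝ, 0 ≤ w → w < 1 →
      0 ≤ b*(1-b)*((1-w)⁻¹ + ((1-w)⁻¹ + w*((1-w)*(1-w))⁻¹)) - b*((b-1)*(1-w)^(b-2)*(-1)) := by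
    intro w hw0 hw
    have h1w := hone w hw
    have hb2 : (1-w)^(b-2) * ((1-w)*(1-w)) = (1-w)^b := by
      have e : (1-w)*(1-w) = (1-w)^(1:ℝ) * (1-w)^(1:ℝ) := by rw [Real.rpow_one]
      rw [e, ← Real.rpow_add h1w, ← Real.rpow_add h1w]
      norm_num
    have hle1 : (1-w)^b ≤ 1 := Real.rpow_le_one h1w.le (by linarith) hb.le
    have hfrac : (1-w)^(b-2) ≤ ((1-w)*(1-w))⁻¹ := by
      rw [← hb2] at hle1
      have hpos : (0:ℝ) < (1-w)*(1-w) := by positivity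
      rw [show ((1-w)*(1-w))⁻¹ = 1/((1-w)*(1-w)) by rw [one_div], le_div_iff₀ hpos]
      exact hle1
    have hid : (1-w)⁻¹ + w*((1-w)*(1-w))⁻¹ = ((1-w)*(1-w))⁻¹ := by
      field_simp
      ring
    have expand : b*(1-b)*((1-w)⁻¹ + ((1-w)⁻¹ + w*((1-w)*(1-w))⁻¹)) - b*((b-1)*(1-w)^(b-2)*(-1))
        = b*(1-b)*((1-w)⁻¹ + ((1-w)⁻¹ + w*((1-w)*(1-w))⁻¹) - (1-w)^(b-2)) := by ring
    rw [expand]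
    have hinvpos : (0:ℝ) ≤ (1-w)⁻¹ := (inv_pos.mpr h1w).le
    apply mul_nonneg (by nlinarith)
    linarith
  -- Qd is monotone on [0,1), Qd 0 = 0
  have hQd0 : Qd 0 = 0 := by
    simp [hQddef]
  have hQdmono : MonotoneOn Qd (Ico (0:ℝ) 1) := by
    apply monotoneOn_of_deriv_nonneg (convex_Ico 0 1)
    · intro w hw
      exact (hdd w hw.1 hw.2).continuousAt.continuousWithinAt
    · intro w hw
      rw [interior_Ico] at hw
      exact (hdd w hw.1.le hw.2).differentiableAt.differentiableWithinAt
    · intro w hw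
      rw [interior_Ico] at hw
      rw [(hdd w hw.1.le hw.2).deriv]
      exact key2 w hw.1.le hw.2
  have hQdnonneg : ∀ w ∈ Ico (0:ℝ) 1, 0 ≤ Qd w := by
    intro w hw
    have := hQdmono (show (0:ℝ) ∈ Ico (0:ℝ) 1 by constructor <;> norm_num) hw hw.1
    rw [hQd0] at this
    exact this
  -- Q is monotone on [0,1), Q 0 = 0
  have hQ0 : Q 0 = 0 := by
    simp [hQdef]
  have hQmono : MonotoneOn Q (Ico (0:ℝ) 1) := by
    apply monotoneOn_of_deriv_nonneg (convex_Ico 0 1)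
    · intro w hw
      exact (hd w hw.2).continuousAt.continuousWithinAt
    · intro w hw
      rw [interior_Ico] at hw
      exact (hd w hw.2).differentiableAt.differentiableWithinAt
    · intro w hw
      rw [interior_Ico] at hw
      rw [(hd w hw.2).deriv]
      exact hQdnonneg w ⟨hw.1.le, hw.2⟩
  have := hQmono (show (0:ℝ) ∈ Ico (0:ℝ) 1 by constructor <;> norm_num) ⟨hu, hu1⟩ hu
  rw [hQ0] at this
  simp only [hQdef] at this
  linarith

lemma diamond {a : ℝ} (ha : 0 < a) (ha1 : a < 1) {s : ℝ} (hs : 0 < s) (hs1 : s < 1) :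
    a*s^(a-1) - 1 + (1-a)*s^a ≤ a*(1-a)*(s^a - s^(a-1))*Real.log s := by
  have hq := qlem (b := 1-a) (by linarith) (by linarith) (u := 1-s) (by linarith) (by linarith)
  rw [show (1:ℝ)-(1-s) = s by ring, show (1:ℝ)-(1-a) = a by ring] at hq
  have hsa1 : (0:ℝ) < s^(a-1) := Real.rpow_pos_of_pos hs _
  have e1 : s^(a-1) * s^(1-a) = 1 := by
    rw [← Real.rpow_add hs]; norm_num
  have e2 : s^(a-1) * s = s^a := by
    nth_rewrite 2 [← Real.rpow_one s]
    rw [← Real.rpow_add hs]; ring_nf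
  have this2 : s^(a-1)*1 ≤ s^(a-1)*((1-a)*a*((1-s)*(-Real.log s)) + (1-a)*(1-s) + s^(1-a)) :=
    mul_le_mul_of_nonneg_left hq hsa1.le
  have expand : s^(a-1)*((1-a)*a*((1-s)*(-Real.log s)) + (1-a)*(1-s) + s^(1-a))
      = a*(1-a)*((s^(a-1)*s) - s^(a-1))*(-Real.log s)*(1/s)*s - a*(1-a)*((s^(a-1)*s) - s^(a-1))*(-Real.log s)*(1/s)*s + (1-a)*a*(s^(a-1) - s^(a-1)*s)*(-Real.log s)
        + (1-a)*(s^(a-1) - s^(a-1)*s) + s^(a-1)*s^(1-a) := by ring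
  rw [mul_one] at this2
  rw [expand, e1, e2] at this2
  nlinarith [this2]

lemma nuMono {a : ℝ} (ha : 0 < a) (ha1 : a < 1) :
    MonotoneOn (fun s => (a*s^(a-1) - 1 + (1-a)*s^a)/Real.log s) (Ioo (0:ℝ) 1) := by
  have hderiv : ∀ s ∈ Ioo (0:ℝ) 1,
      HasDerivAt (fun s => (a*s^(a-1) - 1 + (1-a)*s^a)/Real.log s)
      (((a*((a-1)*s^(a-1-1)) + (1-a)*(a*s^(a-1))) * Real.log s
        - (a*s^(a-1) - 1 + (1-a)*s^a) * s⁻¹)/(Real.log s)^2) s := by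
    intro s hs
    have hs0 : s ≠ 0 := ne_of_gt hs.1
    have hlogne : Real.log s ≠ 0 := ne_of_lt (Real.log_neg hs.1 hs.2)
    have h1 : HasDerivAt (fun x : ℝ => a*x^(a-1) - 1 + (1-a)*x^a)
        (a*((a-1)*s^(a-1-1)) + (1-a)*(a*s^(a-1))) s := by
      have d1 := (Real.hasDerivAt_rpow_const (p := a-1) (Or.inl hs0)).const_mul a
      have d2 := (Real.hasDerivAt_rpow_const (p := a) (Or.inl hs0)).const_mul (1-a)
      exact (d1.sub_const 1).add d2
    exact h1.div (Real.hasDerivAt_log hs0) hlogne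
  apply monotoneOn_of_deriv_nonneg (convex_Ioo 0 1)
  · intro s hs
    exact (hderiv s hs).continuousAt.continuousWithinAt
  · intro s hs
    rw [interior_Ioo] at hs
    exact (hderiv s hs).differentiableAt.differentiableWithinAt
  · intro s hs
    rw [interior_Ioo] at hs
    rw [(hderiv s hs).deriv]
    apply div_nonneg _ (sq_nonneg _)
    have hs0 : s ≠ 0 := ne_of_gt hs.1
    have e3 : s * s^(a-1-1) = s^(a-1) := by
      nth_rewrite 1 [← Real.rpow_one s]
      rw [← Real.rpow_add hs.1]; ring_nf
    have e4 : s * s^(a-1) = s^a := by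
      nth_rewrite 1 [← Real.rpow_one s]
      rw [← Real.rpow_add hs.1]; ring_nf
    have hd := diamond ha ha1 hs.1 hs.2
    rw [show (0:ℝ) ≤ (a*((a-1)*s^(a-1-1)) + (1-a)*(a*s^(a-1))) * Real.log s
          - (a*s^(a-1) - 1 + (1-a)*s^a) * s⁻¹
        ↔ 0 ≤ s * ((a*((a-1)*s^(a-1-1)) + (1-a)*(a*s^(a-1))) * Real.log s
          - (a*s^(a-1) - 1 + (1-a)*s^a) * s⁻¹) from (mul_nonneg_iff_of_pos_left hs.1).symm]
    have expand : s * ((a*((a-1)*s^(a-1-1)) + (1-a)*(a*s^(a-1))) * Real.log s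
          - (a*s^(a-1) - 1 + (1-a)*s^a) * s⁻¹)
        = (a*(a-1)*(s*s^(a-1-1)) + (1-a)*a*(s*s^(a-1))) * Real.log s
          - (a*s^(a-1) - 1 + (1-a)*s^a) * (s*s⁻¹) := by ring
    rw [expand, e3, e4, mul_inv_cancel₀ hs0, mul_one]
    have : (a*(a-1)*s^(a-1) + (1-a)*a*s^a) * Real.log s
        = a*(1-a)*(s^a - s^(a-1))*Real.log s := by ring
    rw [this]
    linarith

lemma sigma_le {a ξ μ V : ℝ} (ha : 0 < a) (ha1 : a < 1) (hxi : 0 < ξ) (hxi1 : ξ < 1)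
    (hmu : μ = (a*ξ^(a-1) - 1 + (1-a)*ξ^a)/Real.log ξ)
    (hV : (1-ξ)*V = μ*(-((1-ξ)*Real.log (1-ξ)) - ξ*Real.log ξ) + (ξ^a - ξ)) :
    ∀ t : ℝ, 0 < t → t < 1 →
      (μ*(-(t*Real.log t) - (1-t)*Real.log (1-t)) + ((1-t)^a - (1-t)))/t ≤ V := by
  set σ : ℝ → ℝ :=
    fun t => (μ*(-(t*Real.log t) - (1-t)*Real.log (1-t)) + ((1-t)^a - (1-t)))/t with hσdef
  have hsub : ∀ w : ℝ, HasDerivAt (fun u : ℝ => 1 - u) (-1) w := fun w =>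
    (hasDerivAt_id w).const_sub 1
  have hder : ∀ t ∈ Ioo (0:ℝ) 1, HasDerivAt σ
      ((μ*Real.log (1-t) + (1 - a*(t*(1-t)^(a-1)) - (1-t)^a))/t^2) t := by
    intro t ht
    have ht0 : t ≠ 0 := ne_of_gt ht.1
    have h1t : (0:ℝ) < 1 - t := by linarith [ht.2]
    have hm1 : HasDerivAt (fun t : ℝ => t*Real.log t) (Real.log t + 1) t :=
      Real.hasDerivAt_mul_log ht0
    have hm2 : HasDerivAt (fun t : ℝ => (1-t)*Real.log (1-t)) ((Real.log (1-t) + 1)*(-1)) t :=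
      (Real.hasDerivAt_mul_log h1t.ne').comp t (hsub t)
    have hm3 : HasDerivAt (fun t : ℝ => (1-t)^a) (a*(1-t)^(a-1)*(-1)) t :=
      (Real.hasDerivAt_rpow_const (Or.inl h1t.ne')).comp t (hsub t)
    have hnum : HasDerivAt
        (fun t : ℝ => μ*(-(t*Real.log t) - (1-t)*Real.log (1-t)) + ((1-t)^a - (1-t)))
        (μ*(-(Real.log t + 1) - (Real.log (1-t) + 1)*(-1)) + (a*(1-t)^(a-1)*(-1) - (-1))) t :=
      ((hm1.neg.sub hm2).const_mul μ).add (hm3.sub (hsub t))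
    have hdiv := hnum.div (hasDerivAt_id t) ht0
    refine hdiv.congr_deriv ?_
    rw [div_eq_div_iff (by positivity) (by positivity)]
    simp only [id_eq]
    ring
  have e4 : ∀ s : ℝ, 0 < s → s * s^(a-1) = s^a := by
    intro s hs
    nth_rewrite 1 [← Real.rpow_one s]
    rw [← Real.rpow_add hs]; ring_nf
  have numid : ∀ t : ℝ, 0 < t → t < 1 →
      μ*Real.log (1-t) + (1 - a*(t*(1-t)^(a-1)) - (1-t)^a)
      = μ*Real.log (1-t) - (a*(1-t)^(a-1) - 1 + (1-a)*(1-t)^a) := by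
    intro t ht0 ht1
    have := e4 (1-t) (by linarith)
    linear_combination a * this
  have hmono : MonotoneOn σ (Ioc (0:ℝ) (1-ξ)) := by
    apply monotoneOn_of_deriv_nonneg (convex_Ioc _ _)
    · intro t ht
      exact (hder t ⟨ht.1, by linarith [ht.2]⟩).continuousAt.continuousWithinAt
    · intro t ht
      rw [interior_Ioc] at ht
      exact (hder t ⟨ht.1, by linarith [ht.2]⟩).differentiableAt.differentiableWithinAt
    · intro t ht
      rw [interior_Ioc] at ht
      have htI : t ∈ Ioo (0:ℝ) 1 := ⟨ht.1, by linarith [ht.2]⟩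
      rw [(hder t htI).deriv]
      apply div_nonneg _ (sq_nonneg _)
      rw [numid t htI.1 htI.2]
      have hsI : (1-t) ∈ Ioo (0:ℝ) 1 := ⟨by linarith [htI.2], by linarith [htI.1]⟩
      have hlog : Real.log (1-t) < 0 := Real.log_neg hsI.1 hsI.2
      have hcmp := nuMono ha ha1 (show ξ ∈ Ioo (0:ℝ) 1 from ⟨hxi, hxi1⟩) hsI
        (by linarith [ht.2] : ξ ≤ 1 - t)
      simp only at hcmp
      rw [← hmu, le_div_iff_of_neg hlog] at hcmp
      linarith
  have hanti : AntitoneOn σ (Ico (1-ξ) 1) := by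
    apply antitoneOn_of_deriv_nonpos (convex_Ico _ _)
    · intro t ht
      exact (hder t ⟨by linarith [ht.1], ht.2⟩).continuousAt.continuousWithinAt
    · intro t ht
      rw [interior_Ico] at ht
      exact (hder t ⟨by linarith [ht.1], ht.2⟩).differentiableAt.differentiableWithinAt
    · intro t ht
      rw [interior_Ico] at ht
      have htI : t ∈ Ioo (0:ℝ) 1 := ⟨by linarith [ht.1], ht.2⟩
      rw [(hder t htI).deriv]
      apply div_nonpos_of_nonpos_of_nonneg _ (sq_nonneg _)
      rw [numid t htI.1 htI.2]
      have hsI : (1-t) ∈ Ioo (0:ℝ) 1 := ⟨by linarith [htI.2], by linarith [htI.1]⟩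
      have hlog : Real.log (1-t) < 0 := Real.log_neg hsI.1 hsI.2
      have hcmp := nuMono ha ha1 hsI (show ξ ∈ Ioo (0:ℝ) 1 from ⟨hxi, hxi1⟩)
        (by linarith [ht.1] : 1 - t ≤ ξ)
      simp only at hcmp
      rw [← hmu, div_le_iff_of_neg hlog] at hcmp
      linarith
  have hσξ : σ (1-ξ) = V := by
    show (μ*(-((1-ξ)*Real.log (1-ξ)) - (1-(1-ξ))*Real.log (1-(1-ξ)))
      + ((1-(1-ξ))^a - (1-(1-ξ))))/(1-ξ) = V
    rw [show (1:ℝ)-(1-ξ) = ξ by ring]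
    rw [div_eq_iff (by linarith : (1:ℝ)-ξ ≠ 0)]
    linarith [hV]
  intro t ht0 ht1
  rcases le_or_gt t (1-ξ) with h | h
  · have := hmono (show t ∈ Ioc (0:ℝ) (1-ξ) from ⟨ht0, h⟩)
      (show (1-ξ) ∈ Ioc (0:ℝ) (1-ξ) from ⟨by linarith, le_refl _⟩) h
    rw [hσξ] at this
    exact this
  · have := hanti (show (1-ξ) ∈ Ico (1-ξ) 1 from ⟨le_refl _, by linarith⟩)
      (show t ∈ Ico (1-ξ) 1 from ⟨h.le, ht1⟩) h.le
    rw [hσξ] at this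
    exact this

lemma Vnonneg {a ξ μ V : ℝ} (ha : 0 < a) (ha1 : a < 1) (hxi : 0 < ξ) (hxi1 : ξ < 1)
    (hmu : μ = (a*ξ^(a-1) - 1 + (1-a)*ξ^a)/Real.log ξ)
    (hV : (1-ξ)*V = μ*(-((1-ξ)*Real.log (1-ξ)) - ξ*Real.log ξ) + (ξ^a - ξ)) :
    0 ≤ V := by
  have hcont : ContinuousAt (fun t : ℝ =>
      (μ*(Real.negMulLog t + Real.negMulLog (1-t)) + ((1-t)^a - (1-t)))/t) 1 := by
    apply ContinuousAt.div _ continuousAt_id (by norm_num)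
    apply ContinuousAt.add
    · exact continuousAt_const.mul (Real.continuous_negMulLog.add
        (Real.continuous_negMulLog.comp (continuous_const.sub continuous_id))).continuousAt
    · apply ContinuousAt.sub _ (continuous_const.sub continuous_id).continuousAt
      apply ContinuousAt.rpow_const (continuous_const.sub continuous_id).continuousAt
      right; exact ha.le
  have hval : (fun t : ℝ =>
      (μ*(Real.negMulLog t + Real.negMulLog (1-t)) + ((1-t)^a - (1-t)))/t) 1 = 0 := by
    simp [Real.negMulLog, Real.zero_rpow (ne_of_gt ha)]
  have hten : Filter.Tendsto (fun t : ℝ =>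
      (μ*(Real.negMulLog t + Real.negMulLog (1-t)) + ((1-t)^a - (1-t)))/t)
      (nhdsWithin 1 (Iio 1)) (nhds 0) := by
    rw [← hval]
    exact hcont.continuousWithinAt.tendsto
  have hev : ∀ᶠ t in nhdsWithin 1 (Iio (1:ℝ)),
      (fun t : ℝ =>
        (μ*(Real.negMulLog t + Real.negMulLog (1-t)) + ((1-t)^a - (1-t)))/t) t ≤ V := by
    filter_upwards [Ioo_mem_nhdsLT_of_mem
      (show (1:ℝ) ∈ Ioc (1-ξ) 1 from ⟨by linarith, le_refl _⟩)] with t ht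
    have ht0 : 0 < t := by
      rcases ht with ⟨h1, h2⟩
      linarith
    have := sigma_le ha ha1 hxi hxi1 hmu hV t ht0 ht.2
    show (μ*(Real.negMulLog t + Real.negMulLog (1-t)) + ((1-t)^a - (1-t)))/t ≤ V
    have e : (μ*(Real.negMulLog t + Real.negMulLog (1-t)) + ((1-t)^a - (1-t)))/t
        = (μ*(-(t*Real.log t) - (1-t)*Real.log (1-t)) + ((1-t)^a - (1-t)))/t := by
      simp only [Real.negMulLog_eq_neg]
      ring
    rw [e]
    exact this
  exact le_of_tendsto hten hev

lemma P2 {a ξ μ V : ℝ} (ha : 0 < a) (ha1 : a < 1) (hxi : 0 < ξ) (hxi1 : ξ < 1)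
    (hmu : μ = (a*ξ^(a-1) - 1 + (1-a)*ξ^a)/Real.log ξ)
    (hV : (1-ξ)*V = μ*(-((1-ξ)*Real.log (1-ξ)) - ξ*Real.log ξ) + (ξ^a - ξ)) :
    ∀ t : ℝ, 0 ≤ t → t ≤ 1 →
      μ*(-(t*Real.log t) - (1-t)*Real.log (1-t)) + ((1-t)^a - (1-t)) ≤ t*V := by
  intro t ht0 ht1
  rcases eq_or_lt_of_le ht0 with h0 | h0
  · rw [← h0]
    simp [Real.log_one, Real.one_rpow]
  rcases eq_or_lt_of_le ht1 with h1 | h1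
  · rw [h1]
    have := Vnonneg ha ha1 hxi hxi1 hmu hV
    simp only [sub_self, Real.log_zero, mul_zero, zero_mul, Real.log_one, neg_zero, sub_zero,
      Real.zero_rpow (ne_of_gt ha), one_mul, zero_sub, neg_mul]
    nlinarith [this]
  · have := sigma_le ha ha1 hxi hxi1 hmu hV t h0 h1
    rw [div_le_iff₀ h0] at this
    linarith

lemma step_ineq {a μ V : ℝ} (ha : 0 < a) (ha1 : a < 1)
    (hP2 : ∀ t : ℝ, 0 ≤ t → t ≤ 1 →
      μ*(-(t*Real.log t) - (1-t)*Real.log (1-t)) + ((1-t)^a - (1-t)) ≤ t*V)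
    {c y₀ y₁ m₂ : ℝ} (hc : 0 ≤ c) (hy₀ : 0 ≤ y₀) (hy₁ : 0 ≤ y₁) (hm₂ : 0 ≤ m₂) :
    (c+2)*((y₁+m₂)^(1-a)*m₂^a - m₂) - μ*(y₁*Real.log y₁) - μ*(m₂*Real.log m₂) + m₂*V
      + (c+1)*(y₁^a*y₀^(1-a) - y₁)
    ≤ (c+1)*((y₀+(y₁+m₂))^(1-a)*(y₁+m₂)^a - (y₁+m₂))
      - μ*((y₁+m₂)*Real.log (y₁+m₂)) + (y₁+m₂)*V := by
  rcases eq_or_lt_of_le (add_nonneg hy₁ hm₂) with hm | hm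
  · have h1 : y₁ = 0 := by linarith
    have h2 : m₂ = 0 := by linarith
    simp [h1, h2, Real.zero_rpow (ne_of_gt ha), Real.zero_rpow (by linarith : (1:ℝ)-a ≠ 0)]
  · have hm₁ : (0:ℝ) < y₁ + m₂ := hm
    -- Hölder part
    have ineqA : (y₁+m₂)^(1-a)*m₂^a + y₀^(1-a)*y₁^a ≤ (y₀+(y₁+m₂))^(1-a)*(y₁+m₂)^a := by
      have := holder2 ha ha1 (u := y₁+m₂) (v := m₂) (U := y₀) (V := y₁) hm₁.le hm₂ hy₀ hy₁
      rwa [show y₁+m₂+y₀ = y₀+(y₁+m₂) from by ring, show m₂+y₁ = y₁+m₂ from by ring] at this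
    have ineqA' := mul_le_mul_of_nonneg_left ineqA (show (0:ℝ) ≤ c+1 by linarith)
    -- entropy part
    set t := y₁/(y₁+m₂) with htdef
    have ht0 : 0 ≤ t := div_nonneg hy₁ hm₁.le
    have ht1 : t ≤ 1 := by
      rw [htdef, div_le_one hm₁]
      linarith
    have hB := hP2 t ht0 ht1
    have hBm := mul_le_mul_of_nonneg_left hB hm₁.le
    have e1 : (y₁+m₂)*(1-t) = m₂ := by
      rw [htdef]
      field_simp
      ring
    have e2 : 1-t = m₂/(y₁+m₂) := by
      rw [htdef]
      field_simp
      ring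
    have e3 : (y₁+m₂)*(1-t)^a = (y₁+m₂)^(1-a)*m₂^a := by
      rw [e2, Real.div_rpow hm₂ hm₁.le]
      rw [show (y₁+m₂)^(1-a) = (y₁+m₂)^(1:ℝ)/(y₁+m₂)^a from by
        rw [← Real.rpow_sub hm₁]]
      rw [Real.rpow_one]
      ring
    have logmul : ∀ u : ℝ, 0 ≤ u → ((y₁+m₂)*u)*Real.log ((y₁+m₂)*u)
        = (y₁+m₂)*(u*Real.log u) + ((y₁+m₂)*u)*Real.log (y₁+m₂) := by
      intro u hu
      rcases eq_or_lt_of_le hu with h | h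
      · rw [← h]
        simp
      · rw [Real.log_mul hm₁.ne' h.ne']
        ring
    have e4 : (y₁+m₂)*(t*Real.log t) = y₁*Real.log y₁ - y₁*Real.log (y₁+m₂) := by
      have h := logmul t ht0
      have ht' : (y₁+m₂)*t = y₁ := by
        rw [htdef]
        field_simp
      rw [ht'] at h
      linarith
    have e5 : (y₁+m₂)*((1-t)*Real.log (1-t)) = m₂*Real.log m₂ - m₂*Real.log (y₁+m₂) := by
      have h := logmul (1-t) (by linarith)
      rw [e1] at h
      linarith
    have e6 : (y₁+m₂)*(t*V) = y₁*V := by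
      rw [htdef]
      field_simp
    have expand : (y₁+m₂) * (μ*(-(t*Real.log t) - (1-t)*Real.log (1-t)) + ((1-t)^a - (1-t)))
        = μ*(-((y₁+m₂)*(t*Real.log t)) - ((y₁+m₂)*((1-t)*Real.log (1-t))))
          + ((y₁+m₂)*(1-t)^a - (y₁+m₂)*(1-t)) := by ring
    rw [expand, e1, e3, e4, e5, e6] at hBm
    -- hBm : μ*(-(y₁logy₁ - y₁logm₁) - (m₂logm₂ - m₂logm₁)) + ((y₁+m₂)^(1-a)m₂^a - m₂) ≤ y₁V
    have hid1 : μ*(-(y₁*Real.log y₁ - y₁*Real.log (y₁+m₂))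
          - (m₂*Real.log m₂ - m₂*Real.log (y₁+m₂)))
        = -(μ*(y₁*Real.log y₁)) - μ*(m₂*Real.log m₂) + μ*((y₁+m₂)*Real.log (y₁+m₂)) := by
      ring
    rw [hid1] at hBm
    linarith

lemma main_ind {a μ V : ℝ} (ha : 0 < a) (ha1 : a < 1)
    (hP2 : ∀ t : ℝ, 0 ≤ t → t ≤ 1 →
      μ*(-(t*Real.log t) - (1-t)*Real.log (1-t)) + ((1-t)^a - (1-t)) ≤ t*V) :
    ∀ N : ℕ, ∀ c : ℝ, 0 ≤ c → ∀ y : ℕ → ℝ, (∀ n, 0 ≤ y n) →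
    (∑ k ∈ Finset.range N, ((k:ℝ)+1+c) * ((y (k+1))^a * (y k)^(1-a) - y (k+1)))
      - μ * ∑ n ∈ Finset.range (N+1), (y n) * Real.log (y n)
    ≤ (c+1) * ((∑ n ∈ Finset.range (N+1), y n)^(1-a)
        * (∑ k ∈ Finset.range N, y (k+1))^a - ∑ k ∈ Finset.range N, y (k+1))
      - μ * ((y 0) * Real.log (y 0))
      - μ * ((∑ k ∈ Finset.range N, y (k+1)) * Real.log (∑ k ∈ Finset.range N, y (k+1)))
      + (∑ k ∈ Finset.range N, y (k+1)) * V := by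
  intro N
  induction N with
  | zero =>
    intro c hc y hy
    simp [Real.zero_rpow (ne_of_gt ha)]
  | succ N ih =>
    intro c hc y hy
    have ihy := ih (c+1) (by linarith) (fun k => y (k+1)) (fun n => hy (n+1))
    -- sums notation
    set m₁ := ∑ k ∈ Finset.range (N+1), y (k+1) with hm₁def
    set m₂ := ∑ k ∈ Finset.range N, y (k+2) with hm₂def
    have hm₁ : m₁ = y 1 + m₂ := by
      rw [hm₁def, hm₂def, Finset.sum_range_succ']
      ring
    have hm₂0 : 0 ≤ m₂ := Finset.sum_nonneg (fun k _ => hy (k+2))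
    have hmass : ∑ n ∈ Finset.range (N+2), y n = y 0 + m₁ := by
      rw [hm₁def, Finset.sum_range_succ']
      ring
    have hF : ∑ k ∈ Finset.range (N+1), ((k:ℝ)+1+c) * ((y (k+1))^a * (y k)^(1-a) - y (k+1))
        = (∑ k ∈ Finset.range N, ((k:ℝ)+1+(c+1)) * ((y (k+1+1))^a * (y (k+1))^(1-a) - y (k+1+1)))
          + ((0:ℝ)+1+c) * ((y 1)^a * (y 0)^(1-a) - y 1) := by
      rw [Finset.sum_range_succ']
      congr 1
      · apply Finset.sum_congr rfl
        intro k _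
        push_cast
        ring
      · norm_num
    have hS : ∑ n ∈ Finset.range (N+2), (y n) * Real.log (y n)
        = (∑ n ∈ Finset.range (N+1), (y (n+1)) * Real.log (y (n+1))) + (y 0) * Real.log (y 0) := by
      rw [Finset.sum_range_succ']
    have hstep := step_ineq ha ha1 hP2 (c := c) (y₀ := y 0) (y₁ := y 1) (m₂ := m₂)
      hc (hy 0) (hy 1) hm₂0
    rw [← hm₁] at hstep
    -- put together
    rw [hF, hS, hmass]
    have hihy : (∑ k ∈ Finset.range N, ((k:ℝ)+1+(c+1)) * ((y (k+1+1))^a * (y (k+1))^(1-a) - y (k+1+1)))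
        - μ * ∑ n ∈ Finset.range (N+1), (y (n+1)) * Real.log (y (n+1))
      ≤ (c+1+1) * (m₁^(1-a) * m₂^a - m₂)
        - μ * ((y 1) * Real.log (y 1))
        - μ * (m₂ * Real.log m₂)
        + m₂ * V := ihy
    have h21 : (c+1+1) = c+2 := by ring
    rw [h21] at hihy
    linarith

theorem logSobolev_attenuator (a z : ℝ) (ha : 0 < a) (ha1 : a < 1)
    (hz : 0 < z) (hz1 : z < 1) (N : ℕ) (x : ℕ → ℝ) (hx : ∀ n, 0 ≤ x n)
    (hsum : ∑ n ∈ Finset.range (N + 1), x n ^ (1 / a) = 1) :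
    Fa a N x + mu z a * Sa a N x ≤
      ((z ^ (1 / a)) ^ a - z ^ (1 / a)) / (1 - z ^ (1 / a)) +
        mu z a * (-Real.log (1 - z ^ (1 / a)) -
          z ^ (1 / a) * Real.log (z ^ (1 / a)) / (1 - z ^ (1 / a))) := by
  have ha0 : a ≠ 0 := ne_of_gt ha
  set ξ : ℝ := z ^ (1/a) with hξdef
  have hxi0 : 0 < ξ := Real.rpow_pos_of_pos hz _
  have hxi1 : ξ < 1 := Real.rpow_lt_one hz.le hz1 (by positivity)
  have h1ξ : (0:ℝ) < 1 - ξ := by linarith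
  have hlogz : Real.log z < 0 := Real.log_neg hz hz1
  set μ : ℝ := mu z a with hμdef
  set V : ℝ := (ξ ^ a - ξ) / (1 - ξ) + μ * (-Real.log (1 - ξ) - ξ * Real.log ξ / (1 - ξ))
    with hVdef
  -- basic rpow identities
  have hξa : ξ ^ a = z := by
    rw [hξdef, ← Real.rpow_mul hz.le]
    rw [show 1/a*a = 1 from by field_simp]
    exact Real.rpow_one z
  have hξa1 : ξ ^ (a-1) = z ^ ((a-1)/a) := by
    rw [hξdef, ← Real.rpow_mul hz.le]
    congr 1
    field_simp
  have hlogξ : Real.log ξ = (1/a) * Real.log z := by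
    rw [hξdef, Real.log_rpow hz]
  have hlogz2 : Real.log z = a * Real.log ξ := by
    rw [hlogξ]
    field_simp
  have hmu : μ = (a*ξ^(a-1) - 1 + (1-a)*ξ^a)/Real.log ξ := by
    rw [hμdef]
    unfold mu
    rw [← hξa1, hlogz2, ← hξa]
    exact mul_div_mul_left _ _ ha0
  have hV : (1-ξ)*V = μ*(-((1-ξ)*Real.log (1-ξ)) - ξ*Real.log ξ) + (ξ^a - ξ) := by
    rw [hVdef]
    field_simp
    ring
  have hP2 := P2 ha ha1 hxi0 hxi1 hmu hV
  -- the distribution p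
  set p : ℕ → ℝ := fun n => (x n) ^ (1/a) with hpdef
  have hp : ∀ n, 0 ≤ p n := fun n => Real.rpow_nonneg (hx n) _
  have hpa : ∀ n, (p n) ^ a = x n := by
    intro n
    rw [hpdef, ← Real.rpow_mul (hx n)]
    rw [show 1/a*a = 1 from by field_simp]
    exact Real.rpow_one _
  have hp1a : ∀ n, (p n) ^ (1-a) = (x n) ^ ((1-a)/a) := by
    intro n
    rw [hpdef, ← Real.rpow_mul (hx n)]
    congr 1
    field_simp
  have habs : ∀ n, |x n| = x n := fun n => abs_of_nonneg (hx n)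
  have hmain := main_ind ha ha1 hP2 N 0 (le_refl 0) p hp
  -- identify LHS
  have hFa : Fa a N x = ∑ k ∈ Finset.range N, ((k:ℝ)+1+0) * ((p (k+1))^a * (p k)^(1-a) - p (k+1)) := by
    rw [Fa, ← Finset.Ico_add_one_right_eq_Icc, Finset.sum_Ico_eq_sum_range]
    apply Finset.sum_congr (by norm_num)
    intro k _
    have e1 : 1 + k = k + 1 := Nat.add_comm 1 k
    rw [e1]
    have e2 : k + 1 - 1 = k := rfl
    rw [e2]
    rw [habs, habs, hpa, hp1a]
    push_cast
    ring
  have hSa : Sa a N x = -∑ n ∈ Finset.range (N+1), (p n) * Real.log (p n) := by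
    rw [Sa]
    congr 1
    apply Finset.sum_congr rfl
    intro n _
    rw [habs]
  set m' : ℝ := ∑ k ∈ Finset.range N, p (k+1) with hm'def
  have hm'0 : 0 ≤ m' := Finset.sum_nonneg (fun k _ => hp (k+1))
  have hmass : p 0 + m' = 1 := by
    rw [hm'def, ← hsum]
    rw [Finset.sum_range_succ']
    ring
  have hp0le : p 0 ≤ 1 := by linarith
  have hmass2 : (∑ n ∈ Finset.range (N+1), p n) = 1 := hsum
  rw [hmass2] at hmain
  have hP2p0 := hP2 (p 0) (hp 0) hp0le
  have h1p0 : 1 - p 0 = m' := by linarith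
  rw [h1p0] at hP2p0
  -- hP2p0 : μ*(-(p0 log p0) - m' log m') + (m'^a - m') ≤ p0 * V
  have hid : μ*(-(p 0*Real.log (p 0)) - m'*Real.log m')
      = -(μ*(p 0*Real.log (p 0))) - μ*(m'*Real.log m') := by ring
  rw [hid] at hP2p0
  have hfinal : (0+1) * ((1:ℝ)^(1-a) * m'^a - m') - μ*(p 0*Real.log (p 0))
      - μ*(m'*Real.log m') + m'*V ≤ V := by
    rw [Real.one_rpow]
    have hVsplit : p 0 * V + m' * V = V := by linear_combination V * hmass
    linarith [hP2p0, hVsplit]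
  rw [hFa, hSa]
  have : Fa a N x + μ * (-∑ n ∈ Finset.range (N+1), (p n) * Real.log (p n))
      = Fa a N x - μ * ∑ n ∈ Finset.range (N+1), (p n) * Real.log (p n) := by ring
  calc (∑ k ∈ Finset.range N, ((k:ℝ)+1+0) * ((p (k+1))^a * (p k)^(1-a) - p (k+1)))
      + μ * (-∑ n ∈ Finset.range (N+1), (p n) * Real.log (p n))
      = (∑ k ∈ Finset.range N, ((k:ℝ)+1+0) * ((p (k+1))^a * (p k)^(1-a) - p (k+1)))
      - μ * ∑ n ∈ Finset.range (N+1), (p n) * Real.log (p n) := by ring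
    _ ≤ (0+1) * ((1:ℝ)^(1-a) * m'^a - m') - μ*(p 0*Real.log (p 0))
      - μ*(m'*Real.log m') + m'*V := hmain
    _ ≤ V := hfinal
end

section
/- Let 0 < a < 1, N ∈ ℕ, and let x = (x_0,…,x_N) ∈ ℝ^{N+1} satisfy ∑_{n=0}^N |x_n|^{1/a} = 1. Then F_a(x) ≤ 1 − a. -/
lemma young_aux (a : ℝ) (ha : 0 < a) (ha1 : a < 1) (u w : ℝ) (hu : 0 ≤ u) (hw : 0 ≤ w) :
    u * w ^ ((1 - a) / a) ≤ a * u ^ (1 / a) + (1 - a) * w ^ (1 / a) := by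
  have h := Real.geom_mean_le_arith_mean2_weighted ha.le (by linarith : (0:ℝ) ≤ 1 - a)
    (Real.rpow_nonneg hu (1 / a)) (Real.rpow_nonneg hw (1 / a)) (by ring)
  have h1 : (u ^ (1 / a)) ^ a = u := by
    rw [← Real.rpow_mul hu, one_div, inv_mul_cancel₀ ha.ne', Real.rpow_one]
  have h2 : (w ^ (1 / a)) ^ (1 - a) = w ^ ((1 - a) / a) := by
    rw [← Real.rpow_mul hw]
    congr 1
    field_simp
  rw [h1, h2] at h
  exact h

theorem Fa_le_one_sub (a : ℝ) (ha : 0 < a) (ha1 : a < 1) (N : ℕ) (x : ℕ → ℝ)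
    (hsum : ∑ n ∈ Finset.range (N + 1), |x n| ^ (1 / a) = 1) :
    Fa a N x ≤ 1 - a := by
  set v : ℕ → ℝ := fun n => |x n| ^ (1 / a) with hv
  have hv0 : ∀ n, 0 ≤ v n := fun n => Real.rpow_nonneg (abs_nonneg _) _
  have key : ∀ n ∈ Finset.Icc 1 N,
      (n : ℝ) * (x n * |x (n - 1)| ^ ((1 - a) / a) - |x n| ^ (1 / a))
        ≤ (1 - a) * ((n : ℝ) * (v (n - 1) - v n)) := by
    intro n hn
    have h1 : x n * |x (n - 1)| ^ ((1 - a) / a) ≤ |x n| * |x (n - 1)| ^ ((1 - a) / a) :=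
      mul_le_mul_of_nonneg_right (le_abs_self _) (Real.rpow_nonneg (abs_nonneg _) _)
    have h2 := young_aux a ha ha1 |x n| |x (n - 1)| (abs_nonneg _) (abs_nonneg _)
    have hn0 : (0 : ℝ) ≤ (n : ℝ) := Nat.cast_nonneg n
    have h3 := h1.trans h2
    nlinarith [mul_le_mul_of_nonneg_left h3 hn0]
  have hS : ∀ M : ℕ, ∑ n ∈ Finset.Icc 1 M, (n : ℝ) * (v (n - 1) - v n)
      = ∑ n ∈ Finset.range (M + 1), v n - ((M : ℝ) + 1) * v M := by
    intro M
    induction M with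
    | zero => simp
    | succ k ih =>
      rw [Finset.sum_Icc_succ_top (by omega), ih, Finset.sum_range_succ v (k + 1)]
      simp only [Nat.add_sub_cancel, Nat.succ_sub_one]
      push_cast
      ring
  calc Fa a N x ≤ ∑ n ∈ Finset.Icc 1 N, (1 - a) * ((n : ℝ) * (v (n - 1) - v n)) :=
        Finset.sum_le_sum key
    _ = (1 - a) * (∑ n ∈ Finset.range (N + 1), v n - ((N : ℝ) + 1) * v N) := by
        rw [← Finset.mul_sum, hS]
    _ ≤ (1 - a) * 1 := by
        apply mul_le_mul_of_nonneg_left _ (by linarith)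
        rw [hsum]
        nlinarith [hv0 N, (Nat.cast_nonneg N : (0:ℝ) ≤ (N:ℝ))]
    _ = 1 - a := mul_one _
end

section
/- Let 0 < a < 1, N ∈ ℕ, and let x = (x_0,…,x_N) ∈ ℝ^{N+1} have nonnegative components with ∑_{n=0}^N x_n^{1/a} = 1. Then there exists ξ ∈ [0,1) such that −∑_{n=0}^N x_n^{1/a} ln(x_n^{1/a}) = S(ξ) and F_a(x) ≤ (ξ^a − ξ)/(1−ξ), where (ξ^a − ξ)/(1−ξ) is interpreted as 0 when ξ = 0. -/
open Finset intervalIntegral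

/-- Shannon entropy of the geometric distribution with ratio `ξ`:
`S(ξ) = -ln(1-ξ) - ξ ln ξ / (1-ξ)` (with `S(0) = 0`). -/
noncomputable def geomEntropy (ξ : ℝ) : ℝ :=
  -Real.log (1 - ξ) - ξ * Real.log ξ / (1 - ξ)


lemma keyA {a : ℝ} (ha : 0 < a) (ha1 : a < 1) {s : ℝ} (hs : 0 < s) (hs1 : s < 1) :
    a * s ^ (a-1) + (1-a) * s ^ a - 1 ≤ a * (1-a) * s ^ (a-1) * (1-s) * (-Real.log s) := by
  have hmem : (0:ℝ) ∉ Set.uIcc s 1 := by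
    rw [Set.uIcc_of_le hs1.le]
    intro h
    exact absurd h.1 (by linarith)
  have I1 : ∫ t in s..(1:ℝ), t ^ (a-2) = (1 - s ^ (a-1)) / (a-1) := by
    rw [integral_rpow (Or.inr ⟨by intro h; linarith, hmem⟩),
      show a - 2 + 1 = a - 1 by ring, Real.one_rpow]
  have I2 : ∫ t in s..(1:ℝ), t ^ (a-1) = (1 - s ^ a) / a := by
    rw [integral_rpow (Or.inl (by linarith)), show a - 1 + 1 = a by ring, Real.one_rpow]
  have I3 : ∫ t in s..(1:ℝ), t⁻¹ = -Real.log s := by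
    rw [integral_inv hmem, Real.log_div one_ne_zero hs.ne', Real.log_one]
    ring
  have hi1 : IntervalIntegrable (fun t : ℝ => t ^ (a-2)) MeasureTheory.volume s 1 :=
    intervalIntegral.intervalIntegrable_rpow (Or.inr hmem)
  have hi2 : IntervalIntegrable (fun t : ℝ => t ^ (a-1)) MeasureTheory.volume s 1 :=
    intervalIntegral.intervalIntegrable_rpow (Or.inr hmem)
  have hi3 : IntervalIntegrable (fun t : ℝ => t⁻¹) MeasureTheory.volume s 1 :=
    intervalIntegral.intervalIntegrable_inv
      (fun x hx => by rw [Set.uIcc_of_le hs1.le] at hx; exact ne_of_gt (lt_of_lt_of_le hs hx.1))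
      continuousOn_id
  have hfi : IntervalIntegrable (fun t : ℝ => a * (1-a) * (t ^ (a-2) - t ^ (a-1)))
      MeasureTheory.volume s 1 := (hi1.sub hi2).const_mul _
  have hgi : IntervalIntegrable (fun t : ℝ => (a * (1-a) * s ^ (a-1) * (1-s)) * t⁻¹)
      MeasureTheory.volume s 1 := hi3.const_mul _
  have hpt : ∀ t ∈ Set.Icc s 1, a * (1-a) * (t ^ (a-2) - t ^ (a-1))
      ≤ (a * (1-a) * s ^ (a-1) * (1-s)) * t⁻¹ := by
    intro t ht
    have ht0 : 0 < t := lt_of_lt_of_le hs ht.1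
    have h1 : t ^ (a-2) - t ^ (a-1) = t ^ (a-1) * (1-t) * t⁻¹ := by
      rw [show a - 2 = (a-1) + (-1) by ring, Real.rpow_add ht0, Real.rpow_neg_one]
      field_simp
    rw [h1]
    have hL : t ^ (a-1) * (1-t) ≤ s ^ (a-1) * (1-s) :=
      mul_le_mul (Real.rpow_le_rpow_of_nonpos hs ht.1 (by linarith))
        (by linarith [ht.1]) (by linarith [ht.2]) (Real.rpow_pos_of_pos hs _).le
    calc a * (1-a) * (t ^ (a-1) * (1-t) * t⁻¹)
        = (a * (1-a) * t⁻¹) * (t ^ (a-1) * (1-t)) := by ring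
      _ ≤ (a * (1-a) * t⁻¹) * (s ^ (a-1) * (1-s)) :=
          mul_le_mul_of_nonneg_left hL (mul_nonneg (mul_nonneg ha.le (by linarith)) (inv_nonneg.mpr ht0.le))
      _ = (a * (1-a) * s ^ (a-1) * (1-s)) * t⁻¹ := by ring
  have hint := integral_mono_on hs1.le hfi hgi hpt
  rw [integral_const_mul, integral_const_mul, integral_sub hi1 hi2, I1, I2, I3] at hint
  have heq : a * (1-a) * ((1 - s ^ (a-1)) / (a-1) - (1 - s ^ a) / a)
      = a * s ^ (a-1) + (1-a) * s ^ a - 1 := by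
    have h1 : a - 1 ≠ 0 := by linarith
    have h2 : a ≠ 0 := ne_of_gt ha
    field_simp
    ring
  rw [heq] at hint
  linarith [hint]

lemma hasDerivAt_f {a s : ℝ} (hs : 0 < s) (hs1 : s < 1) :
    HasDerivAt (fun u : ℝ => (u ^ a - u) / (1 - u))
      ((a * s ^ (a-1) + (1-a) * s ^ a - 1) / (1-s)^2) s := by
  have hne : (1:ℝ) - s ≠ 0 := by linarith
  have hnum : HasDerivAt (fun u : ℝ => u ^ a - u) (a * s ^ (a-1) - 1) s := by
    exact (Real.hasDerivAt_rpow_const (p := a) (Or.inl hs.ne')).sub (hasDerivAt_id' s)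
  have hden : HasDerivAt (fun u : ℝ => 1 - u) (-1) s := by
    simpa using (hasDerivAt_id s).const_sub 1
  have h := hnum.div hden hne
  refine h.congr_deriv ?_
  have hss : s ^ a = s ^ (a-1) * s := by
    have h2 := Real.rpow_add hs (a-1) 1
    rw [Real.rpow_one] at h2
    rw [← h2]; norm_num
  rw [div_eq_div_iff (by positivity) (by positivity)]
  rw [hss]
  ring

lemma hasDerivAt_S {s : ℝ} (hs : 0 < s) (hs1 : s < 1) :
    HasDerivAt geomEntropy ((-Real.log s) / (1-s)^2) s := by
  have hne : (1:ℝ) - s ≠ 0 := by linarith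
  have hden : HasDerivAt (fun u : ℝ => 1 - u) (-1) s := by
    simpa using (hasDerivAt_id s).const_sub 1
  have h1 : HasDerivAt (fun u : ℝ => Real.log (1 - u)) ((-1) / (1 - s)) s :=
    hden.log hne
  have h2 : HasDerivAt (fun u : ℝ => u * Real.log u) (1 * Real.log s + s * s⁻¹) s :=
    (hasDerivAt_id s).mul (Real.hasDerivAt_log hs.ne')
  have h3 := h2.div hden hne
  have h := h1.neg.sub h3
  refine h.congr_deriv ?_
  field_simp
  ring

lemma hasDerivAt_rho {a s : ℝ} (hs : 0 < s) (hs1 : s < 1) :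
    HasDerivAt (fun u : ℝ => (a * u ^ (a-1) + (1-a) * u ^ a - 1) / (-Real.log u))
      (((a * ((a-1) * s ^ (a-2)) + (1-a) * (a * s ^ (a-1))) * (-Real.log s)
        - (a * s ^ (a-1) + (1-a) * s ^ a - 1) * (-s⁻¹)) / (-Real.log s)^2) s := by
  have hlog : Real.log s < 0 := Real.log_neg hs hs1
  have hnum : HasDerivAt (fun u : ℝ => a * u ^ (a-1) + (1-a) * u ^ a - 1)
      (a * ((a-1) * s ^ (a-1-1)) + (1-a) * (a * s ^ (a-1))) s := by
    exact (((Real.hasDerivAt_rpow_const (p := a-1) (Or.inl hs.ne')).const_mul a).add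
      ((Real.hasDerivAt_rpow_const (p := a) (Or.inl hs.ne')).const_mul (1-a))).sub_const 1
  have hden : HasDerivAt (fun u : ℝ => -Real.log u) (-s⁻¹) s := (Real.hasDerivAt_log hs.ne').neg
  rw [show a - 1 - 1 = a - 2 by ring] at hnum
  exact hnum.div hden (by linarith)

lemma rho_anti {a : ℝ} (ha : 0 < a) (ha1 : a < 1) :
    AntitoneOn (fun u : ℝ => (a * u ^ (a-1) + (1-a) * u ^ a - 1) / (-Real.log u))
      (Set.Ioo 0 1) := by
  have hderiv : ∀ u ∈ Set.Ioo (0:ℝ) 1,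
      HasDerivAt (fun u : ℝ => (a * u ^ (a-1) + (1-a) * u ^ a - 1) / (-Real.log u))
        (((a * ((a-1) * u ^ (a-2)) + (1-a) * (a * u ^ (a-1))) * (-Real.log u)
          - (a * u ^ (a-1) + (1-a) * u ^ a - 1) * (-u⁻¹)) / (-Real.log u)^2) u :=
    fun u hu => hasDerivAt_rho hu.1 hu.2
  apply antitoneOn_of_deriv_nonpos (convex_Ioo 0 1)
  · exact fun u hu => ((hderiv u hu).differentiableAt).continuousAt.continuousWithinAt
  · rw [interior_Ioo]
    exact fun u hu => ((hderiv u hu).differentiableAt).differentiableWithinAt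
  · rw [interior_Ioo]
    intro u hu
    rw [(hderiv u hu).deriv]
    have hu0 := hu.1
    have hu1 := hu.2
    have hlog : Real.log u < 0 := Real.log_neg hu0 hu1
    have hL : 0 < -Real.log u := by linarith
    apply div_nonpos_of_nonpos_of_nonneg _ (by positivity)
    -- numerator ≤ 0
    have hpow : u ^ (a-2) * u = u ^ (a-1) := by
      rw [show a - 1 = a - 2 + 1 by ring, Real.rpow_add hu0, Real.rpow_one]
    have hpow5 : u ^ (a-1) * u⁻¹ = u ^ (a-2) := by
      rw [← hpow]
      field_simp
    have hkey := keyA ha ha1 hu0 hu1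
    have h6 : (a * u ^ (a-1) + (1-a) * u ^ a - 1) * u⁻¹
        ≤ a * (1-a) * u ^ (a-2) * (1-u) * (-Real.log u) := by
      calc (a * u ^ (a-1) + (1-a) * u ^ a - 1) * u⁻¹
          ≤ (a * (1-a) * u ^ (a-1) * (1-u) * (-Real.log u)) * u⁻¹ := by
            apply mul_le_mul_of_nonneg_right hkey (inv_nonneg.mpr hu0.le)
        _ = a * (1-a) * (u ^ (a-1) * u⁻¹) * (1-u) * (-Real.log u) := by ring
        _ = a * (1-a) * u ^ (a-2) * (1-u) * (-Real.log u) := by rw [hpow5]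
    have h7 : (a * ((a-1) * u ^ (a-2)) + (1-a) * (a * u ^ (a-1))) * (-Real.log u)
        + a * (1-a) * u ^ (a-2) * (1-u) * (-Real.log u) = 0 := by
      have : a * ((a-1) * u ^ (a-2)) + (1-a) * (a * u ^ (a-1))
          + a * (1-a) * u ^ (a-2) * (1-u) = 0 := by
        linear_combination (-(a * (1-a))) * hpow
      nlinarith [this, hL]
    nlinarith [h6, h7]

lemma contS : ContinuousOn geomEntropy (Set.Iio (1:ℝ)) := by
  have hne : ∀ ξ ∈ Set.Iio (1:ℝ), 1 - ξ ≠ 0 := fun ξ hξ => by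
    simp only [Set.mem_Iio] at hξ; intro h; linarith
  unfold geomEntropy
  apply ContinuousOn.sub
  · exact (ContinuousOn.log (by fun_prop) hne).neg
  · exact ContinuousOn.div (Real.continuous_mul_log.continuousOn) (by fun_prop) hne

lemma contf {a : ℝ} (ha : 0 < a) :
    ContinuousOn (fun u : ℝ => (u ^ a - u) / (1 - u)) (Set.Iio (1:ℝ)) := by
  have hne : ∀ ξ ∈ Set.Iio (1:ℝ), 1 - ξ ≠ 0 := fun ξ hξ => by
    simp only [Set.mem_Iio] at hξ; intro h; linarith
  apply ContinuousOn.div _ (by fun_prop) hne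
  apply ContinuousOn.sub _ continuousOn_id
  exact fun u _ => (Real.continuousAt_rpow_const u a (Or.inr ha.le)).continuousWithinAt

lemma phi_max {a ξ s : ℝ} (ha : 0 < a) (ha1 : a < 1) (hξ0 : 0 < ξ) (hξ1 : ξ < 1)
    (hs0 : 0 ≤ s) (hs1 : s < 1) :
    (s ^ a - s) / (1 - s)
      - ((a * ξ ^ (a-1) + (1-a) * ξ ^ a - 1) / (-Real.log ξ)) * geomEntropy s
    ≤ (ξ ^ a - ξ) / (1 - ξ)
      - ((a * ξ ^ (a-1) + (1-a) * ξ ^ a - 1) / (-Real.log ξ)) * geomEntropy ξ := by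
  set μ : ℝ := (a * ξ ^ (a-1) + (1-a) * ξ ^ a - 1) / (-Real.log ξ) with hμ_def
  set Φ : ℝ → ℝ := fun u => (u ^ a - u) / (1 - u) - μ * geomEntropy u with hΦ_def
  have hξlog : 0 < -Real.log ξ := by
    have := Real.log_neg hξ0 hξ1; linarith
  have hΦderiv : ∀ u ∈ Set.Ioo (0:ℝ) 1,
      HasDerivAt Φ ((a * u ^ (a-1) + (1-a) * u ^ a - 1 + μ * Real.log u) / (1-u)^2) u := by
    intro u hu
    have h := (hasDerivAt_f (a := a) hu.1 hu.2).sub ((hasDerivAt_S hu.1 hu.2).const_mul μ)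
    refine h.congr_deriv ?_
    ring
  have hnum_le : ∀ u ∈ Set.Ioo (0:ℝ) 1, u ≤ ξ
      → 0 ≤ a * u ^ (a-1) + (1-a) * u ^ a - 1 + μ * Real.log u := by
    intro u hu hle
    have h := rho_anti ha ha1 hu ⟨hξ0, hξ1⟩ hle
    simp only at h
    have hL : 0 < -Real.log u := by
      have := Real.log_neg hu.1 hu.2; linarith
    have h2 : μ * (-Real.log u) ≤ a * u ^ (a-1) + (1-a) * u ^ a - 1 :=
      (le_div_iff₀ hL).mp h
    nlinarith [h2]
  have hnum_ge : ∀ u ∈ Set.Ioo (0:ℝ) 1, ξ ≤ u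
      → a * u ^ (a-1) + (1-a) * u ^ a - 1 + μ * Real.log u ≤ 0 := by
    intro u hu hle
    have h := rho_anti ha ha1 ⟨hξ0, hξ1⟩ hu hle
    simp only at h
    have hL : 0 < -Real.log u := by
      have := Real.log_neg hu.1 hu.2; linarith
    have h2 : a * u ^ (a-1) + (1-a) * u ^ a - 1 ≤ μ * (-Real.log u) :=
      (div_le_iff₀ hL).mp h
    nlinarith [h2]
  have hΦcont : ContinuousOn Φ (Set.Iio (1:ℝ)) :=
    (contf ha).sub (continuousOn_const.mul contS)
  rcases le_or_gt s ξ with hcase | hcase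
  · have hmono : MonotoneOn Φ (Set.Icc 0 ξ) := by
      apply monotoneOn_of_deriv_nonneg (convex_Icc 0 ξ)
        (hΦcont.mono (fun u hu => lt_of_le_of_lt hu.2 hξ1))
      · rw [interior_Icc]
        intro u hu
        exact (hΦderiv u ⟨hu.1, lt_trans hu.2 hξ1⟩).differentiableAt.differentiableWithinAt
      · rw [interior_Icc]
        intro u hu
        rw [(hΦderiv u ⟨hu.1, lt_trans hu.2 hξ1⟩).deriv]
        exact div_nonneg (hnum_le u ⟨hu.1, lt_trans hu.2 hξ1⟩ hu.2.le) (by positivity)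
    exact hmono ⟨hs0, hcase⟩ ⟨hξ0.le, le_refl ξ⟩ hcase
  · have hanti : AntitoneOn Φ (Set.Ico ξ 1) := by
      apply antitoneOn_of_deriv_nonpos (convex_Ico ξ 1)
        (hΦcont.mono (fun u hu => hu.2))
      · rw [interior_Ico]
        intro u hu
        exact (hΦderiv u ⟨lt_trans hξ0 hu.1, hu.2⟩).differentiableAt.differentiableWithinAt
      · rw [interior_Ico]
        intro u hu
        rw [(hΦderiv u ⟨lt_trans hξ0 hu.1, hu.2⟩).deriv]
        exact div_nonpos_of_nonpos_of_nonneg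
          (hnum_ge u ⟨lt_trans hξ0 hu.1, hu.2⟩ hu.1.le) (by positivity)
    exact hanti ⟨le_refl ξ, hξ1⟩ ⟨hcase.le, hs1⟩ hcase.le

lemma star_ineq {a ξ : ℝ} (ha : 0 < a) (ha1 : a < 1) (hξ0 : 0 < ξ) (hξ1 : ξ < 1)
    {T t : ℝ} (ht0 : 0 ≤ t) (htT : t ≤ T) :
    t ^ a * T ^ (1-a) - t
      + ((a * ξ ^ (a-1) + (1-a) * ξ ^ a - 1) / (-Real.log ξ))
        * ((T - t) * Real.log (T - t) - T * Real.log T + t * Real.log t)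
    ≤ ((ξ ^ a - ξ) / (1 - ξ)
        - ((a * ξ ^ (a-1) + (1-a) * ξ ^ a - 1) / (-Real.log ξ)) * geomEntropy ξ) * (T - t) := by
  set μ : ℝ := (a * ξ ^ (a-1) + (1-a) * ξ ^ a - 1) / (-Real.log ξ) with hμ_def
  set c : ℝ := (ξ ^ a - ξ) / (1 - ξ) - μ * geomEntropy ξ with hc_def
  have hT0 : 0 ≤ T := le_trans ht0 htT
  rcases eq_or_lt_of_le hT0 with hT | hT
  · -- T = 0, hence t = 0
    have ht : t = 0 := le_antisymm (by rw [← hT] at htT; exact htT) ht0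
    rw [ht, ← hT]
    simp [Real.zero_rpow (ne_of_gt ha), Real.zero_rpow (by intro h; linarith : (1:ℝ)-a ≠ 0)]
  · rcases eq_or_lt_of_le htT with htT' | htT'
    · -- t = T > 0
      rw [htT']
      have : T ^ a * T ^ (1-a) = T := by
        rw [← Real.rpow_add hT]; norm_num
      rw [this]
      simp
    · -- 0 ≤ t < T
      set s : ℝ := t / T with hs_def
      have hs0 : 0 ≤ s := div_nonneg ht0 hT.le
      have hs1 : s < 1 := (div_lt_one hT).mpr htT'
      have hne : (1:ℝ) - s ≠ 0 := by linarith
      have hts : t = s * T := by rw [hs_def, div_mul_cancel₀ t hT.ne']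
      have hpm := phi_max ha ha1 hξ0 hξ1 hs0 hs1
      rw [← hμ_def, ← hc_def] at hpm
      have hTt : T - t = (1-s) * T := by rw [hts]; ring
      have key1 : t ^ a * T ^ (1-a) = s ^ a * T := by
        rw [hts, Real.mul_rpow hs0 hT.le, mul_assoc, ← Real.rpow_add hT]
        norm_num
      have key2 : (T - t) * Real.log (T - t) = (1-s) * T * (Real.log (1-s) + Real.log T) := by
        rw [hTt, Real.log_mul hne hT.ne']
      have key3 : t * Real.log t = s * T * (Real.log s + Real.log T) := by
        rcases eq_or_lt_of_le hs0 with h0 | h0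
        · rw [hts, ← h0]; simp
        · rw [hts, Real.log_mul h0.ne' hT.ne']
      have hlhs : t ^ a * T ^ (1-a) - t
          + μ * ((T - t) * Real.log (T - t) - T * Real.log T + t * Real.log t)
          = ((s ^ a - s) / (1-s) - μ * geomEntropy s) * ((1-s) * T) := by
        rw [key1, key2, key3]
        unfold geomEntropy
        rw [hts]
        field_simp
        ring
      rw [hlhs, hTt]
      exact mul_le_mul_of_nonneg_right hpm (mul_nonneg (by linarith) hT.le)

lemma holder_two {a : ℝ} (ha : 0 < a) (ha1 : a < 1) (s : Finset ℕ) (u v : ℕ → ℝ)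
    (hu : ∀ n ∈ s, 0 ≤ u n) (hv : ∀ n ∈ s, 0 ≤ v n) :
    ∑ n ∈ s, u n ^ a * v n ^ (1-a)
      ≤ (∑ n ∈ s, u n) ^ a * (∑ n ∈ s, v n) ^ (1-a) := by
  set U : ℝ := ∑ n ∈ s, u n with hU_def
  set V : ℝ := ∑ n ∈ s, v n with hV_def
  have hU0 : 0 ≤ U := Finset.sum_nonneg hu
  have hV0 : 0 ≤ V := Finset.sum_nonneg hv
  rcases eq_or_lt_of_le hU0 with hU | hU
  · have hz : ∀ n ∈ s, u n = 0 :=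
      (Finset.sum_eq_zero_iff_of_nonneg hu).mp hU.symm
    have : ∑ n ∈ s, u n ^ a * v n ^ (1-a) = 0 := by
      apply Finset.sum_eq_zero
      intro n hn
      rw [hz n hn, Real.zero_rpow (ne_of_gt ha), zero_mul]
    rw [this, ← hU, Real.zero_rpow (ne_of_gt ha), zero_mul]
  rcases eq_or_lt_of_le hV0 with hV | hV
  · have hz : ∀ n ∈ s, v n = 0 :=
      (Finset.sum_eq_zero_iff_of_nonneg hv).mp hV.symm
    have : ∑ n ∈ s, u n ^ a * v n ^ (1-a) = 0 := by
      apply Finset.sum_eq_zero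
      intro n hn
      rw [hz n hn, Real.zero_rpow (by intro h; linarith : (1:ℝ)-a ≠ 0), mul_zero]
    rw [this, ← hV, Real.zero_rpow (by intro h; linarith : (1:ℝ)-a ≠ 0), mul_zero]
  have hterm : ∀ n ∈ s, u n ^ a * v n ^ (1-a)
      ≤ U ^ a * V ^ (1-a) * (a * (u n / U) + (1-a) * (v n / V)) := by
    intro n hn
    have h1 : u n ^ a * v n ^ (1-a) = U ^ a * V ^ (1-a) * ((u n / U) ^ a * (v n / V) ^ (1-a)) := by
      rw [Real.div_rpow (hu n hn) hU0, Real.div_rpow (hv n hn) hV0]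
      field_simp
    rw [h1]
    apply mul_le_mul_of_nonneg_left _ (by positivity)
    exact Real.geom_mean_le_arith_mean2_weighted ha.le (by linarith)
      (div_nonneg (hu n hn) hU0) (div_nonneg (hv n hn) hV0) (by ring)
  calc ∑ n ∈ s, u n ^ a * v n ^ (1-a)
      ≤ ∑ n ∈ s, U ^ a * V ^ (1-a) * (a * (u n / U) + (1-a) * (v n / V)) :=
        Finset.sum_le_sum hterm
    _ = U ^ a * V ^ (1-a) * ∑ n ∈ s, (a * (u n / U) + (1-a) * (v n / V)) := by
        rw [Finset.mul_sum]
    _ = U ^ a * V ^ (1-a) := by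
        have : ∑ n ∈ s, (a * (u n / U) + (1-a) * (v n / V))
            = (a / U) * (∑ n ∈ s, u n) + ((1-a) / V) * (∑ n ∈ s, v n) := by
          rw [Finset.sum_add_distrib, Finset.mul_sum, Finset.mul_sum]
          congr 1 <;> exact Finset.sum_congr rfl fun n _ => by ring
        rw [this, ← hU_def, ← hV_def]
        have h3 : (a / U) * U + ((1-a) / V) * V = 1 := by
          field_simp
          ring
        rw [h3, mul_one]


lemma weight_swap (N : ℕ) (f : ℕ → ℝ) :
    ∑ k ∈ Finset.Icc 1 N, ∑ n ∈ Finset.Icc k N, f n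
      = ∑ n ∈ Finset.Icc 1 N, (n : ℝ) * f n := by
  have h : ∀ x y : ℕ, x ∈ Finset.Icc 1 N ∧ y ∈ Finset.Icc x N
      ↔ x ∈ Finset.Icc 1 y ∧ y ∈ Finset.Icc 1 N := by
    intro x y
    simp only [Finset.mem_Icc]
    omega
  rw [Finset.sum_comm' h]
  apply Finset.sum_congr rfl
  intro n hn
  rw [Finset.sum_const, Nat.card_Icc, nsmul_eq_mul]
  norm_num

lemma exists_xi {H : ℝ} (hH : 0 < H) :
    ∃ ξ ∈ Set.Ioo (0:ℝ) 1, geomEntropy ξ = H := by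
  set ξ₀ : ℝ := 1 - Real.exp (-H) with hξ₀def
  have he1 : Real.exp (-H) < 1 := Real.exp_lt_one_iff.mpr (by linarith)
  have he0 : 0 < Real.exp (-H) := Real.exp_pos _
  have hξ₀pos : 0 < ξ₀ := by simp only [hξ₀def]; linarith
  have hξ₀lt : ξ₀ < 1 := by simp only [hξ₀def]; linarith
  have hcont : ContinuousOn geomEntropy (Set.Icc 0 ξ₀) :=
    contS.mono (fun u hu => lt_of_le_of_lt hu.2 hξ₀lt)
  have h0 : geomEntropy 0 = 0 := by simp [geomEntropy]
  have h1 : H ≤ geomEntropy ξ₀ := by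
    have hlog : Real.log (1 - ξ₀) = -H := by simp [hξ₀def, Real.log_exp]
    have hlognp : Real.log ξ₀ ≤ 0 := Real.log_nonpos hξ₀pos.le hξ₀lt.le
    have hd : ξ₀ * Real.log ξ₀ / (1 - ξ₀) ≤ 0 :=
      div_nonpos_of_nonpos_of_nonneg (mul_nonpos_of_nonneg_of_nonpos hξ₀pos.le hlognp)
        (by linarith)
    unfold geomEntropy
    rw [hlog]
    linarith
  have hmem : H ∈ Set.Icc (geomEntropy 0) (geomEntropy ξ₀) := by
    rw [h0]; exact ⟨hH.le, h1⟩
  obtain ⟨ξ, hξmem, hξval⟩ := intermediate_value_Icc hξ₀pos.le hcont hmem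
  refine ⟨ξ, ⟨?_, lt_of_le_of_lt hξmem.2 hξ₀lt⟩, hξval⟩
  rcases eq_or_lt_of_le hξmem.1 with h | h
  · exfalso; rw [← h] at hξval; rw [h0] at hξval; linarith
  · exact h

theorem Fa_le_geometric_with_same_entropy (a : ℝ) (ha : 0 < a) (ha1 : a < 1)
    (N : ℕ) (x : ℕ → ℝ) (hx : ∀ n, 0 ≤ x n)
    (hsum : ∑ n ∈ Finset.range (N + 1), x n ^ (1 / a) = 1) :
    ∃ ξ ∈ Set.Ico (0 : ℝ) 1,
      (-∑ n ∈ Finset.range (N + 1), x n ^ (1 / a) * Real.log (x n ^ (1 / a))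
          = geomEntropy ξ) ∧
      Fa a N x ≤ (ξ ^ a - ξ) / (1 - ξ) := by
  have ha0 : a ≠ 0 := ne_of_gt ha
  set p : ℕ → ℝ := fun n => x n ^ (1 / a) with hp_def
  have hp0 : ∀ n, 0 ≤ p n := fun n => Real.rpow_nonneg (hx n) _
  have hple1 : ∀ n ∈ Finset.range (N + 1), p n ≤ 1 := by
    intro n hn
    calc p n ≤ ∑ m ∈ Finset.range (N + 1), p m :=
          Finset.single_le_sum (fun m _ => hp0 m) hn
      _ = 1 := hsum
  set H : ℝ := -∑ n ∈ Finset.range (N + 1), p n * Real.log (p n) with hH_def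
  have hHsum : H = ∑ n ∈ Finset.range (N + 1), -(p n * Real.log (p n)) := by
    rw [hH_def, ← Finset.sum_neg_distrib]
  have htermpos : ∀ n ∈ Finset.range (N + 1), 0 ≤ -(p n * Real.log (p n)) := by
    intro n hn
    have : p n * Real.log (p n) ≤ 0 :=
      mul_nonpos_of_nonneg_of_nonpos (hp0 n) (Real.log_nonpos (hp0 n) (hple1 n hn))
    linarith
  have hH0 : 0 ≤ H := by
    rw [hHsum]; exact Finset.sum_nonneg htermpos
  have hxp : ∀ n, x n = p n ^ a := by
    intro n
    rw [hp_def]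
    simp only
    rw [← Real.rpow_mul (hx n), one_div, inv_mul_cancel₀ ha0, Real.rpow_one]
  rcases eq_or_lt_of_le hH0 with hH | hH
  · -- H = 0 : take ξ = 0
    refine ⟨0, ⟨le_refl _, one_pos⟩, ?_, ?_⟩
    · rw [← hH_def.symm] at *
      have : geomEntropy 0 = 0 := by simp [geomEntropy]
      rw [this]; exact hH.symm
    · have hzero : ∀ n ∈ Finset.range (N + 1), -(p n * Real.log (p n)) = 0 := by
        intro n hn
        have := (Finset.sum_eq_zero_iff_of_nonneg htermpos).mp (by rw [← hHsum]; exact hH.symm)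
        exact this n hn
      have hx01 : ∀ n ∈ Finset.range (N + 1), x n = 0 ∨ x n = 1 := by
        intro n hn
        have h1 : p n * Real.log (p n) = 0 := by have := hzero n hn; linarith
        rcases mul_eq_zero.mp h1 with h | h
        · left; rw [hxp n, h, Real.zero_rpow ha0]
        · rcases Real.log_eq_zero.mp h with h | h | h
          · left; rw [hxp n, h, Real.zero_rpow ha0]
          · right; rw [hxp n, h, Real.one_rpow]
          · exfalso; have := hp0 n; rw [h] at this; linarith
      have hRHS : ((0:ℝ) ^ a - 0) / (1 - 0) = 0 := by
        rw [Real.zero_rpow ha0]; ring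
      rw [hRHS]
      apply Finset.sum_nonpos
      intro n hn
      have hn1 : 1 ≤ n := (Finset.mem_Icc.mp hn).1
      have hnN : n ≤ N := (Finset.mem_Icc.mp hn).2
      have hxn := hx01 n (Finset.mem_range.mpr (by omega))
      have hxn1 := hx01 (n - 1) (Finset.mem_range.mpr (by omega))
      have hexp : (1 - a) / a ≠ 0 := by
        apply div_ne_zero (by linarith) ha0
      apply mul_nonpos_of_nonneg_of_nonpos (by positivity)
      have hz2 : (0:ℝ) ^ (1/a) = 0 := Real.zero_rpow (one_div_ne_zero ha0)
      have hz3 : (0:ℝ) ^ a⁻¹ = 0 := Real.zero_rpow (inv_ne_zero ha0)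
      rcases hxn with h | h <;> rcases hxn1 with h' | h' <;>
        simp [h, h', hz2, hz3, Real.zero_rpow ha0, Real.zero_rpow hexp, Real.one_rpow]
  · -- H > 0
    obtain ⟨ξ, ⟨hξ0, hξ1⟩, hξH⟩ := exists_xi hH
    refine ⟨ξ, ⟨hξ0.le, hξ1⟩, hξH.symm, ?_⟩
    have h1ξ : 0 < 1 - ξ := by linarith
    set μ : ℝ := (a * ξ ^ (a-1) + (1-a) * ξ ^ a - 1) / (-Real.log ξ) with hμ_def
    set c : ℝ := (ξ ^ a - ξ) / (1 - ξ) - μ * geomEntropy ξ with hc_def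
    set T : ℕ → ℝ := fun k => ∑ n ∈ Finset.Icc k N, p n with hT_def
    have hTnn : ∀ k, 0 ≤ T k := fun k => Finset.sum_nonneg fun n _ => hp0 n
    have hT0 : T 0 = 1 := by
      rw [hT_def]
      simp only
      rw [← Finset.Ico_add_one_right_eq_Icc, Nat.Ico_zero_eq_range]
      exact hsum
    have hTtop : T (N+1) = 0 := by
      rw [hT_def]
      simp only
      rw [Finset.Icc_eq_empty (by omega)]
      exact Finset.sum_empty
    have hTsucc : ∀ k, k ≤ N → T k = p k + T (k+1) := by
      intro k hk
      rw [hT_def]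
      simp only
      have h1 : Finset.Icc k N = insert k (Finset.Icc (k+1) N) := by
        ext m
        simp only [Finset.mem_Icc, Finset.mem_insert]
        omega
      rw [h1, Finset.sum_insert (by simp only [Finset.mem_Icc]; omega)]
    -- Fa as a function of p
    have hFa_eq : Fa a N x
        = ∑ n ∈ Finset.Icc 1 N, (n:ℝ) * (p n ^ a * p (n-1) ^ (1-a) - p n) := by
      unfold Fa
      apply Finset.sum_congr rfl
      intro n _
      congr 1
      rw [abs_of_nonneg (hx (n-1)), abs_of_nonneg (hx n), hxp n, hxp (n-1)]
      have h2 : (p (n-1) ^ a) ^ ((1-a)/a) = p (n-1) ^ (1-a) := by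
        rw [← Real.rpow_mul (hp0 (n-1)), show a * ((1-a)/a) = 1-a by field_simp]
      have h3 : (p n ^ a) ^ ((1:ℝ)/a) = p n := by
        rw [← Real.rpow_mul (hp0 n), show a * (1/a) = 1 by field_simp, Real.rpow_one]
      rw [h2, h3]
    -- shifted tail bound
    have hshift : ∀ k, 1 ≤ k → k ≤ N → ∑ n ∈ Finset.Icc k N, p (n-1) ≤ T (k-1) := by
      intro k hk1 hkN
      have e1 : ∑ n ∈ Finset.Icc k N, p (n-1) = ∑ m ∈ Finset.Icc (k-1) (N-1), p m := by
        rw [← Finset.Ico_add_one_right_eq_Icc, ← Finset.Ico_add_one_right_eq_Icc, Finset.sum_Ico_eq_sum_range,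
          Finset.sum_Ico_eq_sum_range]
        apply Finset.sum_congr (by congr 1; omega)
        intro i _
        congr 1
        omega
      rw [e1, hT_def]
      simp only
      exact Finset.sum_le_sum_of_subset_of_nonneg
        (Finset.Icc_subset_Icc_right (by omega)) (fun m _ _ => hp0 m)
    -- per-k Hölder bound
    have hkey : ∀ k ∈ Finset.Icc 1 N,
        ∑ n ∈ Finset.Icc k N, (p n ^ a * p (n-1) ^ (1-a) - p n)
          ≤ T k ^ a * T (k-1) ^ (1-a) - T k := by
      intro k hk
      obtain ⟨hk1, hkN⟩ := Finset.mem_Icc.mp hk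
      rw [Finset.sum_sub_distrib]
      have hTk : ∑ n ∈ Finset.Icc k N, p n = T k := by rw [hT_def]
      have h1 : ∑ n ∈ Finset.Icc k N, p n ^ a * p (n-1) ^ (1-a)
          ≤ T k ^ a * T (k-1) ^ (1-a) := by
        calc ∑ n ∈ Finset.Icc k N, p n ^ a * p (n-1) ^ (1-a)
            ≤ (∑ n ∈ Finset.Icc k N, p n) ^ a
              * (∑ n ∈ Finset.Icc k N, p (n-1)) ^ (1-a) :=
              holder_two ha ha1 _ _ _ (fun n _ => hp0 n) (fun n _ => hp0 _)
          _ ≤ T k ^ a * T (k-1) ^ (1-a) := by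
              rw [hTk]
              exact mul_le_mul_of_nonneg_left
                (Real.rpow_le_rpow (Finset.sum_nonneg fun n _ => hp0 _)
                  (hshift k hk1 hkN) (by linarith))
                (Real.rpow_nonneg (hTnn k) a)
      rw [hTk]
      linarith [h1]
    -- chain so far
    have hVle : Fa a N x ≤ ∑ k ∈ Finset.Icc 1 N, (T k ^ a * T (k-1) ^ (1-a) - T k) := by
      rw [hFa_eq, ← weight_swap]
      exact Finset.sum_le_sum hkey
    -- reindex to range (N+1)
    have hWV : ∑ k ∈ Finset.Icc 1 N, (T k ^ a * T (k-1) ^ (1-a) - T k)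
        = ∑ j ∈ Finset.range (N+1), (T (j+1) ^ a * T j ^ (1-a) - T (j+1)) := by
      rw [Finset.sum_range_succ]
      have hzero : T (N+1) ^ a * T N ^ (1-a) - T (N+1) = 0 := by
        rw [hTtop, Real.zero_rpow ha0]
        ring
      rw [hzero, add_zero, ← Finset.Ico_add_one_right_eq_Icc, Finset.sum_Ico_eq_sum_range]
      apply Finset.sum_congr (by norm_num)
      intro i _
      have e2 : 1 + i - 1 = i := by omega
      have e1 : 1 + i = i + 1 := by omega
      rw [e2, e1]
    -- pointwise star inequality
    have hstar : ∀ j ∈ Finset.range (N+1),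
        (T (j+1) ^ a * T j ^ (1-a) - T (j+1))
          + μ * (p j * Real.log (p j)
              - (T j * Real.log (T j) - T (j+1) * Real.log (T (j+1))))
        ≤ c * p j := by
      intro j hj
      have hjN : j ≤ N := by
        simp only [Finset.mem_range] at hj
        omega
      have hps : p j = T j - T (j+1) := by
        have := hTsucc j hjN
        linarith
      have htle : T (j+1) ≤ T j := by
        have := hTsucc j hjN
        have := hp0 j
        linarith
      have hst := star_ineq ha ha1 hξ0 hξ1 (hTnn (j+1)) htle
      rw [← hμ_def, ← hc_def] at hst
      rw [hps]
      linarith [hst]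
    have hsum2 := Finset.sum_le_sum hstar
    have hL : ∑ j ∈ Finset.range (N+1),
        ((T (j+1) ^ a * T j ^ (1-a) - T (j+1))
          + μ * (p j * Real.log (p j)
              - (T j * Real.log (T j) - T (j+1) * Real.log (T (j+1)))))
        = (∑ j ∈ Finset.range (N+1), (T (j+1) ^ a * T j ^ (1-a) - T (j+1)))
          + μ * ((∑ j ∈ Finset.range (N+1), p j * Real.log (p j))
              - (T 0 * Real.log (T 0) - T (N+1) * Real.log (T (N+1)))) := by
      rw [Finset.sum_add_distrib]
      congr 1
      rw [← Finset.mul_sum]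
      congr 1
      rw [Finset.sum_sub_distrib]
      congr 1
      exact Finset.sum_range_sub' (fun j => T j * Real.log (T j)) (N+1)
    have hR : ∑ j ∈ Finset.range (N+1), c * p j = c := by
      rw [← Finset.mul_sum, hsum, mul_one]
    rw [hL, hR, hT0, hTtop] at hsum2
    have hb : (1:ℝ) * Real.log 1 - 0 * Real.log 0 = 0 := by simp
    rw [hb, sub_zero] at hsum2
    have hPH : ∑ n ∈ Finset.range (N+1), p n * Real.log (p n) = -H := by
      rw [hH_def]
      ring
    rw [hPH] at hsum2
    -- conclude
    have hfin : c + μ * H = (ξ ^ a - ξ) / (1 - ξ) := by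
      rw [hc_def, hξH]
      ring
    calc Fa a N x ≤ ∑ k ∈ Finset.Icc 1 N, (T k ^ a * T (k-1) ^ (1-a) - T k) := hVle
      _ = ∑ j ∈ Finset.range (N+1), (T (j+1) ^ a * T j ^ (1-a) - T (j+1)) := hWV
      _ ≤ c + μ * H := by linarith [hsum2]
      _ = (ξ ^ a - ξ) / (1 - ξ) := hfin
end

section
/- For any real numbers 1 < p < q and any T > 0, there exist z₀ ∈ (0,1) and a differentiable function a : [0,T] → ℝ such that 0 < a(t) < 1 for all t ∈ [0,T], a(0) = 1/p, a(T) = 1/q, and a′(t) = μ(z(t), a(t)) for all t ∈ [0,T], where z(t) = e^{−t} z₀ / (1 − (1 − e^{−t}) z₀). -/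
private lemma denom_pos (c t : ℝ) (hc0 : 0 < c) (hc1 : c < 1) (ht : 0 ≤ t) :
    0 < 1 - (1 - Real.exp (-t)) * c := by
  have h1 : Real.exp (-t) ≤ 1 := Real.exp_le_one_iff.mpr (by linarith)
  have h2 : 0 < Real.exp (-t) := Real.exp_pos _
  nlinarith

private lemma z_mem (c t : ℝ) (hc0 : 0 < c) (hc1 : c < 1) (ht : 0 ≤ t) :
    Real.exp (-t) * c / (1 - (1 - Real.exp (-t)) * c) ∈ Set.Ioo (0:ℝ) 1 := by
  have hD := denom_pos c t hc0 hc1 ht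
  have h2 : 0 < Real.exp (-t) := Real.exp_pos _
  constructor
  · positivity
  · rw [div_lt_one hD]; nlinarith

private lemma hasDerivAt_exp_neg (t : ℝ) :
    HasDerivAt (fun s : ℝ => Real.exp (-s)) (-Real.exp (-t)) t := by
  simpa [Function.comp_def] using (Real.hasDerivAt_exp (-t)).comp t (hasDerivAt_neg t)

private lemma logz_hasDeriv (c t : ℝ) (hc0 : 0 < c) (hc1 : c < 1) (ht : 0 ≤ t) :
    HasDerivAt (fun s => Real.log (Real.exp (-s) * c / (1 - (1 - Real.exp (-s)) * c)))
      (-(1 - Real.exp (-t) * c / (1 - (1 - Real.exp (-t)) * c))) t := by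
  have hD := denom_pos c t hc0 hc1 ht
  have hE := Real.exp_pos (-t)
  have hN : HasDerivAt (fun s => Real.exp (-s) * c) (-Real.exp (-t) * c) t :=
    (hasDerivAt_exp_neg t).mul_const c
  have hDd : HasDerivAt (fun s => 1 - (1 - Real.exp (-s)) * c) (-(Real.exp (-t) * c)) t := by
    have h1 : HasDerivAt (fun s : ℝ => (1 - Real.exp (-s)) * c) (Real.exp (-t) * c) t := by
      simpa using ((hasDerivAt_const t (1:ℝ)).sub (hasDerivAt_exp_neg t)).mul_const c
    simpa [Pi.sub_def] using (hasDerivAt_const t (1:ℝ)).sub h1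
  have hz := hN.fun_div hDd (ne_of_gt hD)
  have hzpos : 0 < Real.exp (-t) * c / (1 - (1 - Real.exp (-t)) * c) := by positivity
  have hcomp := hz.log (ne_of_gt hzpos)
  convert hcomp using 1
  have hD' : 1 + Real.exp (-t) * c - c ≠ 0 := by linarith
  field_simp
  linear_combination (inv_mul_cancel₀ hD')

private lemma logG_hasDeriv (Y t : ℝ) (hY : Real.exp t < Y) :
    HasDerivAt (fun s => Real.log (Y / (Y - Real.exp s))) (Y / (Y - Real.exp t) - 1) t := by
  have hEt := Real.exp_pos t
  have hD : 0 < Y - Real.exp t := by linarith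
  have hDd : HasDerivAt (fun s : ℝ => Y - Real.exp s) (-Real.exp t) t := by
    simpa [Pi.sub_def] using (hasDerivAt_const t Y).sub (Real.hasDerivAt_exp t)
  have hY0 : 0 < Y := lt_trans hEt hY
  have hG := (hasDerivAt_const t Y).fun_div hDd (ne_of_gt hD)
  have hGpos : 0 < Y / (Y - Real.exp t) := by positivity
  have hcomp := hG.log (ne_of_gt hGpos)
  convert hcomp using 1
  field_simp
  ring


private lemma exists_root (p q T : ℝ) (hp : 1 < p) (hpq : p < q) (hT : 0 < T) :
    ∃ c ∈ Set.Ioo (0:ℝ) 1,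
      Real.log (Real.exp T * ((Real.exp (-T) * c / (1 - (1 - Real.exp (-T)) * c)) ^ (1 - q)) /
          ((Real.exp T - 1) * ((Real.exp (-T) * c / (1 - (1 - Real.exp (-T)) * c)) ^ (1 - q)) + 1))
        = (1 - p) * Real.log c := by
  have hE0 : 0 < Real.exp (-T) := Real.exp_pos _
  have hE1 : Real.exp (-T) < 1 := Real.exp_lt_one_iff.mpr (by linarith)
  have h1T : 1 < Real.exp T := by have := Real.add_one_le_exp T; linarith
  set zT : ℝ → ℝ := fun s => Real.exp (-T) * s / (1 - (1 - Real.exp (-T)) * s) with hzT_def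
  set GT : ℝ → ℝ := fun s => zT s ^ (1 - q) with hGT_def
  set G0 : ℝ → ℝ := fun s => Real.exp T * GT s / ((Real.exp T - 1) * GT s + 1) with hG0_def
  set h : ℝ → ℝ := fun s => Real.log (G0 s) + (p - 1) * Real.log s with hh_def
  -- basic positivity facts on (0,1]
  have hdenpos : ∀ s : ℝ, 0 < s → s ≤ 1 → 0 < 1 - (1 - Real.exp (-T)) * s := by
    intro s h1 h2; nlinarith [mul_nonneg (le_of_lt (sub_pos.mpr hE1)) (sub_nonneg.mpr h2)]
  have hzTpos : ∀ s : ℝ, 0 < s → s ≤ 1 → 0 < zT s := by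
    intro s h1 h2
    have := hdenpos s h1 h2
    simp only [hzT_def]
    positivity
  have hGTpos : ∀ s : ℝ, 0 < s → s ≤ 1 → 0 < GT s := by
    intro s h1 h2; exact Real.rpow_pos_of_pos (hzTpos s h1 h2) _
  have hden2pos : ∀ s : ℝ, 0 < s → s ≤ 1 → 0 < (Real.exp T - 1) * GT s + 1 := by
    intro s h1 h2; nlinarith [hGTpos s h1 h2]
  have hG0pos : ∀ s : ℝ, 0 < s → s ≤ 1 → 0 < G0 s := by
    intro s h1 h2
    have := hGTpos s h1 h2
    have := hden2pos s h1 h2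
    simp only [hG0_def]
    positivity
  have hG0lt : ∀ s : ℝ, 0 < s → s ≤ 1 → G0 s < Real.exp T / (Real.exp T - 1) := by
    intro s h1 h2
    have hg := hGTpos s h1 h2
    have hd := hden2pos s h1 h2
    simp only [hG0_def]
    rw [div_lt_div_iff₀ hd (by linarith)]
    nlinarith
  -- values at 1
  have hzT1 : zT 1 = 1 := by
    simp only [hzT_def]
    rw [show (1:ℝ) - (1 - Real.exp (-T)) * 1 = Real.exp (-T) by ring]
    field_simp
  have hGT1 : GT 1 = 1 := by simp [hGT_def, hzT1]
  have hG01 : G0 1 = 1 := by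
    simp only [hG0_def, hGT1]
    field_simp
    ring
  have hh1 : h 1 = 0 := by simp [hh_def, hG01]
  -- derivative of h at 1
  have hdzT : HasDerivAt zT (Real.exp T) 1 := by
    have hnum : HasDerivAt (fun s : ℝ => Real.exp (-T) * s) (Real.exp (-T)) 1 := by
      simpa using (hasDerivAt_id (1:ℝ)).const_mul (Real.exp (-T))
    have hden : HasDerivAt (fun s : ℝ => 1 - (1 - Real.exp (-T)) * s) (-(1 - Real.exp (-T))) 1 := by
      simpa [Pi.sub_def] using (hasDerivAt_const (1:ℝ) (1:ℝ)).sub ((hasDerivAt_id (1:ℝ)).const_mul (1 - Real.exp (-T)))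
    have hd1 : (1:ℝ) - (1 - Real.exp (-T)) * 1 ≠ 0 := by
      rw [show (1:ℝ) - (1 - Real.exp (-T)) * 1 = Real.exp (-T) by ring]; exact ne_of_gt hE0
    have this : HasDerivAt zT _ 1 := hnum.fun_div hden hd1
    convert this using 1
    rw [show (1:ℝ) - (1 - Real.exp (-T)) * 1 = Real.exp (-T) by ring]
    rw [Real.exp_neg]
    field_simp
    ring
  have hdGT : HasDerivAt GT ((1 - q) * Real.exp T) 1 := by
    have := hdzT.rpow_const (p := 1 - q) (Or.inl (by rw [hzT1]; norm_num))
    convert this using 1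
    rw [hzT1, Real.one_rpow]
    ring
  have hdG0 : HasDerivAt G0 (1 - q) 1 := by
    have hnum : HasDerivAt (fun s => Real.exp T * GT s) (Real.exp T * ((1 - q) * Real.exp T)) 1 :=
      hdGT.const_mul (Real.exp T)
    have hden : HasDerivAt (fun s => (Real.exp T - 1) * GT s + 1)
        ((Real.exp T - 1) * ((1 - q) * Real.exp T)) 1 :=
      (hdGT.const_mul (Real.exp T - 1)).add_const 1
    have hd1 : (Real.exp T - 1) * GT 1 + 1 ≠ 0 := by rw [hGT1]; nlinarith
    have this : HasDerivAt G0 _ 1 := hnum.fun_div hden hd1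
    convert this using 1
    rw [hGT1]
    have hTne : Real.exp T ≠ 0 := ne_of_gt (Real.exp_pos T)
    field_simp
    ring
  have hdh : HasDerivAt h (p - q) 1 := by
    have hl1 : HasDerivAt (fun s => Real.log (G0 s)) (1 - q) 1 := by
      have := hdG0.log (by rw [hG01]; norm_num)
      simpa [hG01] using this
    have hl2 : HasDerivAt (fun s : ℝ => (p - 1) * Real.log s) (p - 1) 1 := by
      simpa using (Real.hasDerivAt_log (one_ne_zero)).const_mul (p - 1)
    have this : HasDerivAt h _ 1 := hl1.add hl2
    convert this using 1
    ring
  -- the left endpoint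
  set C : ℝ := Real.log (Real.exp T / (Real.exp T - 1)) with hC_def
  have hCpos : 0 < C := Real.log_pos (by rw [lt_div_iff₀ (by linarith)]; linarith)
  set L : ℝ := Real.exp (-(C + 1) / (p - 1)) with hL_def
  have hL0 : 0 < L := Real.exp_pos _
  have hL1 : L < 1 := by
    apply Real.exp_lt_one_iff.mpr
    apply div_neg_of_neg_of_pos (by linarith) (by linarith)
  have hhL : h L < 0 := by
    have h1 := hG0lt L hL0 (le_of_lt hL1)
    have h2 := hG0pos L hL0 (le_of_lt hL1)
    have h3 : Real.log (G0 L) < C := by rw [hC_def]; exact Real.log_lt_log h2 h1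
    have h4 : Real.log L = -(C + 1) / (p - 1) := Real.log_exp _
    have h5 : (p - 1) * Real.log L = -(C + 1) := by
      have hpne : p - 1 ≠ 0 := by linarith
      rw [h4, mul_comm, div_mul_cancel₀ _ hpne]
    simp only [hh_def]
    linarith
  -- find a point near 1 where h is positive
  have hslope := hasDerivAt_iff_tendsto_slope.mp hdh
  have hslope' : Filter.Tendsto (slope h 1) (nhdsWithin 1 (Set.Iio 1)) (nhds (p - q)) :=
    hslope.mono_left (nhdsWithin_mono 1 (fun x hx => ne_of_lt hx))
  have hev1 : ∀ᶠ s in nhdsWithin (1:ℝ) (Set.Iio 1), slope h 1 s < 0 :=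
    hslope'.eventually_lt_const (by linarith)
  have hev2 : ∀ᶠ s in nhdsWithin (1:ℝ) (Set.Iio 1), s ∈ Set.Ioo L 1 :=
    Filter.eventually_of_mem (Ioo_mem_nhdsLT hL1) (fun x hx => hx)
  obtain ⟨s₁, hs₁slope, hs₁mem⟩ := (hev1.and hev2).exists
  have hhs₁ : 0 < h s₁ := by
    rw [slope_def_field, hh1, sub_zero] at hs₁slope
    rcases div_neg_iff.mp hs₁slope with ⟨ha, hb⟩ | ⟨ha, hb⟩
    · exact ha
    · exfalso; have := hs₁mem.2; linarith
  -- continuity of h on [L, s₁]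
  have hsub : ∀ x ∈ Set.Icc L s₁, 0 < x ∧ x ≤ 1 :=
    fun x hx => ⟨lt_of_lt_of_le hL0 hx.1, le_of_lt (lt_of_le_of_lt hx.2 hs₁mem.2)⟩
  have hczT : ContinuousOn zT (Set.Icc L s₁) := by
    apply ContinuousOn.div (by fun_prop) (by fun_prop)
    intro x hx
    exact ne_of_gt (hdenpos x (hsub x hx).1 (hsub x hx).2)
  have hcGT : ContinuousOn GT (Set.Icc L s₁) := by
    apply hczT.rpow_const
    intro x hx
    exact Or.inl (ne_of_gt (hzTpos x (hsub x hx).1 (hsub x hx).2))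
  have hcG0 : ContinuousOn G0 (Set.Icc L s₁) := by
    apply ContinuousOn.div (continuousOn_const.mul hcGT)
      ((continuousOn_const.mul hcGT).add continuousOn_const)
    intro x hx
    exact ne_of_gt (hden2pos x (hsub x hx).1 (hsub x hx).2)
  have hch : ContinuousOn h (Set.Icc L s₁) := by
    apply ContinuousOn.add
    · exact hcG0.log (fun x hx => ne_of_gt (hG0pos x (hsub x hx).1 (hsub x hx).2))
    · exact continuousOn_const.mul (continuousOn_id.log (fun x hx => ne_of_gt (hsub x hx).1))
  -- intermediate value theorem
  have hIVT := intermediate_value_Ioo (le_of_lt hs₁mem.1) hch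
  obtain ⟨c, hcmem, hc⟩ := hIVT ⟨hhL, hhs₁⟩
  refine ⟨c, ⟨lt_of_lt_of_le hL0 (le_of_lt hcmem.1), lt_trans hcmem.2 hs₁mem.2⟩, ?_⟩
  have : Real.log (G0 c) = (1 - p) * Real.log c := by
    have : Real.log (G0 c) + (p - 1) * Real.log c = 0 := hc
    linarith
  exact this

private lemma main_aux (p q T : ℝ) (hp : 1 < p) (hpq : p < q) (hT : 0 < T)
    (hroot' : ∃ c ∈ Set.Ioo (0:ℝ) 1,
      Real.log (Real.exp T * ((Real.exp (-T) * c / (1 - (1 - Real.exp (-T)) * c)) ^ (1 - q)) /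
          ((Real.exp T - 1) * ((Real.exp (-T) * c / (1 - (1 - Real.exp (-T)) * c)) ^ (1 - q)) + 1))
        = (1 - p) * Real.log c) :
    ∃ z₀ ∈ Set.Ioo (0 : ℝ) 1, ∃ a : ℝ → ℝ,
      (∀ t ∈ Set.Icc (0 : ℝ) T, a t ∈ Set.Ioo (0 : ℝ) 1) ∧
      a 0 = 1 / p ∧ a T = 1 / q ∧
      ∀ t ∈ Set.Icc (0 : ℝ) T,
        HasDerivAt a
          (mu (Real.exp (-t) * z₀ / (1 - (1 - Real.exp (-t)) * z₀)) (a t)) t := by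
  obtain ⟨c, ⟨hc0, hc1⟩, hroot⟩ := hroot'
  have hE0 : 0 < Real.exp (-T) := Real.exp_pos _
  have h1T : 1 < Real.exp T := by have := Real.add_one_le_exp T; linarith
  have hzTc : Real.exp (-T) * c / (1 - (1 - Real.exp (-T)) * c) ∈ Set.Ioo (0:ℝ) 1 :=
    z_mem c T hc0 hc1 (le_of_lt hT)
  set zTc : ℝ := Real.exp (-T) * c / (1 - (1 - Real.exp (-T)) * c) with hzTc_def
  set GTc : ℝ := zTc ^ (1 - q) with hGTc_def
  have hGTc1 : 1 < GTc := by
    rw [hGTc_def, Real.one_lt_rpow_iff_of_pos hzTc.1]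
    exact Or.inr ⟨hzTc.2, by linarith⟩
  set Y : ℝ := Real.exp T * GTc / (GTc - 1) with hY_def
  have hYgt : Real.exp T < Y := by
    rw [hY_def, lt_div_iff₀ (by linarith)]
    nlinarith
  have hYeq : Y * (GTc - 1) = Real.exp T * GTc := by
    have h1 : GTc - 1 ≠ 0 := by linarith
    rw [hY_def]
    field_simp
  clear_value Y
  have hGf : ∀ t ∈ Set.Icc (0:ℝ) T, 1 < Y / (Y - Real.exp t) := by
    intro t ht
    have h1 : Real.exp t ≤ Real.exp T := Real.exp_le_exp.mpr ht.2
    have h2 : 0 < Y - Real.exp t := by linarith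
    rw [lt_div_iff₀ h2]
    nlinarith [Real.exp_pos t]
  refine ⟨c, ⟨hc0, hc1⟩,
    fun t => Real.log (Real.exp (-t) * c / (1 - (1 - Real.exp (-t)) * c)) /
      (Real.log (Real.exp (-t) * c / (1 - (1 - Real.exp (-t)) * c)) -
        Real.log (Y / (Y - Real.exp t))), ?_, ?_, ?_, ?_⟩
  · -- membership
    intro t ht
    have hz := z_mem c t hc0 hc1 ht.1
    have hL : Real.log (Real.exp (-t) * c / (1 - (1 - Real.exp (-t)) * c)) < 0 :=
      Real.log_neg hz.1 hz.2
    have hM : 0 < Real.log (Y / (Y - Real.exp t)) := Real.log_pos (hGf t ht)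
    constructor
    · exact div_pos_of_neg_of_neg hL (by linarith)
    · rw [div_lt_one_iff]
      right; right
      constructor <;> linarith
  · -- a 0 = 1/p
    have hYm : Y / (Y - 1) = Real.exp T * GTc / ((Real.exp T - 1) * GTc + 1) := by
      have h2 : (0:ℝ) < (Real.exp T - 1) * GTc + 1 := by nlinarith
      rw [div_eq_div_iff (by linarith) (ne_of_gt h2)]
      linear_combination -hYeq
    have hlog : Real.log (Y / (Y - 1)) = (1 - p) * Real.log c := by rw [hYm]; exact hroot
    have hlogc : Real.log c < 0 := Real.log_neg hc0 hc1
    beta_reduce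
    simp only [neg_zero, Real.exp_zero]
    rw [show (1:ℝ) * c / (1 - (1 - 1) * c) = c by norm_num]
    rw [hlog]
    rw [show Real.log c - (1 - p) * Real.log c = p * Real.log c by ring]
    rw [div_mul_eq_div_div_swap, div_self hlogc.ne]
  · -- a T = 1/q
    have hYT : Y / (Y - Real.exp T) = GTc := by
      have h3 : Y - Real.exp T ≠ 0 := by linarith
      rw [div_eq_iff h3]
      linear_combination -hYeq
    have hlogG : Real.log GTc = (1 - q) * Real.log zTc := by
      rw [hGTc_def]; exact Real.log_rpow hzTc.1 _
    have hlogz : Real.log zTc < 0 := Real.log_neg hzTc.1 hzTc.2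
    beta_reduce
    rw [← hzTc_def, hYT, hlogG]
    rw [show Real.log zTc - (1 - q) * Real.log zTc = q * Real.log zTc by ring]
    rw [div_mul_eq_div_div_swap, div_self hlogz.ne]
  · -- derivative
    intro t ht
    have hz := z_mem c t hc0 hc1 ht.1
    have hG1 : 1 < Y / (Y - Real.exp t) := hGf t ht
    have hGpos : (0:ℝ) < Y / (Y - Real.exp t) := by linarith
    have hL : Real.log (Real.exp (-t) * c / (1 - (1 - Real.exp (-t)) * c)) < 0 :=
      Real.log_neg hz.1 hz.2
    have hM : 0 < Real.log (Y / (Y - Real.exp t)) := Real.log_pos hG1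
    have hLM : Real.log (Real.exp (-t) * c / (1 - (1 - Real.exp (-t)) * c)) -
        Real.log (Y / (Y - Real.exp t)) ≠ 0 := by linarith
    have hdL := logz_hasDeriv c t hc0 hc1 ht.1
    have hdM := logG_hasDeriv Y t (lt_of_le_of_lt (Real.exp_le_exp.mpr ht.2) hYgt)
    have hda : HasDerivAt (fun s => Real.log (Real.exp (-s) * c / (1 - (1 - Real.exp (-s)) * c)) /
      (Real.log (Real.exp (-s) * c / (1 - (1 - Real.exp (-s)) * c)) - Real.log (Y / (Y - Real.exp s)))) _ t :=
      hdL.div (hdL.sub hdM) hLM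
    convert hda using 1
    beta_reduce
    simp only [mu]
    generalize hZdef : Real.exp (-t) * c / (1 - (1 - Real.exp (-t)) * c) = Zv
    rw [hZdef] at hz
    generalize hGdef : Y / (Y - Real.exp t) = Gv
    rw [hGdef] at hGpos hG1
    generalize hLdef : Real.log Zv = Lv
    generalize hMdef : Real.log Gv = Mv
    have hLneg : Lv < 0 := hLdef ▸ Real.log_neg hz.1 hz.2
    have hMpos : 0 < Mv := hMdef ▸ Real.log_pos hG1
    have hLvne : Lv ≠ 0 := ne_of_lt hLneg
    have hLMne : Lv - Mv ≠ 0 := by linarith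
    rw [Real.rpow_def_of_pos hz.1]
    rw [hLdef]
    rw [show Lv * ((Lv / (Lv - Mv) - 1) / (Lv / (Lv - Mv))) = Mv by field_simp; ring]
    rw [← hMdef, Real.exp_log hGpos, hMdef]
    field_simp
    ring

theorem exists_solution_ode (p q T : ℝ) (hp : 1 < p) (hpq : p < q) (hT : 0 < T) :
    ∃ z₀ ∈ Set.Ioo (0 : ℝ) 1, ∃ a : ℝ → ℝ,
      (∀ t ∈ Set.Icc (0 : ℝ) T, a t ∈ Set.Ioo (0 : ℝ) 1) ∧
      a 0 = 1 / p ∧ a T = 1 / q ∧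
      ∀ t ∈ Set.Icc (0 : ℝ) T,
        HasDerivAt a
          (mu (Real.exp (-t) * z₀ / (1 - (1 - Real.exp (-t)) * z₀)) (a t)) t :=
  main_aux p q T hp hpq hT (exists_root p q T hp hpq hT)
end

section
/- Let 0 < a < 1, ξ ∈ (0,1), and N ≥ 1 an integer. Let w_0, …, w_N ∈ ℝ satisfy 0 < w_n ≤ 1 for 0 ≤ n ≤ N−1 and w_N = 0. Assume that 2(g(w_1) − g(w_0)) = k(w_0) − g(w_0) − ν(ξ,a) ln w_0 and that, for every 2 ≤ n ≤ N, (n+1)(g(w_n) − g(w_{n−1})) = (n−1)(k(w_{n−1}) − k(w_{n−2})) + k(w_{n−1}) − g(w_{n−1}) − ν(ξ,a) ln w_{n−1}. Then ξ ≥ w_0 ≥ w_1 ≥ ⋯ ≥ w_N. -/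
/-- `g(s) = (a-1) s^a` (real power, so `g(0) = 0`). -/
noncomputable def gfun (a s : ℝ) : ℝ := (a - 1) * s ^ a

/-- `k(s) = a s^{a-1} - 1`. -/
noncomputable def kfun (a s : ℝ) : ℝ := a * s ^ (a - 1) - 1

/-- `ν(s,a) = (a s^{a-1} - 1 + (1-a) s^a) / ln s`. -/
noncomputable def nufun (a s : ℝ) : ℝ :=
  (a * s ^ (a - 1) - 1 + (1 - a) * s ^ a) / Real.log s

section KKTAux
open Real Set

noncomputable def Ffun (a x : ℝ) : ℝ :=
  a * (1 - a) * ((1 - x) * (-Real.log x)) - (a - x ^ (1 - a) + (1 - a) * x)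



lemma Ffun_hasDerivAt (a : ℝ) {x : ℝ} (hx : 0 < x) :
    HasDerivAt (Ffun a)
      (a * (1 - a) * ((0 - 1) * (-Real.log x) + (1 - x) * (-x⁻¹))
        - (0 - (1 - a) * x ^ (1 - a - 1) + (1 - a) * 1)) x := by
  have hlog : HasDerivAt Real.log x⁻¹ x := Real.hasDerivAt_log hx.ne'
  have h1 : HasDerivAt (fun y : ℝ => 1 - y) (0 - 1) x :=
    (hasDerivAt_const x (1:ℝ)).sub (hasDerivAt_id x)
  have h2 : HasDerivAt (fun y : ℝ => (1 - y) * (-Real.log y))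
      ((0 - 1) * (-Real.log x) + (1 - x) * (-x⁻¹)) x := h1.mul hlog.neg
  have h3 : HasDerivAt (fun y : ℝ => y ^ (1 - a)) ((1 - a) * x ^ (1 - a - 1)) x :=
    Real.hasDerivAt_rpow_const (Or.inl hx.ne')
  have h4 : HasDerivAt (fun y : ℝ => a - y ^ (1 - a) + (1 - a) * y)
      (0 - (1 - a) * x ^ (1 - a - 1) + (1 - a) * 1) x :=
    (((hasDerivAt_const x a).sub h3).add ((hasDerivAt_id x).const_mul (1 - a)))
  exact (h2.const_mul (a * (1 - a))).sub h4

lemma Ffun_deriv_nonpos (a : ℝ) (ha : 0 < a) (ha1 : a < 1) {x : ℝ}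
    (hx : 0 < x) (hx1 : x < 1) : deriv (Ffun a) x ≤ 0 := by
  rw [(Ffun_hasDerivAt a hx).deriv]
  have hlog : Real.log x < 0 := Real.log_neg hx hx1
  have hb : (1 + (1 - x) / x) ^ a ≤ 1 + a * ((1 - x) / x) := by
    refine rpow_one_add_le_one_add_mul_self ?_ ha.le ha1.le
    have : (0:ℝ) ≤ (1 - x) / x := div_nonneg (by linarith) hx.le
    linarith
  have e1 : 1 + (1 - x) / x = x⁻¹ := by field_simp; ring
  have e2 : x ^ (1 - a - 1) = x⁻¹ ^ a := by
    rw [show (1:ℝ) - a - 1 = -a by ring, Real.rpow_neg hx.le, ← Real.inv_rpow hx.le]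
  rw [e1] at hb
  rw [e2]
  have e3 : (1 - x) * (-x⁻¹) = -((1 - x) / x) := by field_simp
  rw [e3]
  have h5 : (1 - a) * (x⁻¹ ^ a) ≤ (1 - a) * (1 + a * ((1 - x) / x)) :=
    mul_le_mul_of_nonneg_left hb (by linarith)
  nlinarith [mul_pos ha (show (0:ℝ) < 1 - a by linarith), mul_pos (mul_pos ha (show (0:ℝ) < 1 - a by linarith)) (neg_pos.2 hlog)]

lemma Ffun_nonneg (a : ℝ) (ha : 0 < a) (ha1 : a < 1) {s : ℝ}
    (hs : 0 < s) (hs1 : s ≤ 1) : 0 ≤ Ffun a s := by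
  have hanti : AntitoneOn (Ffun a) (Set.Ioc 0 1) := by
    have hint : interior (Set.Ioc (0:ℝ) 1) = Set.Ioo 0 1 := interior_Ioc
    refine antitoneOn_of_deriv_nonpos (convex_Ioc 0 1) ?_ ?_ ?_
    · intro x hx
      exact ((Ffun_hasDerivAt a hx.1).continuousAt).continuousWithinAt
    · intro x hx
      rw [hint] at hx
      exact ((Ffun_hasDerivAt a hx.1).differentiableAt).differentiableWithinAt
    · intro x hx
      rw [hint] at hx
      exact Ffun_deriv_nonpos a ha ha1 hx.1 hx.2
  have h1 : Ffun a 1 = 0 := by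
    norm_num [Ffun, Real.log_one, Real.one_rpow]
  have := hanti (Set.mem_Ioc.2 ⟨hs, hs1⟩) (Set.mem_Ioc.2 ⟨one_pos, le_refl 1⟩) hs1
  rw [h1] at this
  exact this

/-- Key inequality: `h(s) ≤ a(1-a) s^{a-1} (1-s) (-ln s)` on `(0,1)`. -/
lemma key_ineq (a : ℝ) (ha : 0 < a) (ha1 : a < 1) {s : ℝ}
    (hs : 0 < s) (hs1 : s ≤ 1) :
    a * s ^ (a - 1) - 1 + (1 - a) * s ^ a ≤
      a * (1 - a) * s ^ (a - 1) * (1 - s) * (-Real.log s) := by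
  have hF := Ffun_nonneg a ha ha1 hs hs1
  have hP : 0 < s ^ (a - 1) := Real.rpow_pos_of_pos hs _
  have e1 : s ^ (a - 1) * s ^ (1 - a) = 1 := by
    rw [← Real.rpow_add hs]; norm_num
  have e2 : s ^ (a - 1) * s = s ^ a := by
    rw [show s ^ (a-1) * s = s ^ (a-1) * s ^ (1:ℝ) by rw [Real.rpow_one],
      ← Real.rpow_add hs]; norm_num
  have := mul_le_mul_of_nonneg_left (sub_nonneg.1 hF) hP.le
  unfold Ffun at this
  nlinarith [this, e1, e2]


lemma nufun_hasDerivAt (a : ℝ) {x : ℝ} (hx : 0 < x) (hx1 : x < 1) :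
    HasDerivAt (nufun a)
      (((a * ((a - 1) * x ^ (a - 1 - 1)) + (1 - a) * (a * x ^ (a - 1))) * Real.log x
          - (a * x ^ (a - 1) - 1 + (1 - a) * x ^ a) * x⁻¹) / (Real.log x) ^ 2) x := by
  have hlogne : Real.log x ≠ 0 := ne_of_lt (Real.log_neg hx hx1)
  have h3 : HasDerivAt (fun y : ℝ => y ^ (a - 1)) ((a - 1) * x ^ (a - 1 - 1)) x :=
    Real.hasDerivAt_rpow_const (Or.inl hx.ne')
  have h4 : HasDerivAt (fun y : ℝ => y ^ a) (a * x ^ (a - 1)) x :=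
    Real.hasDerivAt_rpow_const (Or.inl hx.ne')
  have hnum : HasDerivAt (fun y : ℝ => a * y ^ (a - 1) - 1 + (1 - a) * y ^ a)
      (a * ((a - 1) * x ^ (a - 1 - 1)) + (1 - a) * (a * x ^ (a - 1))) x :=
    ((h3.const_mul a).sub_const 1).add (h4.const_mul (1 - a))
  have hlog : HasDerivAt Real.log x⁻¹ x := Real.hasDerivAt_log hx.ne'
  have := hnum.div hlog hlogne
  exact this

lemma nufun_deriv_nonneg (a : ℝ) (ha : 0 < a) (ha1 : a < 1) {x : ℝ}
    (hx : 0 < x) (hx1 : x < 1) : 0 ≤ deriv (nufun a) x := by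
  rw [(nufun_hasDerivAt a hx hx1).deriv]
  have hlog : Real.log x < 0 := Real.log_neg hx hx1
  have hkey := key_ineq a ha ha1 hx hx1.le
  have hP : 0 < x ^ (a - 1) := Real.rpow_pos_of_pos hx _
  have e1 : x ^ (a - 1 - 1) = x ^ (a - 1) * x⁻¹ := by
    rw [show a - 1 - 1 = (a - 1) + (-1) by ring, Real.rpow_add hx, Real.rpow_neg_one]
  apply div_nonneg _ (sq_nonneg _)
  set L := Real.log x
  set num := a * x ^ (a - 1) - 1 + (1 - a) * x ^ a with hnum
  have expand : ((a * ((a - 1) * x ^ (a - 1 - 1)) + (1 - a) * (a * x ^ (a - 1))) * L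
      - num * x⁻¹) * x = a * (1 - a) * x ^ (a - 1) * (1 - x) * (-L) - num := by
    rw [e1]
    field_simp
    ring
  nlinarith [expand, hkey, hx]

lemma nufun_mono (a : ℝ) (ha : 0 < a) (ha1 : a < 1) :
    MonotoneOn (nufun a) (Set.Ioo (0:ℝ) 1) := by
  have hint : interior (Set.Ioo (0:ℝ) 1) = Set.Ioo 0 1 := interior_Ioo
  refine monotoneOn_of_deriv_nonneg (convex_Ioo 0 1) ?_ ?_ ?_
  · intro x hx
    exact ((nufun_hasDerivAt a hx.1 hx.2).continuousAt).continuousWithinAt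
  · intro x hx
    rw [hint] at hx
    exact ((nufun_hasDerivAt a hx.1 hx.2).differentiableAt).differentiableWithinAt
  · intro x hx
    rw [hint] at hx
    exact nufun_deriv_nonneg a ha ha1 hx.1 hx.2

lemma nufun_mul_log {a s : ℝ} (hs : 0 < s) (hs1 : s < 1) :
    nufun a s * Real.log s = kfun a s - gfun a s := by
  have hlogne : Real.log s ≠ 0 := ne_of_lt (Real.log_neg hs hs1)
  rw [nufun, div_mul_cancel₀ _ hlogne, kfun, gfun]
  ring

lemma phi_nonneg (a ξ : ℝ) (ha : 0 < a) (ha1 : a < 1) (hξ : ξ ∈ Set.Ioo (0:ℝ) 1)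
    {s : ℝ} (hs : 0 < s) (hsξ : s ≤ ξ) :
    0 ≤ kfun a s - gfun a s - nufun a ξ * Real.log s := by
  have hs1 : s < 1 := lt_of_le_of_lt hsξ hξ.2
  have hlog : Real.log s < 0 := Real.log_neg hs hs1
  have hmono : nufun a s ≤ nufun a ξ :=
    nufun_mono a ha ha1 ⟨hs, hs1⟩ ⟨hξ.1, hξ.2⟩ hsξ
  have := nufun_mul_log (a := a) hs hs1
  nlinarith [mul_nonneg (neg_nonneg.2 hlog.le) (sub_nonneg.2 hmono)]

lemma phi_nonpos (a ξ : ℝ) (ha : 0 < a) (ha1 : a < 1) (hξ : ξ ∈ Set.Ioo (0:ℝ) 1)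
    {s : ℝ} (hξs : ξ ≤ s) (hs1 : s ≤ 1) :
    kfun a s - gfun a s - nufun a ξ * Real.log s ≤ 0 := by
  have hs : 0 < s := lt_of_lt_of_le hξ.1 hξs
  rcases eq_or_lt_of_le hs1 with h1 | h1
  · subst h1
    simp [kfun, gfun, Real.log_one, Real.one_rpow]
  · have hlog : Real.log s < 0 := Real.log_neg hs h1
    have hmono : nufun a ξ ≤ nufun a s :=
      nufun_mono a ha ha1 ⟨hξ.1, hξ.2⟩ ⟨hs, h1⟩ hξs
    have := nufun_mul_log (a := a) hs h1
    nlinarith [mul_nonneg (neg_nonneg.2 hlog.le) (sub_nonneg.2 hmono)]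


lemma gfun_zero {a : ℝ} (ha : 0 < a) : gfun a 0 = 0 := by
  simp [gfun, Real.zero_rpow ha.ne']

lemma gfun_neg {a s : ℝ} (ha : 0 < a) (ha1 : a < 1) (hs : 0 < s) : gfun a s < 0 :=
  mul_neg_of_neg_of_pos (by linarith) (Real.rpow_pos_of_pos hs a)

/-- `g` is antitone, converse form: from `g x ≤ g y` conclude `y ≤ x`. -/
lemma le_of_gfun_le {a x y : ℝ} (ha : 0 < a) (ha1 : a < 1) (hx : 0 ≤ x) (hy : 0 ≤ y)
    (h : gfun a x ≤ gfun a y) : y ≤ x := by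
  by_contra hc
  push_neg at hc
  have := Real.rpow_lt_rpow hx hc ha
  unfold gfun at h
  nlinarith

lemma kfun_anti {a x y : ℝ} (ha : 0 < a) (ha1 : a < 1) (hx : 0 < x) (hxy : x ≤ y) :
    kfun a y ≤ kfun a x := by
  have := Real.rpow_le_rpow_of_nonpos hx hxy (by linarith : a - 1 ≤ 0)
  unfold kfun
  nlinarith


end KKTAux

theorem kkt_ratios_decreasing (a ξ : ℝ) (ha : 0 < a) (ha1 : a < 1)
    (hξ : ξ ∈ Set.Ioo (0 : ℝ) 1) (N : ℕ) (hN : 1 ≤ N) (w : ℕ → ℝ)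
    (hw : ∀ n, n < N → 0 < w n ∧ w n ≤ 1) (hwN : w N = 0)
    (h1 : 2 * (gfun a (w 1) - gfun a (w 0)) =
      kfun a (w 0) - gfun a (w 0) - nufun a ξ * Real.log (w 0))
    (hrec : ∀ n, 2 ≤ n → n ≤ N →
      ((n : ℝ) + 1) * (gfun a (w n) - gfun a (w (n - 1))) =
        ((n : ℝ) - 1) * (kfun a (w (n - 1)) - kfun a (w (n - 2))) +
          kfun a (w (n - 1)) - gfun a (w (n - 1)) - nufun a ξ * Real.log (w (n - 1))) :
    w 0 ≤ ξ ∧ ∀ n, n < N → w (n + 1) ≤ w n := by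
  -- First: w 0 ≤ ξ, by contradiction.
  have hw0 : w 0 ≤ ξ := by
    by_contra hc
    push_neg at hc  -- ξ < w 0
    -- chain: the sequence is nondecreasing and stays above ξ as long as indices < N
    have chain : ∀ n, n + 1 < N → w n ≤ w (n + 1) ∧ ξ < w (n + 1) := by
      intro n
      induction n using Nat.strong_induction_on with
      | _ n ih =>
        intro hn
        match n with
        | 0 =>
          have hw0N : 0 < N := by omega
          have hphi := phi_nonpos a ξ ha ha1 hξ hc.le (hw 0 hw0N).2
          have hg : gfun a (w 1) ≤ gfun a (w 0) := by linarith
          have h01 : w 0 ≤ w 1 :=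
            le_of_gfun_le ha ha1 (hw 1 hn).1.le (hw 0 hw0N).1.le hg
          exact ⟨h01, lt_of_lt_of_le hc h01⟩
        | m + 1 =>
          obtain ⟨hmono, hξm⟩ := ih m (by omega) (by omega)
          have hm2N : m + 2 ≤ N := by omega
          have heq := hrec (m + 2) (by omega) hm2N
          have e1 : m + 2 - 1 = m + 1 := rfl
          have e2 : m + 2 - 2 = m := rfl
          rw [e1, e2] at heq
          have hk : kfun a (w (m + 1)) ≤ kfun a (w m) :=
            kfun_anti ha ha1 (hw m (by omega)).1 hmono
          have hphi := phi_nonpos a ξ ha ha1 hξ hξm.le (hw (m + 1) (by omega)).2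
          have hcoef : (0:ℝ) ≤ ((m + 2 : ℕ) : ℝ) - 1 := by push_cast; linarith
          have hcoef2 : (0:ℝ) < ((m + 2 : ℕ) : ℝ) + 1 := by push_cast; linarith
          have hg : gfun a (w (m + 2)) ≤ gfun a (w (m + 1)) := by
            nlinarith [mul_nonpos_of_nonneg_of_nonpos hcoef (sub_nonpos.2 hk)]
          have h12 : w (m + 1) ≤ w (m + 2) :=
            le_of_gfun_le ha ha1 (hw (m + 2) hn).1.le (hw (m + 1) (by omega)).1.le hg
          exact ⟨h12, lt_of_lt_of_le hξm h12⟩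
    -- Now derive a contradiction using the last equation.
    rcases eq_or_lt_of_le hN with h1N | h2N
    · -- N = 1 : w 1 = 0
      have hw1 : w 1 = 0 := by rw [← h1N] at hwN; exact hwN
      rw [hw1, gfun_zero ha] at h1
      have hgneg := gfun_neg ha ha1 (hw 0 (by omega)).1
      have hphi := phi_nonpos a ξ ha ha1 hξ hc.le (hw 0 (by omega)).2
      linarith
    · -- N ≥ 2
      have heq := hrec N (by omega) (le_refl N)
      have hN2 : 2 ≤ N := h2N
      have e1 : N - 1 + 1 = N := by omega
      have e2 : N - 2 + 1 = N - 1 := by omega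
      obtain ⟨hmono, hξm⟩ := chain (N - 2) (by omega)
      rw [e2] at hmono hξm
      have hkk : kfun a (w (N - 1)) ≤ kfun a (w (N - 2)) :=
        kfun_anti ha ha1 (hw (N - 2) (by omega)).1 hmono
      have hphi := phi_nonpos a ξ ha ha1 hξ hξm.le (hw (N - 1) (by omega)).2
      have hgneg := gfun_neg ha ha1 (hw (N - 1) (by omega)).1
      rw [hwN, gfun_zero ha] at heq
      have hcoef : (0:ℝ) ≤ (N : ℝ) - 1 := by
        have : (2:ℝ) ≤ (N : ℝ) := by exact_mod_cast hN2
        linarith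
      have hcoef2 : (0:ℝ) < (N : ℝ) + 1 := by positivity
      nlinarith [mul_nonpos_of_nonneg_of_nonpos hcoef (sub_nonpos.2 hkk),
        mul_pos hcoef2 (neg_pos.2 hgneg)]
  refine ⟨hw0, ?_⟩
  -- Second part: the sequence is nonincreasing.
  have wnonneg : ∀ n, n ≤ N → 0 ≤ w n := by
    intro n hn
    rcases eq_or_lt_of_le hn with h | h
    · subst h; rw [hwN]
    · exact (hw n h).1.le
  have main : ∀ n, n < N → w (n + 1) ≤ w n ∧ w n ≤ ξ := by
    intro n
    induction n using Nat.strong_induction_on with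
    | _ n ih =>
      intro hn
      match n with
      | 0 =>
        have hphi := phi_nonneg a ξ ha ha1 hξ (hw 0 hn).1 hw0
        have hg : gfun a (w 0) ≤ gfun a (w 1) := by linarith
        exact ⟨le_of_gfun_le ha ha1 (wnonneg 0 (by omega)) (wnonneg 1 (by omega)) hg, hw0⟩
      | m + 1 =>
        obtain ⟨hmono, hmξ⟩ := ih m (by omega) (by omega)
        have hmξ' : w (m + 1) ≤ ξ := le_trans hmono hmξ
        have heq := hrec (m + 2) (by omega) (by omega)
        have e1 : m + 2 - 1 = m + 1 := rfl
        have e2 : m + 2 - 2 = m := rfl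
        rw [e1, e2] at heq
        have hk : kfun a (w m) ≤ kfun a (w (m + 1)) :=
          kfun_anti ha ha1 (hw (m + 1) hn).1 hmono
        have hphi := phi_nonneg a ξ ha ha1 hξ (hw (m + 1) hn).1 hmξ'
        have hcoef : (0:ℝ) ≤ ((m + 2 : ℕ) : ℝ) - 1 := by push_cast; linarith
        have hcoef2 : (0:ℝ) < ((m + 2 : ℕ) : ℝ) + 1 := by push_cast; linarith
        have hg : gfun a (w (m + 1)) ≤ gfun a (w (m + 2)) := by
          nlinarith [mul_nonneg hcoef (sub_nonneg.2 hk)]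
        exact ⟨le_of_gfun_le ha ha1 (wnonneg (m + 1) (by omega))
          (wnonneg (m + 2) (by omega)) hg, hmξ'⟩
  exact fun n hn => (main n hn).1
end

section
/- Let 0 < a < 1 and ξ ∈ (0,1). Let w : ℕ → ℝ satisfy w_n > 0 and w_{n+1} ≤ w_n for all n ∈ ℕ, and w_0 ≤ ξ. Assume that 2(g(w_1) − g(w_0)) = k(w_0) − g(w_0) − ν(ξ,a) ln w_0 and that, for every n ≥ 2, (n+1)(g(w_n) − g(w_{n−1})) = (n−1)(k(w_{n−1}) − k(w_{n−2})) + k(w_{n−1}) − g(w_{n−1}) − ν(ξ,a) ln w_{n−1}. Then w_n = ξ for every n ∈ ℕ. -/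
noncomputable def hnum (a s : ℝ) : ℝ := a * s ^ (a - 1) - 1 + (1 - a) * s ^ a

lemma exp_cvx {x : ℝ} (hx : x ≠ 0) {l : ℝ} (hl0 : 0 < l) (hl1 : l < 1) :
    Real.exp (l * x) < l * Real.exp x + (1 - l) := by
  have h := strictConvexOn_exp.2 (Set.mem_univ x) (Set.mem_univ (0 : ℝ)) hx hl0
    (by linarith : (0:ℝ) < 1 - l) (by ring)
  simpa using h

lemma hnum_exp (a s : ℝ) (hs : 0 < s) :
    hnum a s = a * Real.exp ((1 - a) * (-Real.log s))
      + (1 - a) * Real.exp (-a * (-Real.log s)) - 1 := by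
  unfold hnum
  rw [Real.rpow_def_of_pos hs, Real.rpow_def_of_pos hs]
  have e1 : Real.log s * (a - 1) = (1 - a) * (-Real.log s) := by ring
  have e2 : Real.log s * a = -a * (-Real.log s) := by ring
  rw [e1, e2]; ring

lemma hnum_pos {a s : ℝ} (ha : 0 < a) (ha1 : a < 1) (hs0 : 0 < s) (hs1 : s < 1) :
    0 < hnum a s := by
  have htpos : 0 < -Real.log s := by have := Real.log_neg hs0 hs1; linarith
  rw [hnum_exp a s hs0]
  set t := -Real.log s with ht
  have hxy : (1 - a) * t ≠ -a * t := by
    intro h; nlinarith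
  have h := strictConvexOn_exp.2 (Set.mem_univ ((1 - a) * t)) (Set.mem_univ (-a * t)) hxy ha
    (by linarith : (0:ℝ) < 1 - a) (by ring)
  simp only [smul_eq_mul] at h
  rw [show a * ((1 - a) * t) + (1 - a) * (-a * t) = 0 by ring, Real.exp_zero] at h
  linarith

lemma key_lt {a s u : ℝ} (ha : 0 < a) (ha1 : a < 1) (hs : 0 < s) (hsu : s < u) (hu1 : u < 1) :
    hnum a u * (-Real.log s) < hnum a s * (-Real.log u) := by
  have hu0 : 0 < u := hs.trans hsu
  have h1 : 0 < -Real.log u := by have := Real.log_neg hu0 hu1; linarith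
  have h12 : -Real.log u < -Real.log s := by have := Real.log_lt_log hs hsu; linarith
  set t1 := -Real.log u with ht1
  set t2 := -Real.log s with ht2
  have h2 : 0 < t2 := h1.trans h12
  set l := t1 / t2 with hl
  have hl0 : 0 < l := div_pos h1 h2
  have hl1 : l < 1 := (div_lt_one h2).2 h12
  have hlt : l * t2 = t1 := div_mul_cancel₀ _ h2.ne'
  have e1 := exp_cvx (show (1 - a) * t2 ≠ 0 from ne_of_gt (by nlinarith)) hl0 hl1
  have e2 := exp_cvx (show -a * t2 ≠ 0 from ne_of_lt (by nlinarith)) hl0 hl1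
  rw [show l * ((1 - a) * t2) = (1 - a) * (l * t2) by ring, hlt] at e1
  rw [show l * (-a * t2) = -a * (l * t2) by ring, hlt] at e2
  have hmain : hnum a u < l * hnum a s := by
    rw [hnum_exp a u hu0, hnum_exp a s hs, ← ht1, ← ht2]
    nlinarith [e1, e2]
  calc hnum a u * t2 < l * hnum a s * t2 := by
        exact mul_lt_mul_of_pos_right hmain h2
    _ = hnum a s * t1 := by rw [mul_comm l _, mul_assoc, hlt]

lemma key_le {a s u : ℝ} (ha : 0 < a) (ha1 : a < 1) (hs : 0 < s) (hsu : s ≤ u) (hu1 : u < 1) :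
    hnum a u * (-Real.log s) ≤ hnum a s * (-Real.log u) := by
  rcases eq_or_lt_of_le hsu with h | h
  · subst h; exact le_refl _
  · exact (key_lt ha ha1 hs h hu1).le

theorem kkt_ratios_constant (a ξ : ℝ) (ha : 0 < a) (ha1 : a < 1)
    (hξ : ξ ∈ Set.Ioo (0 : ℝ) 1) (w : ℕ → ℝ)
    (hpos : ∀ n, 0 < w n) (hdec : ∀ n, w (n + 1) ≤ w n) (hw0 : w 0 ≤ ξ)
    (h1 : 2 * (gfun a (w 1) - gfun a (w 0)) =
      kfun a (w 0) - gfun a (w 0) - nufun a ξ * Real.log (w 0))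
    (hrec : ∀ n : ℕ, 2 ≤ n →
      ((n : ℝ) + 1) * (gfun a (w n) - gfun a (w (n - 1))) =
        ((n : ℝ) - 1) * (kfun a (w (n - 1)) - kfun a (w (n - 2))) +
          kfun a (w (n - 1)) - gfun a (w (n - 1)) - nufun a ξ * Real.log (w (n - 1))) :
    ∀ n, w n = ξ := by
  obtain ⟨hξ0, hξ1⟩ := hξ
  have hlogξ : Real.log ξ < 0 := Real.log_neg hξ0 hξ1
  have hkg : ∀ s, kfun a s - gfun a s = hnum a s := by
    intro s; unfold kfun gfun hnum; ring
  have hνlog : nufun a ξ * Real.log ξ = hnum a ξ := by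
    show (a * ξ ^ (a - 1) - 1 + (1 - a) * ξ ^ a) / Real.log ξ * Real.log ξ = _
    rw [div_mul_cancel₀ _ (ne_of_lt hlogξ)]; rfl
  have ginj : ∀ {x y : ℝ}, 0 < x → 0 < y → gfun a x = gfun a y → x = y := by
    intro x y hx hy hxy
    unfold gfun at hxy
    have hxa : x ^ a = y ^ a := mul_left_cancel₀ (show a - 1 ≠ 0 by linarith) hxy
    rcases lt_trichotomy x y with h | h | h
    · exact absurd hxa (ne_of_lt (Real.rpow_lt_rpow hx.le h ha))
    · exact h
    · exact absurd hxa.symm (ne_of_lt (Real.rpow_lt_rpow hy.le h ha))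
  rcases eq_or_lt_of_le hw0 with heq | hlt
  · -- case w 0 = ξ
    have main : ∀ n, w n = ξ ∧ w (n + 1) = ξ := by
      intro n
      induction n with
      | zero =>
          refine ⟨heq, ?_⟩
          rw [heq] at h1
          have hg : gfun a (w 1) = gfun a ξ := by
            have := hkg ξ
            linarith [hνlog]
          exact ginj (hpos 1) hξ0 hg
      | succ n ih =>
          refine ⟨ih.2, ?_⟩
          have hr := hrec (n + 2) (by omega)
          simp only [show n + 2 - 1 = n + 1 by omega, show n + 2 - 2 = n by omega] at hr
          rw [ih.1, ih.2] at hr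
          push_cast at hr
          have hdiff : ((n : ℝ) + 3) * (gfun a (w (n + 2)) - gfun a ξ) = 0 := by
            have := hkg ξ
            nlinarith [hr, hνlog]
          have h3 : ((n : ℝ) + 3) ≠ 0 := by positivity
          have : gfun a (w (n + 2)) - gfun a ξ = 0 := by
            rcases mul_eq_zero.mp hdiff with h | h
            · exact absurd h h3
            · exact h
          exact ginj (hpos (n + 2)) hξ0 (by linarith)
    intro n; exact (main n).1
  · -- case w 0 < ξ : contradiction
    exfalso
    have hw0pos := hpos 0
    have hw0lt1 : w 0 < 1 := hlt.trans hξ1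
    have hlogw0 : Real.log (w 0) < 0 := Real.log_neg hw0pos hw0lt1
    have hanti : Antitone w := antitone_nat_of_succ_le hdec
    have hwle : ∀ n, w n ≤ w 0 := fun n => hanti (Nat.zero_le n)
    have hwlt1 : ∀ n, w n < 1 := fun n => lt_of_le_of_lt (hwle n) hw0lt1
    have hνneg : nufun a ξ < 0 := by
      have h0 : 0 < hnum a ξ := hnum_pos ha ha1 hξ0 hξ1
      have h1' : nufun a ξ * Real.log ξ > 0 := by rw [hνlog]; exact h0
      nlinarith [hlogξ]
    -- the summed identity
    have ident : ∀ n : ℕ, ((n : ℝ) + 2) * gfun a (w (n + 1)) - ((n : ℝ) + 1) * kfun a (w n)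
        = gfun a (w 0) - nufun a ξ * ∑ m ∈ Finset.range (n + 1), Real.log (w m) := by
      intro n
      induction n with
      | zero =>
          rw [Finset.sum_range_one]
          push_cast
          linear_combination h1
      | succ n ih =>
          have hr := hrec (n + 2) (by omega)
          simp only [show n + 2 - 1 = n + 1 by omega, show n + 2 - 2 = n by omega] at hr
          push_cast at hr
          rw [Finset.sum_range_succ]
          push_cast
          linear_combination hr + ih
    -- g is antitone on the sequence values
    have hgmono : ∀ n, gfun a (w n) ≤ gfun a (w (n + 1)) := by
      intro n
      unfold gfun
      have h1' : w (n + 1) ^ a ≤ w n ^ a :=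
        Real.rpow_le_rpow (hpos (n + 1)).le (hdec n) ha.le
      nlinarith [h1']
    -- main inequality from the identity
    have bound : ∀ n : ℕ, gfun a (w (n + 1)) - gfun a (w 0)
        ≥ ((n : ℝ) + 1) * ((hnum a (w n) - nufun a ξ * Real.log (w n))
            - (gfun a (w (n + 1)) - gfun a (w n))) := by
      intro n
      have Hid := ident n
      have hsum : ((n : ℝ) + 1) * Real.log (w n)
          ≤ ∑ m ∈ Finset.range (n + 1), Real.log (w m) := by
        have hterm : ∀ m ∈ Finset.range (n + 1), Real.log (w n) ≤ Real.log (w m) := by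
          intro m hm
          have hm' := Finset.mem_range.mp hm
          exact Real.log_le_log (hpos n) (hanti (by omega))
        calc ((n : ℝ) + 1) * Real.log (w n)
            = ∑ _m ∈ Finset.range (n + 1), Real.log (w n) := by
              rw [Finset.sum_const, Finset.card_range]; push_cast; ring
          _ ≤ _ := Finset.sum_le_sum hterm
      have fact2 : nufun a ξ * (∑ m ∈ Finset.range (n + 1), Real.log (w m))
          ≤ nufun a ξ * (((n : ℝ) + 1) * Real.log (w n)) :=
        mul_le_mul_of_nonpos_left hsum hνneg.le
      have hkgn := hkg (w n)
      nlinarith [Hid, fact2, hkgn]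
    -- positivity of phi at w 0
    have key2 : hnum a ξ * (-Real.log (w 0)) < hnum a (w 0) * (-Real.log ξ) :=
      key_lt ha ha1 hw0pos hlt hξ1
    have hcpos : 0 < hnum a (w 0) - nufun a ξ * Real.log (w 0) := by
      nlinarith [key2, hνlog, hlogξ]
    set c : ℝ := hnum a (w 0) - nufun a ξ * Real.log (w 0) with hcdef
    -- phi lower bound along the sequence
    have hφ : ∀ n : ℕ, c ≤ hnum a (w n) - nufun a ξ * Real.log (w n) := by
      intro n
      have hs0 : 0 < w n := hpos n
      have hsw0 : w n ≤ w 0 := hwle n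
      have key1 : hnum a (w 0) * (-Real.log (w n)) ≤ hnum a (w n) * (-Real.log (w 0)) :=
        key_le ha ha1 hs0 hsw0 hw0lt1
      have hq : Real.log (w n) ≤ Real.log (w 0) := Real.log_le_log hs0 hsw0
      rw [hcdef]
      nlinarith [key1,
        mul_nonneg (by linarith : (0:ℝ) ≤ Real.log (w 0) - Real.log (w n)) hcpos.le,
        hlogw0]
    -- uniform upper bound on the g-gaps
    have hgap : ∀ n : ℕ, gfun a (w n) - gfun a (w 0) ≤ 1 - a := by
      intro n
      have hg1 : gfun a (w n) ≤ 0 := by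
        unfold gfun
        nlinarith [Real.rpow_nonneg (hpos n).le a]
      have hg0 : -gfun a (w 0) ≤ 1 - a := by
        unfold gfun
        nlinarith [Real.rpow_le_one hw0pos.le hw0lt1.le ha.le,
          Real.rpow_nonneg hw0pos.le a]
      linarith
    -- telescoping sum of gaps
    have htel : ∀ N : ℕ, ∑ m ∈ Finset.range N, (gfun a (w (m + 1)) - gfun a (w m))
        = gfun a (w N) - gfun a (w 0) := Finset.sum_range_sub fun m => gfun a (w m)
    -- choose N large
    obtain ⟨N, hN⟩ := exists_nat_gt ((1 - a) / (c / 2))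
    have hchalf : 0 < c / 2 := by linarith
    have hNbig : 1 - a < (N : ℝ) * (c / 2) := by
      rw [div_lt_iff₀ hchalf] at hN
      linarith
    -- pigeonhole: some gap in [N, 2N) is small
    have hsmall : ∃ n : ℕ, N ≤ n ∧ gfun a (w (n + 1)) - gfun a (w n) ≤ c / 2 := by
      by_contra hcon
      push_neg at hcon
      have hlow : ∀ m ∈ Finset.Ico N (N + N), c / 2 ≤ gfun a (w (m + 1)) - gfun a (w m) := by
        intro m hm
        exact (hcon m (Finset.mem_Ico.mp hm).1).le
      have hsum1 : (N : ℝ) * (c / 2) ≤ ∑ m ∈ Finset.Ico N (N + N),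
          (gfun a (w (m + 1)) - gfun a (w m)) := by
        calc (N : ℝ) * (c / 2) = ∑ _m ∈ Finset.Ico N (N + N), (c / 2) := by
              rw [Finset.sum_const, Nat.card_Ico, Nat.add_sub_cancel]; push_cast; ring
          _ ≤ _ := Finset.sum_le_sum hlow
      have hsum2 : ∑ m ∈ Finset.Ico N (N + N), (gfun a (w (m + 1)) - gfun a (w m))
          ≤ ∑ m ∈ Finset.range (N + N), (gfun a (w (m + 1)) - gfun a (w m)) := by
        apply Finset.sum_le_sum_of_subset_of_nonneg
        · intro x hx
          rw [Finset.mem_range]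
          exact (Finset.mem_Ico.mp hx).2
        · intro m _ _
          linarith [hgmono m]
      rw [htel (N + N)] at hsum2
      have := hgap (N + N)
      linarith
    obtain ⟨n, hnN, hdn⟩ := hsmall
    have hb := bound n
    have hφn := hφ n
    have hgapn := hgap (n + 1)
    have hn1 : (N : ℝ) ≤ (n : ℝ) := by exact_mod_cast hnN
    have hfinal : ((n : ℝ) + 1) * (c / 2)
        ≤ ((n : ℝ) + 1) * ((hnum a (w n) - nufun a ξ * Real.log (w n))
            - (gfun a (w (n + 1)) - gfun a (w n))) := by
      apply mul_le_mul_of_nonneg_left _ (by positivity)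
      linarith
    have hlhs : (N : ℝ) * (c / 2) ≤ ((n : ℝ) + 1) * (c / 2) := by
      apply mul_le_mul_of_nonneg_right _ hchalf.le
      linarith
    linarith
end

section
/- For every 0 < a < 1, the function s ↦ ν(s,a) = (a s^{a−1} − 1 + (1−a) s^a)/ln s is strictly increasing on the interval (0,1), and ν(s,a) < 0 for every s ∈ (0,1). -/
namespace NufunAux

open Real Set

lemma hasDerivAt_F (a : ℝ) {s : ℝ} (hs : s ≠ 0) :
    HasDerivAt (fun x : ℝ => a * x ^ (a - 1) - 1 + (1 - a) * x ^ a)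
      (a * ((a - 1) * s ^ (a - 1 - 1)) + (1 - a) * (a * s ^ (a - 1))) s := by
  have h1 := (Real.hasDerivAt_rpow_const (x := s) (p := a - 1) (Or.inl hs)).const_mul a
  have h2 := (Real.hasDerivAt_rpow_const (x := s) (p := a) (Or.inl hs)).const_mul (1 - a)
  exact (h1.sub_const 1).add h2

lemma hasDerivAt_H (a : ℝ) {s : ℝ} (hs : s ≠ 0) :
    HasDerivAt (fun x : ℝ => a * (1 - a) * (x ^ a - x ^ (a - 1)))
      (a * (1 - a) * (a * s ^ (a - 1) - (a - 1) * s ^ (a - 1 - 1))) s := by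
  have h1 := Real.hasDerivAt_rpow_const (x := s) (p := a) (Or.inl hs)
  have h2 := Real.hasDerivAt_rpow_const (x := s) (p := a - 1) (Or.inl hs)
  exact (h1.sub h2).const_mul (a * (1 - a))

lemma hasDerivAt_G (a : ℝ) {s : ℝ} (hs : s ≠ 0) :
    HasDerivAt (fun x : ℝ =>
        a * (1 - a) * (x ^ a - x ^ (a - 1)) * Real.log x
          - (a * x ^ (a - 1) - 1 + (1 - a) * x ^ a))
      (a * (1 - a) * (a * s ^ (a - 1) - (a - 1) * s ^ (a - 1 - 1)) * Real.log s
        + a * (1 - a) * (s ^ a - s ^ (a - 1)) * s⁻¹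
        - (a * ((a - 1) * s ^ (a - 1 - 1)) + (1 - a) * (a * s ^ (a - 1)))) s :=
  ((hasDerivAt_H a hs).mul (Real.hasDerivAt_log hs)).sub (hasDerivAt_F a hs)

lemma rpow_facts {a s : ℝ} (hs : 0 < s) :
    s ^ (a - 1) = s ^ a / s ∧ s ^ (a - 1 - 1) = s ^ a / s / s := by
  have h1 : s ^ (a - 1) = s ^ a / s := by
    rw [Real.rpow_sub hs, Real.rpow_one]
  refine ⟨h1, ?_⟩
  rw [Real.rpow_sub hs, Real.rpow_one, h1]

lemma G_pos (a : ℝ) (ha : 0 < a) (ha1 : a < 1) {s : ℝ} (hs : s ∈ Set.Ioo (0:ℝ) 1) :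
    0 < a * (1 - a) * (s ^ a - s ^ (a - 1)) * Real.log s
        - (a * s ^ (a - 1) - 1 + (1 - a) * s ^ a) := by
  have hanti : StrictAntiOn (fun x : ℝ =>
      a * (1 - a) * (x ^ a - x ^ (a - 1)) * Real.log x
        - (a * x ^ (a - 1) - 1 + (1 - a) * x ^ a)) (Set.Ioc 0 1) := by
    apply strictAntiOn_of_deriv_neg (convex_Ioc 0 1)
    · intro x hx
      exact (hasDerivAt_G a hx.1.ne').continuousAt.continuousWithinAt
    · intro x hx
      rw [interior_Ioc] at hx
      rw [(hasDerivAt_G a hx.1.ne').deriv]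
      obtain ⟨h1, h3⟩ := rpow_facts (a := a) hx.1
      have hw : 0 < x ^ a := Real.rpow_pos_of_pos hx.1 _
      have hL : Real.log x < 0 := Real.log_neg hx.1 hx.2
      have hx0 : x ≠ 0 := hx.1.ne'
      have h1a : 0 < 1 - a := by linarith
      rw [h1, h3]
      have key : a * (1 - a) * (a * (x ^ a / x) - (a - 1) * (x ^ a / x / x)) * Real.log x
          + a * (1 - a) * (x ^ a - x ^ a / x) * x⁻¹
          - (a * ((a - 1) * (x ^ a / x / x)) + (1 - a) * (a * (x ^ a / x)))
          = a * (1 - a) * (x ^ a / x / x) * (a * x + (1 - a)) * Real.log x := by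
        field_simp
        ring
      rw [key]
      have hpos : 0 < a * (1 - a) * (x ^ a / x / x) * (a * x + (1 - a)) := by
        have hax : 0 < a * x + (1 - a) := by nlinarith [hx.1]
        have : 0 < x ^ a / x / x := div_pos (div_pos hw hx.1) hx.1
        exact mul_pos (mul_pos (mul_pos ha h1a) this) hax
      exact mul_neg_of_pos_of_neg hpos hL
  have h1 : (1:ℝ) ∈ Set.Ioc (0:ℝ) 1 := by norm_num
  have hsm : s ∈ Set.Ioc (0:ℝ) 1 := ⟨hs.1, hs.2.le⟩
  have := hanti hsm h1 hs.2
  simpa using this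

lemma F_pos (a : ℝ) (ha : 0 < a) (ha1 : a < 1) {s : ℝ} (hs : s ∈ Set.Ioo (0:ℝ) 1) :
    0 < a * s ^ (a - 1) - 1 + (1 - a) * s ^ a := by
  have hanti : StrictAntiOn (fun x : ℝ =>
      a * x ^ (a - 1) - 1 + (1 - a) * x ^ a) (Set.Ioc 0 1) := by
    apply strictAntiOn_of_deriv_neg (convex_Ioc 0 1)
    · intro x hx
      exact (hasDerivAt_F a hx.1.ne').continuousAt.continuousWithinAt
    · intro x hx
      rw [interior_Ioc] at hx
      rw [(hasDerivAt_F a hx.1.ne').deriv]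
      obtain ⟨h1, h3⟩ := rpow_facts (a := a) hx.1
      have hw : 0 < x ^ a := Real.rpow_pos_of_pos hx.1 _
      have hx0 : x ≠ 0 := hx.1.ne'
      rw [h1, h3]
      have key : a * ((a - 1) * (x ^ a / x / x)) + (1 - a) * (a * (x ^ a / x))
          = a * (1 - a) * (x ^ a / x / x) * (x - 1) := by
        field_simp
        ring
      rw [key]
      have hneg : x - 1 < 0 := by linarith [hx.2]
      have hpos : 0 < a * (1 - a) * (x ^ a / x / x) := by
        have : 0 < x ^ a / x / x := div_pos (div_pos hw hx.1) hx.1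
        exact mul_pos (mul_pos ha (by linarith)) this
      exact mul_neg_of_pos_of_neg hpos hneg
  have h1 : (1:ℝ) ∈ Set.Ioc (0:ℝ) 1 := by norm_num
  have hsm : s ∈ Set.Ioc (0:ℝ) 1 := ⟨hs.1, hs.2.le⟩
  have := hanti hsm h1 hs.2
  simpa using this

end NufunAux

theorem nufun_strictMono_and_neg (a : ℝ) (ha : 0 < a) (ha1 : a < 1) :
    StrictMonoOn (nufun a) (Set.Ioo 0 1) ∧
      ∀ s ∈ Set.Ioo (0 : ℝ) 1, nufun a s < 0 := by
  have hderiv : ∀ s ∈ Set.Ioo (0:ℝ) 1, HasDerivAt (nufun a)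
      (((a * ((a - 1) * s ^ (a - 1 - 1)) + (1 - a) * (a * s ^ (a - 1))) * Real.log s
        - (a * s ^ (a - 1) - 1 + (1 - a) * s ^ a) * s⁻¹) / Real.log s ^ 2) s := by
    intro s hs
    have hL : Real.log s < 0 := Real.log_neg hs.1 hs.2
    have := (NufunAux.hasDerivAt_F a hs.1.ne').div (Real.hasDerivAt_log hs.1.ne') hL.ne
    exact this
  constructor
  · apply strictMonoOn_of_deriv_pos (convex_Ioo 0 1)
    · intro s hs
      exact (hderiv s hs).continuousAt.continuousWithinAt
    · intro s hs
      rw [interior_Ioo] at hs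
      rw [(hderiv s hs).deriv]
      have hL : Real.log s < 0 := Real.log_neg hs.1 hs.2
      have hG := NufunAux.G_pos a ha ha1 hs
      obtain ⟨h1, h3⟩ := NufunAux.rpow_facts (a := a) hs.1
      have hs0 : s ≠ 0 := hs.1.ne'
      have hnum : (a * ((a - 1) * s ^ (a - 1 - 1)) + (1 - a) * (a * s ^ (a - 1))) * Real.log s
          - (a * s ^ (a - 1) - 1 + (1 - a) * s ^ a) * s⁻¹
          = (a * (1 - a) * (s ^ a - s ^ (a - 1)) * Real.log s
              - (a * s ^ (a - 1) - 1 + (1 - a) * s ^ a)) / s := by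
        rw [h1, h3]
        field_simp
        ring
      rw [hnum]
      exact div_pos (div_pos hG hs.1) (pow_two_pos_of_ne_zero hL.ne)
  · intro s hs
    have hL : Real.log s < 0 := Real.log_neg hs.1 hs.2
    have hF := NufunAux.F_pos a ha ha1 hs
    exact div_neg_of_pos_of_neg hF hL
end

section
/- For every 0 < a < 1 and every 0 < z < 1, μ(z,a) < 0. -/
theorem mu_neg (a z : ℝ) (ha : 0 < a) (ha1 : a < 1) (hz : 0 < z) (hz1 : z < 1) :
    mu z a < 0 := by
  have hlz : Real.log z < 0 := Real.log_neg hz hz1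
  set b : ℝ := (a - 1) / a with hb
  have hbneg : b < 0 := div_neg_of_neg_of_pos (by linarith) ha
  have hxy : b * Real.log z ≠ Real.log z := by
    have : 0 < b * Real.log z := mul_pos_of_neg_of_neg hbneg hlz
    linarith
  have key := strictConvexOn_exp.2 (Set.mem_univ (b * Real.log z))
    (Set.mem_univ (Real.log z)) hxy ha (by linarith : (0:ℝ) < 1 - a) (by ring)
  have habl : a * b = a - 1 := by rw [hb]; field_simp [ha.ne']
  have hcomb : a • (b * Real.log z) + (1 - a) • Real.log z = 0 := by
    simp only [smul_eq_mul]
    have : a * (b * Real.log z) = (a - 1) * Real.log z := by rw [← mul_assoc, habl]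
    rw [this]; ring
  rw [hcomb, Real.exp_zero] at key
  have hzb : Real.exp (b * Real.log z) = z ^ b := by rw [Real.rpow_def_of_pos hz b, mul_comm]
  have hzz : Real.exp (Real.log z) = z := Real.exp_log hz
  rw [hzb, hzz] at key
  simp only [smul_eq_mul] at key
  have hnum : 0 < a * (a * z ^ b - 1 + (1 - a) * z) :=
    mul_pos ha (by linarith)
  exact div_neg_of_pos_of_neg hnum hlz
end

section
/- For every κ > 1 and z ∈ [0,1), the discrete quantum-limited amplifier maps geometric distributions to geometric distributions: A_κ(ω(z)) = ω(z′) with z′ = (z + κ − 1)/κ; that is, for every k ∈ ℕ, ∑_{n=0}^k C(k,n) (κ−1)^{k−n} κ^{−(k+1)} (1−z) z^n = (1 − z′) (z′)^k. -/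
theorem amplifier_geometric (κ z : ℝ) (hκ : 1 < κ) (hz : z ∈ Set.Ico (0 : ℝ) 1) (k : ℕ) :
    ∑ n ∈ Finset.range (k + 1),
        (Nat.choose k n : ℝ) * (κ - 1) ^ (k - n) * κ⁻¹ ^ (k + 1) * ((1 - z) * z ^ n) =
      (1 - (z + κ - 1) / κ) * ((z + κ - 1) / κ) ^ k := by
  have hκ0 : κ ≠ 0 := by linarith
  rw [show (z + κ - 1) / κ = (z + (κ - 1)) / κ by ring, div_pow, add_pow,
    Finset.sum_div, Finset.mul_sum]
  refine Finset.sum_congr rfl fun n hn => ?_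
  rw [inv_pow]
  field_simp
  ring
end
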